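/- arXiv:1011.6616 — 9 statements merged into one kernel-verified Lean document; each statement's English description precedes it below -/
import Mathlib

section
/- Let N be a natural number and let h : ℝ → ℝ be (N+1)-times continuously differentiable, with h and each of its derivatives up to order N+1 bounded on [0, ∞). Then, as t → ∞, ∫₀^∞ e^{−zt} h(z) dz = Σ_{n=0}^{N} h⁽ⁿ⁾(0)/t^{n+1} + O(t^{−(N+2)}), i.e. the difference between the integral and the partial sum is O(t^{−(N+2)}) with respect to the filter t → ∞. -/
open Filter Asymptotics MeasureTheory Set

lemma lap_integrable {t : ℝ} (ht : 0 < t) {g : ℝ → ℝ} (hg : Continuous g)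
    {M : ℝ} (hM : ∀ z : ℝ, 0 ≤ z → |g z| ≤ M) :
    IntegrableOn (fun z => Real.exp (-(z * t)) * g z) (Ioi (0:ℝ)) := by
  have h1 : IntegrableOn (fun z : ℝ => Real.exp (-t * z)) (Ioi (0:ℝ)) :=
    exp_neg_integrableOn_Ioi 0 ht
  refine (h1.const_mul M).mono' ?_ ?_
  · exact ((Real.continuous_exp.comp (by continuity)).mul hg).aestronglyMeasurable
  · filter_upwards [ae_restrict_mem measurableSet_Ioi] with z hz
    have hz' : (0:ℝ) ≤ z := le_of_lt hz
    have h2 : ‖Real.exp (-(z * t)) * g z‖ ≤ Real.exp (-(z * t)) * M := by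
      rw [Real.norm_eq_abs, abs_mul, abs_of_pos (Real.exp_pos _)]
      exact mul_le_mul_of_nonneg_left (hM z hz') (Real.exp_pos _).le
    calc ‖Real.exp (-(z * t)) * g z‖ ≤ Real.exp (-(z * t)) * M := h2
      _ = M * Real.exp (-t * z) := by ring_nf

lemma lap_exp_tendsto {t : ℝ} (ht : 0 < t) :
    Tendsto (fun z : ℝ => Real.exp (-(z * t))) atTop (nhds 0) := by
  have h1 : Tendsto (fun z : ℝ => z * t) atTop atTop := tendsto_id.atTop_mul_const ht
  exact Real.tendsto_exp_neg_atTop_nhds_zero.comp h1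

lemma lap_hasDerivAt {t : ℝ} (ht : 0 < t) (z : ℝ) {g : ℝ → ℝ} (hgd : Differentiable ℝ g) :
    HasDerivAt (fun z => -(Real.exp (-(z * t)) * g z) / t)
      (Real.exp (-(z * t)) * g z - Real.exp (-(z * t)) * deriv g z / t) z := by
  have he : HasDerivAt (fun z : ℝ => Real.exp (-(z * t))) (Real.exp (-(z * t)) * -t) z := by
    simpa using (((hasDerivAt_id z).mul_const t).neg).exp
  have := ((he.mul (hgd z).hasDerivAt).neg).div_const t
  refine this.congr_deriv ?_
  have ht' : t ≠ 0 := ht.ne'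
  field_simp
  ring

lemma lap_ibp {t : ℝ} (ht : 0 < t) {g : ℝ → ℝ} (hgd : Differentiable ℝ g)
    (hg'c : Continuous (deriv g))
    {M M' : ℝ} (hM : ∀ z : ℝ, 0 ≤ z → |g z| ≤ M) (hM' : ∀ z : ℝ, 0 ≤ z → |deriv g z| ≤ M') :
    ∫ z in Ioi (0:ℝ), Real.exp (-(z * t)) * g z
      = g 0 / t + (1 / t) * ∫ z in Ioi (0:ℝ), Real.exp (-(z * t)) * deriv g z := by
  have hA : IntegrableOn (fun z => Real.exp (-(z * t)) * g z) (Ioi (0:ℝ)) :=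
    lap_integrable ht hgd.continuous hM
  have hB : IntegrableOn (fun z => Real.exp (-(z * t)) * deriv g z) (Ioi (0:ℝ)) :=
    lap_integrable ht hg'c hM'
  have hlim : Tendsto (fun z => -(Real.exp (-(z * t)) * g z) / t) atTop (nhds 0) := by
    apply squeeze_zero_norm' (a := fun z => (M / t) * Real.exp (-(z * t)))
    · filter_upwards [eventually_ge_atTop (0:ℝ)] with z hz
      rw [Real.norm_eq_abs, abs_div, abs_neg, abs_mul, abs_of_pos ht,
        abs_of_pos (Real.exp_pos _)]
      rw [div_le_iff₀ ht]
      have := mul_le_mul_of_nonneg_left (hM z hz) (Real.exp_pos (-(z*t))).le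
      calc Real.exp (-(z * t)) * |g z| ≤ Real.exp (-(z * t)) * M := this
        _ = M / t * Real.exp (-(z * t)) * t := by field_simp
    · simpa using (lap_exp_tendsto ht).const_mul (M / t)
  have key := integral_Ioi_of_hasDerivAt_of_tendsto'
    (f := fun z => -(Real.exp (-(z * t)) * g z) / t)
    (f' := fun z => Real.exp (-(z * t)) * g z - Real.exp (-(z * t)) * deriv g z / t)
    (a := 0) (m := 0)
    (fun x _ => lap_hasDerivAt ht x hgd) (hA.sub (hB.div_const t)) hlim
  rw [integral_sub hA (hB.div_const t), integral_div] at key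
  simp only [zero_mul, neg_zero, Real.exp_zero, one_mul, zero_sub, neg_neg, neg_div] at key
  have h1 : (1 / t) * (∫ z in Ioi (0:ℝ), Real.exp (-(z * t)) * deriv g z)
      = (∫ z in Ioi (0:ℝ), Real.exp (-(z * t)) * deriv g z) / t := by ring
  rw [h1]
  linarith [key]

lemma lap_expand (N : ℕ) (h : ℝ → ℝ) (hh : ContDiff ℝ (N + 1 : ℕ) h)
    (hbd : ∀ k ≤ N + 1, ∃ M : ℝ, ∀ z : ℝ, 0 ≤ z → |iteratedDeriv k h z| ≤ M)
    {t : ℝ} (ht : 0 < t) :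
    ∀ k ≤ N + 1,
      ∫ z in Ioi (0:ℝ), Real.exp (-(z * t)) * h z
        = (∑ n ∈ Finset.range k, iteratedDeriv n h 0 / t ^ (n + 1))
          + (1 / t ^ k) * ∫ z in Ioi (0:ℝ), Real.exp (-(z * t)) * iteratedDeriv k h z := by
  intro k
  induction k with
  | zero => intro _; simp [iteratedDeriv_zero]
  | succ k ih =>
    intro hk
    have hk' : k ≤ N + 1 := Nat.le_of_succ_le hk
    have hdiff : Differentiable ℝ (iteratedDeriv k h) :=
      hh.differentiable_iteratedDeriv k (by exact_mod_cast Nat.lt_of_succ_le hk)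
    have hcont : Continuous (iteratedDeriv (k + 1) h) :=
      hh.continuous_iteratedDeriv (k + 1) (by exact_mod_cast hk)
    obtain ⟨M, hM⟩ := hbd k hk'
    obtain ⟨M', hM'⟩ := hbd (k + 1) hk
    rw [iteratedDeriv_succ] at hcont hM'
    rw [ih hk', lap_ibp ht hdiff hcont hM hM', ← iteratedDeriv_succ, Finset.sum_range_succ]
    have ht' : t ≠ 0 := ht.ne'
    field_simp
    ring

/-- Watson-type finite-order Laplace expansion: for `h` of class `C^{N+1}` with `h` and
all derivatives up to order `N+1` bounded on `[0, ∞)`,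
`∫₀^∞ e^{-zt} h(z) dz = ∑_{n=0}^{N} h⁽ⁿ⁾(0)/t^{n+1} + O(t^{-(N+2)})` as `t → ∞`. -/
theorem laplace_expansion (N : ℕ) (h : ℝ → ℝ) (hh : ContDiff ℝ (N + 1 : ℕ) h)
    (hbd : ∀ k ≤ N + 1, ∃ M : ℝ, ∀ z : ℝ, 0 ≤ z → |iteratedDeriv k h z| ≤ M) :
    (fun t : ℝ =>
        (∫ z in Set.Ioi (0 : ℝ), Real.exp (-(z * t)) * h z) -
          ∑ n ∈ Finset.range (N + 1), iteratedDeriv n h 0 / t ^ (n + 1))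
      =O[atTop] fun t : ℝ => 1 / t ^ (N + 2) := by
  obtain ⟨M, hM⟩ := hbd (N + 1) le_rfl
  have hMnn : 0 ≤ M := le_trans (abs_nonneg _) (hM 0 le_rfl)
  have hcont : Continuous (iteratedDeriv (N + 1) h) :=
    hh.continuous_iteratedDeriv (N + 1) le_rfl
  rw [isBigO_iff]
  refine ⟨M, ?_⟩
  filter_upwards [eventually_gt_atTop (0:ℝ)] with t ht
  rw [lap_expand N h hh hbd ht (N + 1) le_rfl]
  have hexp_int : IntegrableOn (fun z : ℝ => Real.exp (-(z * t))) (Ioi (0:ℝ)) := by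
    have := exp_neg_integrableOn_Ioi 0 ht
    rw [show (fun x : ℝ => Real.exp (-t * x)) = (fun z : ℝ => Real.exp (-(z * t)))
      from funext fun x => by ring_nf] at this
    exact this
  have hexp_val : ∫ z in Ioi (0:ℝ), Real.exp (-(z * t)) = 1 / t := by
    have hd : ∀ x ∈ Ici (0:ℝ), HasDerivAt (fun z : ℝ => -Real.exp (-(z * t)) / t)
        (Real.exp (-(x * t))) x := by
      intro x _
      have he : HasDerivAt (fun z : ℝ => Real.exp (-(z * t))) (Real.exp (-(x * t)) * -t) x := by
        simpa using (((hasDerivAt_id x).mul_const t).neg).exp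
      have := (he.neg).div_const t
      refine this.congr_deriv ?_
      field_simp
    have hlim : Tendsto (fun z : ℝ => -Real.exp (-(z * t)) / t) atTop (nhds 0) := by
      have := ((lap_exp_tendsto ht).neg).div_const t
      simpa using this
    have := integral_Ioi_of_hasDerivAt_of_tendsto' hd hexp_int hlim
    rw [this]
    norm_num
    rw [neg_div, neg_neg, one_div]
  have hbound : ‖∫ z in Ioi (0:ℝ), Real.exp (-(z * t)) * iteratedDeriv (N + 1) h z‖
      ≤ M * (1 / t) := by
    have := norm_integral_le_of_norm_le (hexp_int.const_mul M)
      (f := fun z : ℝ => Real.exp (-(z * t)) * iteratedDeriv (N + 1) h z) ?_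
    · rw [integral_const_mul, hexp_val] at this
      exact this
    · filter_upwards [ae_restrict_mem measurableSet_Ioi] with z hz
      rw [Real.norm_eq_abs, abs_mul, abs_of_pos (Real.exp_pos _)]
      calc Real.exp (-(z * t)) * |iteratedDeriv (N + 1) h z|
          ≤ Real.exp (-(z * t)) * M :=
            mul_le_mul_of_nonneg_left (hM z (le_of_lt hz)) (Real.exp_pos _).le
        _ = M * Real.exp (-(z * t)) := by ring
  have hpow : (0:ℝ) < t ^ (N + 1) := pow_pos ht _
  rw [show (∑ n ∈ Finset.range (N + 1), iteratedDeriv n h 0 / t ^ (n + 1))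
        + (1 / t ^ (N + 1)) * (∫ z in Ioi (0:ℝ), Real.exp (-(z * t)) * iteratedDeriv (N + 1) h z)
        - ∑ n ∈ Finset.range (N + 1), iteratedDeriv n h 0 / t ^ (n + 1)
      = (1 / t ^ (N + 1)) * ∫ z in Ioi (0:ℝ), Real.exp (-(z * t)) * iteratedDeriv (N + 1) h z
      by ring]
  rw [norm_mul, Real.norm_eq_abs (1 / t ^ (N + 1)), abs_of_pos (by positivity)]
  calc (1 / t ^ (N + 1)) * ‖∫ z in Ioi (0:ℝ), Real.exp (-(z * t)) * iteratedDeriv (N + 1) h z‖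
      ≤ (1 / t ^ (N + 1)) * (M * (1 / t)) :=
        mul_le_mul_of_nonneg_left hbound (by positivity)
    _ = M * ‖(1:ℝ) / t ^ (N + 2)‖ := by
        rw [Real.norm_eq_abs, abs_of_pos (by positivity), pow_succ]
        ring
end

section
/- Let N be a natural number and let g, h : ℝ → ℝ be (N+1)-times continuously differentiable, with all derivatives of g and h up to order N+1 bounded on ℝ. Then for every fixed x, y ∈ ℝ, as t → ∞, ∫₀^∞ e^{−zt} g(x+z) h(y+z) dz = Σ_{n=0}^{N} t^{−(n+1)} Σ_{k=0}^{n} C(n,k) g⁽ᵏ⁾(x) h⁽ⁿ⁻ᵏ⁾(y) + O(t^{−(N+2)}). -/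
open Filter Asymptotics
open MeasureTheory Set Real
open scoped Nat

private lemma iterDW_eq (f : ℝ → ℝ) {m n : ℕ} (hf : ContDiff ℝ (m : ℕ) f) (hnm : n ≤ m)
    {s : Set ℝ} (hs : UniqueDiffOn ℝ s) {x : ℝ} (hx : x ∈ s) :
    iteratedDerivWithin n f s x = iteratedDeriv n f x := by
  have h1 : iteratedFDerivWithin ℝ n f s x = iteratedFDeriv ℝ n f x := by
    have h0 := ((hf.contDiffOn (s := Set.univ)).ftaylorSeriesWithin uniqueDiffOn_univ).mono
      (Set.subset_univ s)
    have h2 := h0.eq_iteratedFDerivWithin_of_uniqueDiffOn (by exact_mod_cast hnm) hs hx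
    rw [← h2]
    simp [ftaylorSeriesWithin, iteratedFDerivWithin_univ]
  simp [iteratedDerivWithin_eq_iteratedFDerivWithin, iteratedDeriv_eq_iteratedFDeriv, h1]

private lemma taylor_bd (n : ℕ) (f : ℝ → ℝ) (hf : ContDiff ℝ (n + 1 : ℕ) f)
    (M : ℝ) (hM : ∀ u, |iteratedDeriv (n + 1) f u| ≤ M) (c : ℝ) :
    ∀ z : ℝ, 0 ≤ z →
      |f (c + z) - ∑ k ∈ Finset.range (n + 1), iteratedDeriv k f c / k ! * z ^ k|
        ≤ M / (n + 1) ! * z ^ (n + 1) := by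
  intro z hz
  rcases eq_or_lt_of_le hz with h0 | h0
  · subst h0
    have : ∑ k ∈ Finset.range (n + 1), iteratedDeriv k f c / k ! * (0:ℝ) ^ k = f c := by
      rw [Finset.sum_eq_single 0]
      · simp
      · intro k hk hk0; simp [zero_pow hk0]
      · simp
    simp [this]
  · have hx : c < c + z := by linarith
    have hfN : ContDiffOn ℝ n f (Icc c (c + z)) :=
      (hf.of_le (by exact_mod_cast Nat.le_succ n)).contDiffOn
    have hdiff : Differentiable ℝ (iteratedDeriv n f) :=
      hf.differentiable_iteratedDeriv n (by exact_mod_cast Nat.lt_succ_self n)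
    have hf' : DifferentiableOn ℝ (iteratedDerivWithin n f (Icc c (c + z))) (Ioo c (c + z)) := by
      apply (hdiff.differentiableOn).congr
      intro u hu
      exact iterDW_eq f hf (Nat.le_succ n) (uniqueDiffOn_Icc hx) (Ioo_subset_Icc_self hu)
    obtain ⟨u, hu, heq⟩ := by
      have := taylor_mean_remainder_lagrange (f := f) (n := n) hx.ne
        (by rw [Set.uIcc_of_lt hx]; exact hfN)
        (by rw [Set.uIcc_of_lt hx, Set.uIoo_of_lt hx]; exact hf')
      rw [Set.uIcc_of_lt hx, Set.uIoo_of_lt hx] at this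
      exact this
    have htay : taylorWithinEval f n (Icc c (c + z)) c (c + z)
        = ∑ k ∈ Finset.range (n + 1), iteratedDeriv k f c / k ! * z ^ k := by
      rw [taylor_within_apply]
      refine Finset.sum_congr rfl fun k hk => ?_
      have hk' : k ≤ n + 1 := by
        simp only [Finset.mem_range] at hk; omega
      rw [iterDW_eq f hf hk' (uniqueDiffOn_Icc hx) (left_mem_Icc.2 hx.le)]
      simp [smul_eq_mul]
      ring
    rw [htay] at heq
    rw [heq]
    rw [iterDW_eq f hf le_rfl (uniqueDiffOn_Icc hx) (Ioo_subset_Icc_self hu)]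
    have h1 : c + z - c = z := by ring
    rw [h1, abs_div, abs_mul, abs_pow, abs_of_pos h0]
    rw [abs_of_pos (by positivity : (0:ℝ) < ((n+1)! : ℝ))]
    rw [div_mul_eq_mul_div]
    gcongr
    exact hM u

private lemma integ_pow (m : ℕ) {t : ℝ} (ht : 0 < t) :
    ∫ z in Set.Ioi (0:ℝ), Real.exp (-(z * t)) * z ^ m = m ! / t ^ (m + 1) := by
  have h := integral_rpow_mul_exp_neg_mul_Ioi (a := (m : ℝ) + 1) (r := t) (by positivity) ht
  have h1 : ∀ z ∈ Set.Ioi (0:ℝ),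
      z ^ ((m : ℝ) + 1 - 1) * Real.exp (-(t * z)) = Real.exp (-(z * t)) * z ^ m := by
    intro z hz
    rw [add_sub_cancel_right, Real.rpow_natCast, mul_comm z t, mul_comm]
  rw [setIntegral_congr_fun measurableSet_Ioi h1] at h
  rw [h]
  rw [Real.Gamma_nat_eq_factorial]
  rw [show (m : ℝ) + 1 = ((m + 1 : ℕ) : ℝ) by push_cast; ring]
  rw [Real.rpow_natCast]
  rw [one_div, inv_pow, inv_mul_eq_div]

private lemma integ_pow_int (m : ℕ) {t : ℝ} (ht : 0 < t) :
    IntegrableOn (fun z : ℝ => Real.exp (-(z * t)) * z ^ m) (Set.Ioi 0) := by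
  have h0 : IntegrableOn (fun u : ℝ => Real.exp (-u) * u ^ m) (Set.Ioi 0) := by
    have h := Real.GammaIntegral_convergent (s := (m : ℝ) + 1) (by positivity)
    have he : (fun u : ℝ => Real.exp (-u) * u ^ ((m : ℝ) + 1 - 1))
        = fun u : ℝ => Real.exp (-u) * u ^ m := by
      funext u
      rw [add_sub_cancel_right, Real.rpow_natCast]
    rwa [he] at h
  have h1 := (integrableOn_Ioi_comp_mul_left_iff
      (fun u : ℝ => Real.exp (-u) * u ^ m) 0 ht).2 (by rwa [mul_zero])
  have h2 := h1.const_mul ((t : ℝ) ^ m)⁻¹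
  have htm : (t : ℝ) ^ m ≠ 0 := by positivity
  have he : (fun z : ℝ => Real.exp (-(z * t)) * z ^ m)
      = fun z : ℝ => ((t : ℝ) ^ m)⁻¹ * (Real.exp (-(t * z)) * (t * z) ^ m) := by
    funext z
    rw [mul_pow, mul_comm z t]
    field_simp
  rw [he]
  exact h2

private lemma integ_dom (m : ℕ) {t : ℝ} (ht : 0 < t) (pp : ℝ → ℝ) (hpp : Continuous pp)
    (M : ℝ) (hb : ∀ z : ℝ, 0 ≤ z → |pp z| ≤ M * z ^ m) :
    IntegrableOn (fun z : ℝ => Real.exp (-(z * t)) * pp z) (Set.Ioi 0) := by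
  apply Integrable.mono' ((integ_pow_int m ht).const_mul M)
  · exact (((Real.continuous_exp.comp (by continuity)).mul hpp)).aestronglyMeasurable
  · rw [ae_restrict_iff' measurableSet_Ioi]
    filter_upwards with z hz
    have hz' : (0:ℝ) ≤ z := le_of_lt hz
    have := hb z hz'
    rw [Real.norm_eq_abs, abs_mul, abs_of_pos (Real.exp_pos _)]
    calc Real.exp (-(z * t)) * |pp z| ≤ Real.exp (-(z * t)) * (M * z ^ m) := by
          gcongr
      _ = M * (Real.exp (-(z * t)) * z ^ m) := by ring

private lemma tri (N : ℕ) (f : ℕ → ℕ → ℝ) :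
    ∑ n ∈ Finset.range (N + 1), ∑ k ∈ Finset.range (n + 1), f k (n - k)
      = ∑ k ∈ Finset.range (N + 1), ∑ j ∈ Finset.range (N + 1 - k), f k j := by
  induction N with
  | zero => simp
  | succ N ih =>
    rw [Finset.sum_range_succ, ih]
    rw [Finset.sum_range_succ (f := fun k => ∑ j ∈ Finset.range (N + 1 + 1 - k), f k j)]
    have h1 : ∀ k ∈ Finset.range (N + 1),
        ∑ j ∈ Finset.range (N + 1 + 1 - k), f k j
          = ∑ j ∈ Finset.range (N + 1 - k), f k j + f k (N + 1 - k) := by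
      intro k hk
      rw [Finset.mem_range] at hk
      rw [show N + 1 + 1 - k = (N + 1 - k) + 1 by omega, Finset.sum_range_succ]
    rw [Finset.sum_congr rfl h1, Finset.sum_add_distrib]
    rw [Finset.sum_range_succ (f := fun k => f k (N + 1 - k))]
    simp [add_assoc]


/-- Expansion of the upper-right entry of the extended Airy kernel: for `g, h` of class
`C^{N+1}` with all derivatives up to order `N+1` bounded on `ℝ`, and fixed `x, y`,
`∫₀^∞ e^{-zt} g(x+z) h(y+z) dz
  = ∑_{n=0}^{N} t^{-(n+1)} ∑_{k=0}^{n} C(n,k) g⁽ᵏ⁾(x) h⁽ⁿ⁻ᵏ⁾(y) + O(t^{-(N+2)})`. -/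
theorem extended_kernel_upper_right_expansion (N : ℕ) (g h : ℝ → ℝ)
    (hg : ContDiff ℝ (N + 1 : ℕ) g) (hh : ContDiff ℝ (N + 1 : ℕ) h)
    (hgbd : ∀ k ≤ N + 1, ∃ M : ℝ, ∀ u : ℝ, |iteratedDeriv k g u| ≤ M)
    (hhbd : ∀ k ≤ N + 1, ∃ M : ℝ, ∀ u : ℝ, |iteratedDeriv k h u| ≤ M)
    (x y : ℝ) :
    (fun t : ℝ =>
        (∫ z in Set.Ioi (0 : ℝ), Real.exp (-(z * t)) * (g (x + z) * h (y + z))) -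
          ∑ n ∈ Finset.range (N + 1), (1 / t ^ (n + 1)) *
            ∑ k ∈ Finset.range (n + 1),
              (n.choose k : ℝ) * iteratedDeriv k g x * iteratedDeriv (n - k) h y)
      =O[atTop] fun t : ℝ => 1 / t ^ (N + 2) := by
  obtain ⟨Mg0, hMg0⟩ := hgbd 0 (by omega)
  obtain ⟨Mh0, hMh0⟩ := hhbd 0 (by omega)
  simp only [iteratedDeriv_zero] at hMg0 hMh0
  obtain ⟨MgN, hMgN⟩ := hgbd (N + 1) le_rfl
  choose Mh hMh using fun k : ℕ => hhbd (N - k + 1) (by omega)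
  -- notation
  set F : ℝ → ℝ := fun z => g (x + z) * h (y + z) with hFdef
  set Q : ℝ → ℝ := fun z => ∑ k ∈ Finset.range (N + 1),
      iteratedDeriv k g x / k ! * z ^ k *
        ∑ j ∈ Finset.range (N - k + 1), iteratedDeriv j h y / j ! * z ^ j with hQdef
  set C : ℝ := MgN / (N + 1)! * Mh0 +
      ∑ k ∈ Finset.range (N + 1),
        |iteratedDeriv k g x / k !| * (Mh k / (N - k + 1)!) with hCdef
  -- Taylor bounds
  have hgT := taylor_bd N g hg MgN hMgN x
  have hhT : ∀ k, ∀ z : ℝ, 0 ≤ z →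
      |h (y + z) - ∑ j ∈ Finset.range (N - k + 1), iteratedDeriv j h y / j ! * z ^ j|
        ≤ Mh k / (N - k + 1)! * z ^ (N - k + 1) := by
    intro k z hz
    have hle : ((N - k + 1 : ℕ) : WithTop ℕ∞) ≤ ((N + 1 : ℕ) : WithTop ℕ∞) := by
      exact_mod_cast (by omega : N - k + 1 ≤ N + 1)
    exact taylor_bd (N - k) h (hh.of_le hle) (Mh k) (hMh k) y z hz
  -- pointwise bound
  have hFQ : ∀ z : ℝ, 0 ≤ z → |F z - Q z| ≤ C * z ^ (N + 1) := by
    intro z hz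
    have hdec : F z - Q z =
        (g (x + z) - ∑ k ∈ Finset.range (N + 1), iteratedDeriv k g x / k ! * z ^ k) * h (y + z)
        + ∑ k ∈ Finset.range (N + 1), iteratedDeriv k g x / k ! * z ^ k *
            (h (y + z) - ∑ j ∈ Finset.range (N - k + 1), iteratedDeriv j h y / j ! * z ^ j) := by
      simp only [hFdef, hQdef, mul_sub, Finset.sum_sub_distrib, sub_mul, ← Finset.sum_mul]
      ring
    rw [hdec]
    refine (abs_add_le _ _).trans ?_
    have h1 : |(g (x + z) - ∑ k ∈ Finset.range (N + 1),
          iteratedDeriv k g x / k ! * z ^ k) * h (y + z)|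
        ≤ MgN / (N + 1)! * Mh0 * z ^ (N + 1) := by
      rw [abs_mul]
      calc _ ≤ (MgN / (N + 1)! * z ^ (N + 1)) * Mh0 := by
            apply mul_le_mul (hgT z hz) (hMh0 _) (abs_nonneg _)
            have := (abs_nonneg (g (x + z) - ∑ k ∈ Finset.range (N + 1),
              iteratedDeriv k g x / k ! * z ^ k)).trans (hgT z hz)
            positivity
        _ = MgN / (N + 1)! * Mh0 * z ^ (N + 1) := by ring
    have h2 : |∑ k ∈ Finset.range (N + 1), iteratedDeriv k g x / k ! * z ^ k *
          (h (y + z) - ∑ j ∈ Finset.range (N - k + 1), iteratedDeriv j h y / j ! * z ^ j)|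
        ≤ (∑ k ∈ Finset.range (N + 1),
            |iteratedDeriv k g x / k !| * (Mh k / (N - k + 1)!)) * z ^ (N + 1) := by
      refine (Finset.abs_sum_le_sum_abs _ _).trans ?_
      rw [Finset.sum_mul]
      refine Finset.sum_le_sum fun k hk => ?_
      rw [Finset.mem_range] at hk
      rw [abs_mul, abs_mul, abs_pow, abs_of_nonneg hz]
      have hmh0 : (0:ℝ) ≤ Mh k / (N - k + 1)! * z ^ (N - k + 1) :=
        le_trans (abs_nonneg _) (hhT k z hz)
      calc |iteratedDeriv k g x / k !| * z ^ k *
            |h (y + z) - ∑ j ∈ Finset.range (N - k + 1), iteratedDeriv j h y / j ! * z ^ j|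
          ≤ |iteratedDeriv k g x / k !| * z ^ k * (Mh k / (N - k + 1)! * z ^ (N - k + 1)) := by
            gcongr
            exact hhT k z hz
        _ = |iteratedDeriv k g x / k !| * (Mh k / (N - k + 1)!) * (z ^ k * z ^ (N - k + 1)) := by
            ring
        _ = |iteratedDeriv k g x / k !| * (Mh k / (N - k + 1)!) * z ^ (N + 1) := by
            rw [← pow_add, show k + (N - k + 1) = N + 1 from by omega]
    calc _ ≤ MgN / (N + 1)! * Mh0 * z ^ (N + 1) +
          (∑ k ∈ Finset.range (N + 1),
            |iteratedDeriv k g x / k !| * (Mh k / (N - k + 1)!)) * z ^ (N + 1) :=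
        add_le_add h1 h2
      _ = C * z ^ (N + 1) := by rw [hCdef]; ring
  -- expansion of exp * Q as double sum
  have hePQ : ∀ t : ℝ, (fun z : ℝ => Real.exp (-(z * t)) * Q z)
      = fun z : ℝ => ∑ k ∈ Finset.range (N + 1), ∑ j ∈ Finset.range (N - k + 1),
          iteratedDeriv k g x / k ! * (iteratedDeriv j h y / j !) *
            (Real.exp (-(z * t)) * z ^ (k + j)) := by
    intro t
    funext z
    simp only [hQdef, Finset.mul_sum, Finset.sum_mul]
    refine Finset.sum_congr rfl fun k hk => ?_
    refine Finset.sum_congr rfl fun j hj => ?_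
    rw [pow_add]
    ring
  have hQint : ∀ t : ℝ, 0 < t →
      IntegrableOn (fun z : ℝ => Real.exp (-(z * t)) * Q z) (Set.Ioi 0) := by
    intro t ht
    rw [hePQ t]
    apply integrable_finset_sum
    intro k hk
    apply integrable_finset_sum
    intro j hj
    exact (integ_pow_int (k + j) ht).const_mul _
  have hQval : ∀ t : ℝ, 0 < t →
      ∫ z in Set.Ioi (0:ℝ), Real.exp (-(z * t)) * Q z
        = ∑ n ∈ Finset.range (N + 1), (1 / t ^ (n + 1)) *
            ∑ k ∈ Finset.range (n + 1),
              (n.choose k : ℝ) * iteratedDeriv k g x * iteratedDeriv (n - k) h y := by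
    intro t ht
    rw [hePQ t]
    rw [integral_finset_sum _ (fun k hk => integrable_finset_sum _
      (fun j hj => (integ_pow_int (k + j) ht).const_mul _))]
    have hL : ∀ k ∈ Finset.range (N + 1),
        ∫ z in Set.Ioi (0:ℝ), ∑ j ∈ Finset.range (N - k + 1),
            iteratedDeriv k g x / k ! * (iteratedDeriv j h y / j !) *
              (Real.exp (-(z * t)) * z ^ (k + j))
          = ∑ j ∈ Finset.range (N - k + 1),
              1 / t ^ (k + j + 1) * ((k + j).choose k : ℝ) *
                iteratedDeriv k g x * iteratedDeriv j h y := by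
      intro k _
      rw [integral_finset_sum _ (fun j hj => (integ_pow_int (k + j) ht).const_mul _)]
      refine Finset.sum_congr rfl fun j hj => ?_
      rw [MeasureTheory.integral_const_mul, integ_pow (k + j) ht]
      rw [Nat.cast_choose ℝ (Nat.le_add_right k j), Nat.add_sub_cancel_left]
      have hk0 : ((k ! : ℝ)) ≠ 0 := by positivity
      have hj0 : ((j ! : ℝ)) ≠ 0 := by positivity
      have ht0 : t ^ (k + j + 1) ≠ 0 := by positivity
      field_simp
    rw [Finset.sum_congr rfl hL]
    -- now identify with the binomial sum via the triangle lemma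
    have hR : ∑ n ∈ Finset.range (N + 1), (1 / t ^ (n + 1)) *
          ∑ k ∈ Finset.range (n + 1),
            (n.choose k : ℝ) * iteratedDeriv k g x * iteratedDeriv (n - k) h y
        = ∑ n ∈ Finset.range (N + 1), ∑ k ∈ Finset.range (n + 1),
            (fun k j => 1 / t ^ (k + j + 1) * ((k + j).choose k : ℝ) *
              iteratedDeriv k g x * iteratedDeriv j h y) k (n - k) := by
      refine Finset.sum_congr rfl fun n hn => ?_
      rw [Finset.mul_sum]
      refine Finset.sum_congr rfl fun k hk => ?_
      rw [Finset.mem_range] at hk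
      simp only
      rw [Nat.add_sub_cancel' (by omega : k ≤ n)]
      ring
    rw [hR, tri N (fun k j => 1 / t ^ (k + j + 1) * ((k + j).choose k : ℝ) *
      iteratedDeriv k g x * iteratedDeriv j h y)]
    refine Finset.sum_congr rfl fun k hk => ?_
    rw [Finset.mem_range] at hk
    rw [show N + 1 - k = N - k + 1 from by omega]
  -- main estimate
  rw [isBigO_iff]
  refine ⟨C * (N + 1)!, ?_⟩
  filter_upwards [eventually_gt_atTop 0] with t ht
  have hFcont : Continuous F := by
    apply Continuous.mul
    · exact hg.continuous.comp (continuous_const.add continuous_id)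
    · exact hh.continuous.comp (continuous_const.add continuous_id)
  have hFint : IntegrableOn (fun z : ℝ => Real.exp (-(z * t)) * F z) (Set.Ioi 0) := by
    apply integ_dom 0 ht F hFcont (Mg0 * Mh0)
    intro z _
    rw [pow_zero, mul_one, hFdef]
    simp only
    rw [abs_mul]
    have hg0 : (0:ℝ) ≤ Mg0 := (abs_nonneg _).trans (hMg0 0)
    exact mul_le_mul (hMg0 _) (hMh0 _) (abs_nonneg _) hg0
  have key : (∫ z in Set.Ioi (0:ℝ), Real.exp (-(z * t)) * (g (x + z) * h (y + z))) -
        ∑ n ∈ Finset.range (N + 1), (1 / t ^ (n + 1)) *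
          ∑ k ∈ Finset.range (n + 1),
            (n.choose k : ℝ) * iteratedDeriv k g x * iteratedDeriv (n - k) h y
      = ∫ z in Set.Ioi (0:ℝ), Real.exp (-(z * t)) * (F z - Q z) := by
    rw [← hQval t ht, ← integral_sub hFint (hQint t ht)]
    congr 1
    funext z
    rw [hFdef]
    ring
  have hb2 : ∀ᵐ z ∂(volume.restrict (Set.Ioi (0:ℝ))),
      ‖Real.exp (-(z * t)) * (F z - Q z)‖ ≤ C * (Real.exp (-(z * t)) * z ^ (N + 1)) := by
    rw [ae_restrict_iff' measurableSet_Ioi]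
    filter_upwards with z hz
    rw [Real.norm_eq_abs, abs_mul, abs_of_pos (Real.exp_pos _)]
    calc Real.exp (-(z * t)) * |F z - Q z|
        ≤ Real.exp (-(z * t)) * (C * z ^ (N + 1)) := by
          gcongr
          exact hFQ z hz.le
      _ = C * (Real.exp (-(z * t)) * z ^ (N + 1)) := by ring
  have h3 := norm_integral_le_of_norm_le ((integ_pow_int (N + 1) ht).const_mul C) hb2
  rw [MeasureTheory.integral_const_mul, integ_pow (N + 1) ht] at h3
  rw [key]
  refine h3.trans (le_of_eq ?_)
  rw [Real.norm_eq_abs, abs_of_pos (by positivity : (0:ℝ) < 1 / t ^ (N + 2))]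
  rw [show N + 1 + 1 = N + 2 from rfl]
  ring
end

section
/- Let N be a natural number and let g, h : ℝ → ℝ be (N+1)-times continuously differentiable, and suppose there exist constants C > 0 and m ∈ ℕ such that |g⁽ᵏ⁾(u)| ≤ C(1+|u|)^m and |h⁽ᵏ⁾(u)| ≤ C(1+|u|)^m for all u ∈ ℝ and all k ≤ N+1. Then for every fixed x, y ∈ ℝ, as t → ∞, ∫_{−∞}^0 e^{zt} g(x+z) h(y+z) dz = Σ_{n=0}^{N} (−1)^n t^{−(n+1)} Σ_{k=0}^{n} C(n,k) g⁽ᵏ⁾(x) h⁽ⁿ⁻ᵏ⁾(y) + O(t^{−(N+2)}). -/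
open Filter Asymptotics MeasureTheory Set Real

-- pointwise additivity of iterated derivatives
private lemma myIteratedDeriv_add {n : ℕ} {f g : ℝ → ℝ} (hf : ContDiff ℝ (n:ℕ) f)
    (hg : ContDiff ℝ (n:ℕ) g) (x : ℝ) :
    iteratedDeriv n (fun z => f z + g z) x = iteratedDeriv n f x + iteratedDeriv n g x := by
  simp only [← iteratedDerivWithin_univ]
  exact iteratedDerivWithin_add (Set.mem_univ x) uniqueDiffOn_univ
    hf.contDiffAt.contDiffWithinAt hg.contDiffAt.contDiffWithinAt

-- Leibniz rule for iterated derivatives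
private lemma myLeibniz : ∀ (n : ℕ) (f g : ℝ → ℝ), ContDiff ℝ (n:ℕ) f → ContDiff ℝ (n:ℕ) g →
    ∀ x : ℝ, iteratedDeriv n (fun z => f z * g z) x
      = ∑ k ∈ Finset.range (n+1),
          (n.choose k : ℝ) * iteratedDeriv k f x * iteratedDeriv (n-k) g x := by
  intro n
  induction n with
  | zero => intro f g _ _ x; simp
  | succ n IH =>
    intro f g hf hg x
    have hf1 : Differentiable ℝ f := hf.differentiable (by simp)
    have hg1 : Differentiable ℝ g := hg.differentiable (by simp)
    have hfd : ContDiff ℝ (n:ℕ) (deriv f) := by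
      have := (contDiff_succ_iff_deriv (n := (n:ℕ)) (f := f)).1 (by exact_mod_cast hf)
      exact this.2.2
    have hgd : ContDiff ℝ (n:ℕ) (deriv g) := by
      have := (contDiff_succ_iff_deriv (n := (n:ℕ)) (f := g)).1 (by exact_mod_cast hg)
      exact this.2.2
    have hfn : ContDiff ℝ (n:ℕ) f := hf.of_le (by exact_mod_cast Nat.le_succ n)
    have hgn : ContDiff ℝ (n:ℕ) g := hg.of_le (by exact_mod_cast Nat.le_succ n)
    have hderiv : deriv (fun z => f z * g z) = fun z => deriv f z * g z + f z * deriv g z :=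
      funext fun z => deriv_mul (hf1 z) (hg1 z)
    rw [iteratedDeriv_succ', hderiv,
      myIteratedDeriv_add (hfd.mul hgn) (hfn.mul hgd) x, IH _ _ hfd hgn x, IH _ _ hfn hgd x]
    -- now pure algebra with binomial coefficients
    have hds : ∀ k, iteratedDeriv k (deriv f) x = iteratedDeriv (k+1) f x := by
      intro k; rw [← iteratedDeriv_succ']
    have hds' : ∀ k, iteratedDeriv k (deriv g) x = iteratedDeriv (k+1) g x := by
      intro k; rw [← iteratedDeriv_succ']
    set a : ℕ → ℝ := fun k => iteratedDeriv k f x * iteratedDeriv (n+1-k) g x with ha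
    have e1 : ∑ k ∈ Finset.range (n+1),
        (n.choose k : ℝ) * iteratedDeriv k (deriv f) x * iteratedDeriv (n-k) g x
        = ∑ k ∈ Finset.range (n+1), (n.choose k : ℝ) * a (k+1) := by
      refine Finset.sum_congr rfl fun k hk => ?_
      rw [hds k, ha]
      simp only [Nat.succ_sub_succ_eq_sub]
      ring
    have e2 : ∑ k ∈ Finset.range (n+1),
        (n.choose k : ℝ) * iteratedDeriv k f x * iteratedDeriv (n-k) (deriv g) x
        = ∑ k ∈ Finset.range (n+1), (n.choose k : ℝ) * a k := by
      refine Finset.sum_congr rfl fun k hk => ?_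
      have hk' : k ≤ n := Nat.lt_succ_iff.1 (Finset.mem_range.1 hk)
      have hnk : n - k + 1 = n + 1 - k := by omega
      rw [hds' (n-k), hnk, ha]
      ring
    rw [e1, e2]
    have e3 : ∑ k ∈ Finset.range (n+2), ((n+1).choose k : ℝ) * a k
        = ∑ k ∈ Finset.range (n+1), (n.choose k : ℝ) * a (k+1)
          + ∑ k ∈ Finset.range (n+1), (n.choose k : ℝ) * a k := by
      rw [show n + 2 = (n+1)+1 from rfl,
        Finset.sum_range_succ' (fun k => ((n+1).choose k : ℝ) * a k) (n+1)]
      have : ∀ k, (((n+1).choose (k+1) : ℕ) : ℝ) = (n.choose k : ℝ) + (n.choose (k+1) : ℝ) := by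
        intro k; rw [Nat.choose_succ_succ]; push_cast; ring
      simp only [this]
      have e4 : ∑ k ∈ Finset.range (n+1), ((n.choose k : ℝ) + (n.choose (k+1) : ℝ)) * a (k+1)
          = ∑ k ∈ Finset.range (n+1), (n.choose k : ℝ) * a (k+1)
            + ∑ k ∈ Finset.range (n+1), (n.choose (k+1) : ℝ) * a (k+1) := by
        rw [← Finset.sum_add_distrib]
        exact Finset.sum_congr rfl fun k _ => by ring
      rw [e4]
      have e5 : ∑ k ∈ Finset.range (n+1), (n.choose (k+1) : ℝ) * a (k+1)
          + ((n+1).choose 0 : ℝ) * a 0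
          = ∑ k ∈ Finset.range (n+1), (n.choose k : ℝ) * a k := by
        have := Finset.sum_range_succ' (fun k => (n.choose k : ℝ) * a k) (n+1)
        rw [Finset.sum_range_succ (fun k => (n.choose k : ℝ) * a k) (n+1)] at this
        simp only [Nat.choose_succ_self, Nat.cast_zero, zero_mul, add_zero,
          Nat.choose_zero_right, Nat.cast_one, one_mul] at this ⊢
        linarith [this]
      linarith [e5]
    have e6 : ∑ k ∈ Finset.range (n+1+1),
        ((n+1).choose k : ℝ) * iteratedDeriv k f x * iteratedDeriv (n+1-k) g x
        = ∑ k ∈ Finset.range (n+2), ((n+1).choose k : ℝ) * a k := by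
      refine Finset.sum_congr (by norm_num) fun k _ => by rw [ha]; ring
    rw [e6]
    exact e3.symm


private lemma myIntegrableOn_exp_mul_Iic {c : ℝ} (hc : 0 < c) :
    IntegrableOn (fun z : ℝ => Real.exp (c * z)) (Iic (0:ℝ)) := by
  have A : (volume : Measure ℝ).restrict (Iic (0:ℝ))
      = Measure.map (fun x : ℝ => -x) (volume.restrict (Ici (0:ℝ))) := by
    rw [← Measure.map_neg_eq_self (volume : Measure ℝ),
      Measure.restrict_map measurable_neg measurableSet_Iic]
    congr 1
    ext z
    simp
  have hemb : MeasurableEmbedding (fun x : ℝ => -x) :=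
    (Homeomorph.neg ℝ).isClosedEmbedding.measurableEmbedding
  rw [IntegrableOn, A, hemb.integrable_map_iff]
  have : IntegrableOn (fun x : ℝ => Real.exp (-c * x)) (Ici (0:ℝ)) := by
    rw [integrableOn_Ici_iff_integrableOn_Ioi]
    exact exp_neg_integrableOn_Ioi 0 hc
  apply this.congr_fun ?_ measurableSet_Ici
  intro x _
  simp [Function.comp, mul_comm]


private lemma myIntegral_exp_mul_Iic {c : ℝ} (hc : 0 < c) :
    ∫ z in Iic (0:ℝ), Real.exp (c * z) = 1 / c := by
  have h1 := integral_comp_neg_Iic (0:ℝ) (fun u => Real.exp (-(c*u)))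
  simp only [mul_neg, neg_neg, neg_zero] at h1
  have h2 := Real.integral_rpow_mul_exp_neg_mul_Ioi (by norm_num : (0:ℝ) < 1) hc
  simp only [sub_self, Real.rpow_zero, one_mul, Real.rpow_one, Real.Gamma_one, mul_one] at h2
  rw [h1, h2]

private lemma polyBound (M : ℕ) {s : ℝ} (hs : 0 ≤ s) :
    (1 + s) ^ M ≤ (2*(M:ℝ)+2) ^ M * Real.exp (s / 2) := by
  have hpos : (0:ℝ) < 2*(M:ℝ)+2 := by positivity
  have hu0 : 0 ≤ s / (2*(M:ℝ)+2) := by positivity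
  have h1 : (1 + s) ≤ (2*(M:ℝ)+2) * (1 + s / (2*(M:ℝ)+2)) := by
    rw [mul_add, mul_one, mul_div_cancel₀ _ hpos.ne']
    linarith
  have h2 : (1 + s / (2*(M:ℝ)+2)) ≤ Real.exp (s / (2*(M:ℝ)+2)) := by
    have := Real.add_one_le_exp (s / (2*(M:ℝ)+2)); linarith
  have hs' : (2*(M:ℝ)+2) * (s / (2*(M:ℝ)+2)) = s := mul_div_cancel₀ _ hpos.ne'
  calc (1+s)^M ≤ ((2*(M:ℝ)+2) * (1 + s/(2*(M:ℝ)+2)))^M := by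
        apply pow_le_pow_left₀ (by linarith) h1
    _ = (2*(M:ℝ)+2)^M * (1 + s/(2*(M:ℝ)+2))^M := mul_pow _ _ _
    _ ≤ (2*(M:ℝ)+2)^M * (Real.exp (s/(2*(M:ℝ)+2)))^M := by
        apply mul_le_mul_of_nonneg_left _ (by positivity)
        exact pow_le_pow_left₀ (by positivity) h2 M
    _ = (2*(M:ℝ)+2)^M * Real.exp ((M:ℝ) * (s/(2*(M:ℝ)+2))) := by
        rw [← Real.exp_nat_mul]
    _ ≤ (2*(M:ℝ)+2)^M * Real.exp (s/2) := by
        apply mul_le_mul_of_nonneg_left _ (by positivity)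
        apply Real.exp_le_exp.2
        nlinarith [hu0, hs']

private lemma expPoly (M : ℕ) {t z : ℝ} (ht : 1 ≤ t) (hz : z ≤ 0) :
    Real.exp (z*t) * (1 + |z|) ^ M ≤ (2*(M:ℝ)+2)^M * Real.exp (t/2 * z) := by
  have h1 := polyBound M (neg_nonneg.2 hz)
  rw [abs_of_nonpos hz]
  calc Real.exp (z*t) * (1 + -z)^M
      ≤ Real.exp (z*t) * ((2*(M:ℝ)+2)^M * Real.exp (-z/2)) := by
        apply mul_le_mul_of_nonneg_left _ (Real.exp_nonneg _)
        simpa [neg_div] using h1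
    _ = (2*(M:ℝ)+2)^M * Real.exp (z*t + -z/2) := by rw [Real.exp_add]; ring
    _ ≤ (2*(M:ℝ)+2)^M * Real.exp (t/2*z) := by
        apply mul_le_mul_of_nonneg_left _ (by positivity)
        apply Real.exp_le_exp.2
        nlinarith [mul_nonneg (neg_nonneg.2 hz) (by linarith : (0:ℝ) ≤ t-1)]

private lemma myPointwise {ψ : ℝ → ℝ} {D : ℝ} (hD : 0 ≤ D) (M : ℕ)
    (hb : ∀ z : ℝ, |ψ z| ≤ D * (1+|z|)^M) {t z : ℝ} (ht : 1 ≤ t) (hz : z ≤ 0) :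
    |Real.exp (z*t) * ψ z| ≤ D * (2*(M:ℝ)+2)^M * Real.exp (t/2 * z) := by
  have h3 := expPoly M ht hz
  calc |Real.exp (z*t) * ψ z| = Real.exp (z*t) * |ψ z| := by
        rw [abs_mul, abs_of_nonneg (Real.exp_nonneg _)]
    _ ≤ Real.exp (z*t) * (D * (1+|z|)^M) :=
        mul_le_mul_of_nonneg_left (hb z) (Real.exp_nonneg _)
    _ = D * (Real.exp (z*t) * (1+|z|)^M) := by ring
    _ ≤ D * ((2*(M:ℝ)+2)^M * Real.exp (t/2 * z)) := mul_le_mul_of_nonneg_left h3 hD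
    _ = D * (2*(M:ℝ)+2)^M * Real.exp (t/2 * z) := by ring

private lemma myIntegrable {ψ : ℝ → ℝ} (hψ : Continuous ψ) {D : ℝ} (M : ℕ)
    (hb : ∀ z : ℝ, |ψ z| ≤ D * (1+|z|)^M) {t : ℝ} (ht : 1 ≤ t) :
    IntegrableOn (fun z => Real.exp (z*t) * ψ z) (Iic (0:ℝ)) := by
  have hD : 0 ≤ D := by simpa using (abs_nonneg (ψ 0)).trans (hb 0)
  have ht2 : 0 < t/2 := by linarith
  refine Integrable.mono (g := fun z => (D * (2*(M:ℝ)+2)^M) * Real.exp (t/2 * z))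
    ((myIntegrableOn_exp_mul_Iic ht2).const_mul _)
    (((Real.continuous_exp.comp (continuous_id.mul continuous_const)).mul hψ).aestronglyMeasurable)
    ?_
  filter_upwards [ae_restrict_mem measurableSet_Iic] with z hz
  rw [Real.norm_eq_abs, Real.norm_eq_abs,
    abs_of_nonneg (by positivity : (0:ℝ) ≤ D * (2*(M:ℝ)+2)^M * Real.exp (t/2 * z))]
  exact myPointwise hD M hb ht hz

private lemma myBound {ψ : ℝ → ℝ} (hψ : Continuous ψ) {D : ℝ} (M : ℕ)
    (hb : ∀ z : ℝ, |ψ z| ≤ D * (1+|z|)^M) {t : ℝ} (ht : 1 ≤ t) :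
    |∫ z in Iio (0:ℝ), Real.exp (z*t) * ψ z| ≤ (D * (2*(M:ℝ)+2)^M * 2) / t := by
  have hD : 0 ≤ D := by simpa using (abs_nonneg (ψ 0)).trans (hb 0)
  have ht2 : 0 < t/2 := by linarith
  have ht0 : 0 < t := by linarith
  have hint := myIntegrable hψ M hb ht
  rw [← integral_Iic_eq_integral_Iio]
  have h1 : |∫ z in Iic (0:ℝ), Real.exp (z*t) * ψ z|
      ≤ ∫ z in Iic (0:ℝ), (D*(2*(M:ℝ)+2)^M) * Real.exp (t/2 * z) := by
    rw [← Real.norm_eq_abs]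
    refine (norm_integral_le_integral_norm _).trans ?_
    refine integral_mono_ae hint.norm ((myIntegrableOn_exp_mul_Iic ht2).const_mul _) ?_
    filter_upwards [ae_restrict_mem measurableSet_Iic] with z hz
    rw [Real.norm_eq_abs]
    exact (myPointwise hD M hb ht hz).trans_eq (by ring)
  refine h1.trans ?_
  rw [integral_const_mul, myIntegral_exp_mul_Iic ht2]
  apply le_of_eq
  field_simp


private lemma myIBP {φ : ℝ → ℝ} (hφ : Differentiable ℝ φ) (hφ' : Continuous (deriv φ))
    {D : ℝ} (M : ℕ) (h0 : ∀ z : ℝ, |φ z| ≤ D * (1+|z|)^M)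
    (h1 : ∀ z : ℝ, |deriv φ z| ≤ D * (1+|z|)^M) {t : ℝ} (ht : 1 ≤ t) :
    ∫ z in Iio (0:ℝ), Real.exp (z*t) * φ z
      = φ 0 / t - (1/t) * ∫ z in Iio (0:ℝ), Real.exp (z*t) * deriv φ z := by
  have hD : 0 ≤ D := by simpa using (abs_nonneg (φ 0)).trans (h0 0)
  have ht0 : 0 < t := by linarith
  have ht2 : 0 < t/2 := by linarith
  have IA : IntegrableOn (fun z => Real.exp (z*t) * φ z) (Iic (0:ℝ)) :=
    myIntegrable hφ.continuous M h0 ht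
  have IB : IntegrableOn (fun z => Real.exp (z*t) * deriv φ z) (Iic (0:ℝ)) :=
    myIntegrable hφ' M h1 ht
  have hderiv : ∀ z : ℝ, z ∈ Iic (0:ℝ) → HasDerivAt (fun z => Real.exp (z*t) * φ z / t)
      (Real.exp (z*t) * φ z + Real.exp (z*t) * deriv φ z / t) z := by
    intro z _
    have he : HasDerivAt (fun z : ℝ => Real.exp (z*t)) (Real.exp (z*t) * t) z := by
      have := (Real.hasDerivAt_exp (z*t)).comp z ((hasDerivAt_id z).mul_const t)
      simpa [mul_comm, Function.comp_def] using this
    have hp : HasDerivAt φ (deriv φ z) z := (hφ z).hasDerivAt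
    have := (he.mul hp).div_const t
    refine this.congr_deriv ?_
    field_simp
  have hlim : Tendsto (fun z : ℝ => Real.exp (z*t) * φ z / t) atBot (nhds 0) := by
    apply squeeze_zero_norm' (a := fun z => (D * (2*(M:ℝ)+2)^M) * Real.exp (t/2 * z) / t)
    · filter_upwards [eventually_le_atBot (0:ℝ)] with z hz
      rw [Real.norm_eq_abs, abs_div, abs_of_pos ht0]
      have := myPointwise hD M h0 ht hz
      gcongr
    · have h4 : Tendsto (fun z : ℝ => t/2 * z) atBot atBot :=
        Tendsto.const_mul_atBot ht2 tendsto_id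
      have h5 : Tendsto (fun z : ℝ => Real.exp (t/2*z)) atBot (nhds 0) :=
        Real.tendsto_exp_atBot.comp h4
      simpa using (h5.const_mul (D * (2*(M:ℝ)+2)^M)).div_const t
  have f'int : IntegrableOn
      (fun z => Real.exp (z*t) * φ z + Real.exp (z*t) * deriv φ z / t) (Iic (0:ℝ)) :=
    IA.add (IB.div_const t)
  have key := integral_Iic_of_hasDerivAt_of_tendsto' hderiv f'int hlim
  rw [integral_add IA (IB.div_const t), integral_div] at key
  simp only [zero_mul, Real.exp_zero, one_mul, sub_zero] at key
  rw [← integral_Iic_eq_integral_Iio, ← integral_Iic_eq_integral_Iio]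
  have : (1/t) * ∫ z in Iic (0:ℝ), Real.exp (z*t) * deriv φ z
      = (∫ z in Iic (0:ℝ), Real.exp (z*t) * deriv φ z) / t := by ring
  rw [this]
  linarith [key]

private lemma myExpansion (Nn : ℕ) (F : ℝ → ℝ) (hF : ContDiff ℝ ((Nn+1:ℕ)) F)
    {D : ℝ} (M : ℕ) (hb : ∀ k ≤ Nn+1, ∀ z : ℝ, |iteratedDeriv k F z| ≤ D * (1+|z|)^M)
    {t : ℝ} (ht : 1 ≤ t) :
    ∀ n ≤ Nn+1, ∫ z in Iio (0:ℝ), Real.exp (z*t) * F z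
      = (∑ j ∈ Finset.range n, (-1:ℝ)^j / t^(j+1) * iteratedDeriv j F 0)
        + ((-1:ℝ)^n / t^n) * ∫ z in Iio (0:ℝ), Real.exp (z*t) * iteratedDeriv n F z := by
  have ht0 : 0 < t := by linarith
  intro n
  induction n with
  | zero => intro _; simp
  | succ n IH =>
    intro hn
    have hn' : n ≤ Nn+1 := by omega
    have hlt : ((n:ℕ) : WithTop ℕ∞) < (((Nn+1 : ℕ)) : WithTop ℕ∞) := by
      exact_mod_cast (by omega : n < Nn+1)
    have hdiff : Differentiable ℝ (iteratedDeriv n F) := hF.differentiable_iteratedDeriv n hlt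
    have hcont : Continuous (deriv (iteratedDeriv n F)) := by
      rw [← iteratedDeriv_succ]
      exact hF.continuous_iteratedDeriv (n+1) (by exact_mod_cast hn)
    have hbd' : ∀ z : ℝ, |deriv (iteratedDeriv n F) z| ≤ D * (1+|z|)^M := by
      intro z; rw [← iteratedDeriv_succ]; exact hb (n+1) hn z
    have step := myIBP hdiff hcont M (hb n hn') hbd' ht
    rw [IH hn', step, Finset.sum_range_succ, ← iteratedDeriv_succ]
    have htne : t ≠ 0 := ht0.ne'
    field_simp
    ring

/-- Expansion of the lower-left entry of the extended Airy kernel: for `g, h` of class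
`C^{N+1}` with all derivatives up to order `N+1` polynomially bounded on `ℝ`, and fixed
`x, y`, `∫_{-∞}^0 e^{zt} g(x+z) h(y+z) dz
  = ∑_{n=0}^{N} (-1)^n t^{-(n+1)} ∑_{k=0}^{n} C(n,k) g⁽ᵏ⁾(x) h⁽ⁿ⁻ᵏ⁾(y) + O(t^{-(N+2)})`. -/
theorem extended_kernel_lower_left_expansion (N : ℕ) (g h : ℝ → ℝ)
    (hg : ContDiff ℝ (N + 1 : ℕ) g) (hh : ContDiff ℝ (N + 1 : ℕ) h)
    (C : ℝ) (hC : 0 < C) (m : ℕ)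
    (hgbd : ∀ u : ℝ, ∀ k ≤ N + 1, |iteratedDeriv k g u| ≤ C * (1 + |u|) ^ m)
    (hhbd : ∀ u : ℝ, ∀ k ≤ N + 1, |iteratedDeriv k h u| ≤ C * (1 + |u|) ^ m)
    (x y : ℝ) :
    (fun t : ℝ =>
        (∫ z in Set.Iio (0 : ℝ), Real.exp (z * t) * (g (x + z) * h (y + z))) -
          ∑ n ∈ Finset.range (N + 1), ((-1 : ℝ) ^ n / t ^ (n + 1)) *
            ∑ k ∈ Finset.range (n + 1),
              (n.choose k : ℝ) * iteratedDeriv k g x * iteratedDeriv (n - k) h y)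
      =O[atTop] fun t : ℝ => 1 / t ^ (N + 2) := by
  set F : ℝ → ℝ := fun z => g (x + z) * h (y + z) with hFdef
  have hgx : ContDiff ℝ ((N+1:ℕ)) (fun z : ℝ => g (x + z)) :=
    hg.comp ((contDiff_const (c := x)).add contDiff_id)
  have hhy : ContDiff ℝ ((N+1:ℕ)) (fun z : ℝ => h (y + z)) :=
    hh.comp ((contDiff_const (c := y)).add contDiff_id)
  have hF : ContDiff ℝ ((N+1:ℕ)) F := hgx.mul hhy
  -- formula for iterated derivatives of F
  have hform : ∀ n ≤ N+1, ∀ z : ℝ, iteratedDeriv n F z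
      = ∑ k ∈ Finset.range (n+1),
          (n.choose k : ℝ) * iteratedDeriv k g (x+z) * iteratedDeriv (n-k) h (y+z) := by
    intro n hn z
    have hcast : ((n:ℕ) : WithTop ℕ∞) ≤ ((N+1:ℕ) : WithTop ℕ∞) := by exact_mod_cast hn
    have := myLeibniz n (fun z : ℝ => g (x + z)) (fun z : ℝ => h (y + z))
      (hgx.of_le hcast) (hhy.of_le hcast) z
    simpa only [iteratedDeriv_comp_const_add] using this
  -- polynomial bound on iterated derivatives of F
  set D : ℝ := 2^(N+1) * (C^2 * ((1+|x|)*(1+|y|))^m) with hDdef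
  have haux : ∀ a z : ℝ, 1 + |a + z| ≤ (1+|a|)*(1+|z|) := by
    intro a z
    have h1 : |a + z| ≤ |a| + |z| := abs_add_le a z
    nlinarith [abs_nonneg a, abs_nonneg z, mul_nonneg (abs_nonneg a) (abs_nonneg z)]
  have hgb : ∀ k ≤ N+1, ∀ z : ℝ, |iteratedDeriv k g (x+z)| ≤ C * ((1+|x|)*(1+|z|))^m := by
    intro k hk z
    refine (hgbd (x+z) k hk).trans ?_
    exact mul_le_mul_of_nonneg_left (pow_le_pow_left₀ (by positivity) (haux x z) m) hC.le
  have hhb : ∀ k ≤ N+1, ∀ z : ℝ, |iteratedDeriv k h (y+z)| ≤ C * ((1+|y|)*(1+|z|))^m := by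
    intro k hk z
    refine (hhbd (y+z) k hk).trans ?_
    exact mul_le_mul_of_nonneg_left (pow_le_pow_left₀ (by positivity) (haux y z) m) hC.le
  have keybd : ∀ n ≤ N+1, ∀ z : ℝ, |iteratedDeriv n F z| ≤ D * (1+|z|)^(m+m) := by
    intro n hn z
    have hB : (0:ℝ) ≤ C^2 * ((1+|x|)*(1+|y|))^m * (1+|z|)^(m+m) := by positivity
    have termbd : ∀ k ∈ Finset.range (n+1),
        |(n.choose k : ℝ) * iteratedDeriv k g (x+z) * iteratedDeriv (n-k) h (y+z)|
          ≤ (n.choose k : ℝ) * (C^2 * ((1+|x|)*(1+|y|))^m * (1+|z|)^(m+m)) := by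
      intro k hk
      have hk' : k ≤ N+1 := by
        have := Finset.mem_range.1 hk; omega
      have hk'' : n - k ≤ N+1 := by omega
      have e1 := hgb k hk' z
      have e2 := hhb (n-k) hk'' z
      calc |(n.choose k : ℝ) * iteratedDeriv k g (x+z) * iteratedDeriv (n-k) h (y+z)|
          = (n.choose k : ℝ) * |iteratedDeriv k g (x+z)| * |iteratedDeriv (n-k) h (y+z)| := by
            rw [abs_mul, abs_mul, Nat.abs_cast]
        _ ≤ (n.choose k : ℝ) * (C * ((1+|x|)*(1+|z|))^m) * (C * ((1+|y|)*(1+|z|))^m) := by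
            apply mul_le_mul
            · exact mul_le_mul_of_nonneg_left e1 (Nat.cast_nonneg _)
            · exact e2
            · exact abs_nonneg _
            · positivity
        _ = (n.choose k : ℝ) * (C^2 * ((1+|x|)*(1+|y|))^m * (1+|z|)^(m+m)) := by
            rw [mul_pow, mul_pow, mul_pow, pow_add]
            ring
    calc |iteratedDeriv n F z|
        = |∑ k ∈ Finset.range (n+1),
            (n.choose k : ℝ) * iteratedDeriv k g (x+z) * iteratedDeriv (n-k) h (y+z)| := by
          rw [hform n hn z]
      _ ≤ ∑ k ∈ Finset.range (n+1),
            |(n.choose k : ℝ) * iteratedDeriv k g (x+z) * iteratedDeriv (n-k) h (y+z)| :=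
          Finset.abs_sum_le_sum_abs _ _
      _ ≤ ∑ k ∈ Finset.range (n+1),
            (n.choose k : ℝ) * (C^2 * ((1+|x|)*(1+|y|))^m * (1+|z|)^(m+m)) :=
          Finset.sum_le_sum termbd
      _ = ((2:ℝ)^n) * (C^2 * ((1+|x|)*(1+|y|))^m * (1+|z|)^(m+m)) := by
          rw [← Finset.sum_mul, ← Nat.cast_sum, Nat.sum_range_choose]
          push_cast
          ring
      _ ≤ ((2:ℝ)^(N+1)) * (C^2 * ((1+|x|)*(1+|y|))^m * (1+|z|)^(m+m)) := by
          apply mul_le_mul_of_nonneg_right _ hB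
          exact pow_le_pow_right₀ one_le_two hn
      _ = D * (1+|z|)^(m+m) := by rw [hDdef]; ring
  -- big-O
  rw [isBigO_iff]
  refine ⟨D * (2*((m+m:ℕ):ℝ)+2)^(m+m) * 2, ?_⟩
  filter_upwards [eventually_ge_atTop (1:ℝ)] with t ht
  have ht0 : 0 < t := lt_of_lt_of_le one_pos ht
  have hexp := myExpansion N F hF (m+m) keybd ht (N+1) le_rfl
  have hsum : ∑ n ∈ Finset.range (N+1), ((-1:ℝ)^n / t^(n+1)) *
        ∑ k ∈ Finset.range (n+1),
          (n.choose k:ℝ) * iteratedDeriv k g x * iteratedDeriv (n-k) h y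
      = ∑ j ∈ Finset.range (N+1), (-1:ℝ)^j / t^(j+1) * iteratedDeriv j F 0 := by
    refine Finset.sum_congr rfl fun j hj => ?_
    have hj' : j ≤ N+1 := by
      have := Finset.mem_range.1 hj; omega
    rw [hform j hj' 0]
    simp only [add_zero]
  have hψcont : Continuous (iteratedDeriv (N+1) F) :=
    hF.continuous_iteratedDeriv (N+1) le_rfl
  have hIbd := myBound hψcont (m+m) (keybd (N+1) le_rfl) ht
  have hdiffeq : (∫ z in Set.Iio (0 : ℝ), Real.exp (z * t) * (g (x + z) * h (y + z))) -
        ∑ n ∈ Finset.range (N+1), ((-1:ℝ)^n / t^(n+1)) *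
          ∑ k ∈ Finset.range (n+1),
            (n.choose k:ℝ) * iteratedDeriv k g x * iteratedDeriv (n-k) h y
      = ((-1:ℝ)^(N+1) / t^(N+1)) *
          ∫ z in Iio (0:ℝ), Real.exp (z*t) * iteratedDeriv (N+1) F z := by
    rw [hsum]
    have : (∫ z in Set.Iio (0 : ℝ), Real.exp (z * t) * (g (x + z) * h (y + z)))
        = ∫ z in Iio (0:ℝ), Real.exp (z*t) * F z := rfl
    rw [this, hexp]
    ring
  rw [hdiffeq]
  rw [Real.norm_eq_abs, Real.norm_eq_abs, abs_mul, abs_div, abs_pow, abs_neg, abs_one,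
    one_pow, abs_of_pos (pow_pos ht0 (N+1)), abs_of_pos (by positivity : (0:ℝ) < 1 / t^(N+2))]
  calc 1 / t^(N+1) * |∫ z in Iio (0:ℝ), Real.exp (z*t) * iteratedDeriv (N+1) F z|
      ≤ 1 / t^(N+1) * ((D * (2*((m+m:ℕ):ℝ)+2)^(m+m) * 2) / t) := by
        apply mul_le_mul_of_nonneg_left hIbd (by positivity)
    _ = D * (2*((m+m:ℕ):ℝ)+2)^(m+m) * 2 * (1 / t^(N+2)) := by
        rw [pow_succ]
        field_simp
        ring
end

section
/- Let q : ℝ → ℝ be twice continuously differentiable, satisfy the Painlevé II equation q''(s) = s·q(s) + 2·q(s)³ for all s ∈ ℝ, and satisfy the decay bound: there is a constant C with |q(s)| ≤ C·e^{−s} and |q'(s)| ≤ C·e^{−s} for all s ≥ 0. Then for every s ∈ ℝ, ∫_s^∞ q(x)² dx = q'(s)² − s·q(s)² − q(s)⁴. -/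
open Filter Real Set MeasureTheory Topology

/-- For a Painlevé II solution `q` with exponential decay at `+∞`,
`∫_s^∞ q(x)² dx = q'(s)² - s q(s)² - q(s)⁴`. -/
theorem u00_eq (q : ℝ → ℝ) (hq : ContDiff ℝ 2 q)
    (hP2 : ∀ s : ℝ, iteratedDeriv 2 q s = s * q s + 2 * q s ^ 3)
    (C : ℝ)
    (hdecay : ∀ s : ℝ, 0 ≤ s →
      |q s| ≤ C * Real.exp (-s) ∧ |deriv q s| ≤ C * Real.exp (-s)) :
    ∀ s : ℝ, (∫ x in Set.Ioi s, q x ^ 2) = deriv q s ^ 2 - s * q s ^ 2 - q s ^ 4 := by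
  have h1 : Differentiable ℝ q := hq.differentiable (by norm_num)
  have h2 : Differentiable ℝ (deriv q) := by
    have : ContDiff ℝ (1 + 1) q := by exact_mod_cast hq
    exact ((contDiff_succ_iff_deriv.mp this).2.2).differentiable (by norm_num)
  set G : ℝ → ℝ := fun t => -(deriv q t ^ 2 - t * q t ^ 2 - q t ^ 4) with hG
  have hderivG : ∀ x : ℝ, HasDerivAt G (q x ^ 2) x := by
    intro x
    have hd : HasDerivAt q (deriv q x) x := (h1 x).hasDerivAt
    have hdd : HasDerivAt (deriv q) (x * q x + 2 * q x ^ 3) x := by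
      have := (h2 x).hasDerivAt
      rwa [show deriv (deriv q) x = x * q x + 2 * q x ^ 3 by
        rw [← hP2 x, iteratedDeriv_succ, iteratedDeriv_one]] at this
    have := (((hdd.pow 2).sub ((hasDerivAt_id x).mul (hd.pow 2))).sub (hd.pow 4)).neg
    rw [show G = -(deriv q ^ 2 - id * q ^ 2 - q ^ 4) by funext t; simp [hG]]
    exact this.congr_deriv (by simp only [Pi.pow_apply, id_eq, Nat.cast_ofNat]; ring)
  -- decay facts
  have hexp : Tendsto (fun t : ℝ => C * Real.exp (-t)) atTop (𝓝 0) := by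
    simpa using (Real.tendsto_exp_neg_atTop_nhds_zero.const_mul C)
  have hqz : Tendsto q atTop (𝓝 0) := by
    apply squeeze_zero_norm' _ hexp
    filter_upwards [eventually_ge_atTop (0 : ℝ)] with t ht
    exact (hdecay t ht).1
  have hq'z : Tendsto (deriv q) atTop (𝓝 0) := by
    apply squeeze_zero_norm' _ hexp
    filter_upwards [eventually_ge_atTop (0 : ℝ)] with t ht
    exact (hdecay t ht).2
  have hmid : Tendsto (fun t : ℝ => t * q t ^ 2) atTop (𝓝 0) := by
    have hbig : Tendsto (fun t : ℝ => C ^ 2 * (t ^ 1 * Real.exp (-t))) atTop (𝓝 0) := by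
      simpa using (Real.tendsto_pow_mul_exp_neg_atTop_nhds_zero 1).const_mul (C ^ 2)
    apply squeeze_zero_norm' _ hbig
    filter_upwards [eventually_ge_atTop (0 : ℝ)] with t ht
    have h1' := (hdecay t ht).1
    have habs : |q t| ^ 2 ≤ (C * Real.exp (-t)) ^ 2 := by
      apply pow_le_pow_left₀ (abs_nonneg _) h1'
    have hexple : Real.exp (-t) ≤ 1 := Real.exp_le_one_iff.mpr (by linarith)
    calc ‖t * q t ^ 2‖ = t * |q t| ^ 2 := by
          rw [Real.norm_eq_abs, abs_mul, abs_of_nonneg ht, abs_pow]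
      _ ≤ t * (C * Real.exp (-t)) ^ 2 := by
          exact mul_le_mul_of_nonneg_left habs ht
      _ = C ^ 2 * (t * Real.exp (-t)) * Real.exp (-t) := by ring
      _ ≤ C ^ 2 * (t * Real.exp (-t)) * 1 := by
          apply mul_le_mul_of_nonneg_left hexple
          positivity
      _ = C ^ 2 * (t ^ 1 * Real.exp (-t)) := by ring
  have hGz : Tendsto G atTop (𝓝 0) := by
    have : Tendsto (fun t => deriv q t ^ 2 - t * q t ^ 2 - q t ^ 4) atTop
        (𝓝 ((0 : ℝ) ^ 2 - 0 - (0 : ℝ) ^ 4)) :=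
      ((hq'z.pow 2).sub hmid).sub (hqz.pow 4)
    have h := this.neg
    rw [show -((0:ℝ) ^ 2 - 0 - (0:ℝ) ^ 4) = 0 by norm_num] at h
    exact h
  intro s
  have hcont : ContinuousWithinAt G (Ici s) s :=
    (hderivG s).continuousAt.continuousWithinAt
  have := integral_Ioi_of_hasDerivAt_of_nonneg hcont (fun x _ => hderivG x)
    (fun x _ => sq_nonneg (q x)) hGz
  rw [this]
  simp [hG]
end

section
/- Let q : ℝ → ℝ be twice continuously differentiable, satisfy the Painlevé II equation q''(s) = s·q(s) + 2·q(s)³ for all s ∈ ℝ, and satisfy the decay bound: there is a constant C with |q(s)| ≤ C·e^{−s} and |q'(s)| ≤ C·e^{−s} for all s ≥ 0. Define u₀₀(s) := ∫_s^∞ q(x)² dx and q₁(s) := q'(s) + u₀₀(s)·q(s). Then for every s ∈ ℝ, ∫_s^∞ q₁(x)² dx = (1/3)·u₀₀(s)³ − (q(s)² + s/3)·u₀₀(s) − (2/3)·q(s)·q'(s). -/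
open MeasureTheory Set Filter Real Asymptotics Topology


/-- The identity `u₁₁ = (1/3) u₀₀³ - (q² + s/3) u₀₀ - (2/3) q q'`, where
`u₀₀(s) = ∫_s^∞ q(x)² dx` and `q₁ = q' + u₀₀·q`, for a Painlevé II solution `q`
with exponential decay at `+∞`. -/
theorem u11_eq (q u00 q1 : ℝ → ℝ) (hq : ContDiff ℝ 2 q)
    (hP2 : ∀ s : ℝ, iteratedDeriv 2 q s = s * q s + 2 * q s ^ 3)
    (C : ℝ)
    (hdecay : ∀ s : ℝ, 0 ≤ s →
      |q s| ≤ C * Real.exp (-s) ∧ |deriv q s| ≤ C * Real.exp (-s))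
    (hu00 : ∀ s : ℝ, u00 s = ∫ x in Set.Ioi s, q x ^ 2)
    (hq1 : ∀ s : ℝ, q1 s = deriv q s + u00 s * q s) :
    ∀ s : ℝ, (∫ x in Set.Ioi s, q1 x ^ 2) =
      (1 / 3) * u00 s ^ 3 - (q s ^ 2 + s / 3) * u00 s - (2 / 3) * q s * deriv q s := by
  -- basic differentiability
  have hqc1 : ContDiff ℝ 1 (deriv q) :=
    ((contDiff_succ_iff_deriv (n := 1)).mp (by exact_mod_cast hq)).2.2
  have contq : Continuous q := hq.continuous
  have contq' : Continuous (deriv q) := hqc1.continuous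
  have hq' : ∀ x : ℝ, HasDerivAt q (deriv q x) x := fun x =>
    ((hq.differentiable (by norm_num)) x).hasDerivAt
  have hq'' : ∀ x : ℝ, HasDerivAt (deriv q) (x * q x + 2 * q x ^ 3) x := by
    intro x
    have h := ((hqc1.differentiable one_ne_zero) x).hasDerivAt
    rwa [show deriv (deriv q) x = iteratedDeriv 2 q x by
      rw [iteratedDeriv_succ, iteratedDeriv_one], hP2 x] at h
  -- exponential decay as Tendsto and IsBigO
  have hexp : Tendsto (fun x : ℝ => Real.exp (-x)) atTop (𝓝 0) :=
    Real.tendsto_exp_neg_atTop_nhds_zero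
  have hq0 : Tendsto q atTop (𝓝 0) := by
    apply squeeze_zero_norm' (a := fun x => C * Real.exp (-x))
    · filter_upwards [eventually_ge_atTop (0 : ℝ)] with x hx
      exact (hdecay x hx).1
    · simpa using hexp.const_mul C
  have hq'0 : Tendsto (deriv q) atTop (𝓝 0) := by
    apply squeeze_zero_norm' (a := fun x => C * Real.exp (-x))
    · filter_upwards [eventually_ge_atTop (0 : ℝ)] with x hx
      exact (hdecay x hx).2
    · simpa using hexp.const_mul C
  have hqO : q =O[atTop] fun x => Real.exp (-x) := by
    rw [isBigO_iff]
    refine ⟨C, ?_⟩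
    filter_upwards [eventually_ge_atTop (0 : ℝ)] with x hx
    rw [Real.norm_eq_abs, Real.norm_eq_abs, abs_of_pos (Real.exp_pos _)]
    exact (hdecay x hx).1
  have hq'O : (deriv q) =O[atTop] fun x => Real.exp (-x) := by
    rw [isBigO_iff]
    refine ⟨C, ?_⟩
    filter_upwards [eventually_ge_atTop (0 : ℝ)] with x hx
    rw [Real.norm_eq_abs, Real.norm_eq_abs, abs_of_pos (Real.exp_pos _)]
    exact (hdecay x hx).2
  have hexpsq : ∀ x : ℝ, Real.exp (-x) ^ 2 = Real.exp (-2 * x) := by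
    intro x; rw [sq, ← Real.exp_add]; ring_nf
  -- q² is integrable on every (s, ∞)
  have hq2int : ∀ s : ℝ, IntegrableOn (fun x => q x ^ 2) (Set.Ioi s) := by
    intro s
    refine integrable_of_isBigO_exp_neg (b := 2) two_pos (contq.pow 2).continuousOn ?_
    exact (hqO.pow 2).congr' EventuallyEq.rfl (Eventually.of_forall hexpsq)
  -- E := q'^2 - x q^2 - q^4 : the first integral
  set E : ℝ → ℝ := fun x => deriv q x ^ 2 - x * q x ^ 2 - q x ^ 4 with hEdef
  have hE : ∀ x : ℝ, HasDerivAt E (-q x ^ 2) x := by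
    intro x
    have h : HasDerivAt E
        (2 * deriv q x ^ (2-1) * (x * q x + 2 * q x ^ 3)
          - (1 * q x ^ 2 + x * (2 * q x ^ (2-1) * deriv q x))
          - 4 * q x ^ (4-1) * deriv q x) x := by
      exact (((hq'' x).pow 2).sub ((hasDerivAt_id x).mul ((hq' x).pow 2))).sub ((hq' x).pow 4)
    convert h using 1
    ring
  have hEbound : ∀ x : ℝ, 0 ≤ x →
      |E x| ≤ (C^2 + C^4) * Real.exp (-x) + C^2 * (x ^ 1 * Real.exp (-x)) := by
    intro x hx
    have h1 := (hdecay x hx).1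
    have h2 := (hdecay x hx).2
    have haq : (0:ℝ) ≤ |q x| := abs_nonneg _
    have haq' : (0:ℝ) ≤ |deriv q x| := abs_nonneg _
    have he1 : Real.exp (-x) ≤ 1 := Real.exp_le_one_iff.mpr (by linarith)
    have hep : (0:ℝ) < Real.exp (-x) := Real.exp_pos _
    have hb1 : deriv q x ^ 2 ≤ C^2 * Real.exp (-x) := by
      calc deriv q x ^ 2 = |deriv q x|^2 := by rw [sq_abs]
      _ ≤ (C * Real.exp (-x))^2 := by nlinarith
      _ ≤ C^2 * Real.exp (-x) := by nlinarith
    have hb2 : q x ^ 2 ≤ C^2 * Real.exp (-x) := by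
      calc q x ^ 2 = |q x|^2 := by rw [sq_abs]
      _ ≤ (C * Real.exp (-x))^2 := by nlinarith
      _ ≤ C^2 * Real.exp (-x) := by nlinarith
    have hb4 : q x ^ 4 ≤ C^4 * Real.exp (-x) := by
      calc q x ^ 4 = (|q x|^2)^2 := by rw [sq_abs]; ring
      _ ≤ (C^2 * Real.exp (-x))^2 := by
            have hb2' : |q x|^2 ≤ C^2 * Real.exp (-x) := by rw [sq_abs]; exact hb2
            nlinarith [hb2']
      _ ≤ C^4 * Real.exp (-x) := by nlinarith
    have hqnn : (0:ℝ) ≤ q x ^ 2 := sq_nonneg _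
    have hq'nn : (0:ℝ) ≤ deriv q x ^ 2 := sq_nonneg _
    have hq4nn : (0:ℝ) ≤ q x ^ 4 := by positivity
    rw [abs_le]
    constructor <;> simp only [hEdef, pow_one] <;> nlinarith
  have hE0 : Tendsto E atTop (𝓝 0) := by
    apply squeeze_zero_norm'
      (a := fun x => (C^2 + C^4) * Real.exp (-x) + C^2 * (x ^ 1 * Real.exp (-x)))
    · filter_upwards [eventually_ge_atTop (0 : ℝ)] with x hx
      exact hEbound x hx
    · have h1 := (tendsto_pow_mul_exp_neg_atTop_nhds_zero 1).const_mul (C^2)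
      have h2 := hexp.const_mul (C^2 + C^4)
      simpa using h2.add h1
  -- the first-integral identity u00 = E
  have key1 : ∀ s : ℝ, u00 s = E s := by
    intro s
    have h := integral_Ioi_of_hasDerivAt_of_tendsto' (a := s)
      (fun x _ => hE x) ((hq2int s).neg) hE0
    rw [integral_neg] at h
    rw [hu00 s]; linarith
  have key : ∀ x : ℝ, u00 x = deriv q x ^ 2 - x * q x ^ 2 - q x ^ 4 := key1
  have hu00d : ∀ x : ℝ, HasDerivAt u00 (-q x ^ 2) x := fun x =>
    (hE x).congr_of_eventuallyEq (Eventually.of_forall key1)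
  have contu00 : Continuous u00 :=
    continuous_iff_continuousAt.mpr fun x => (hu00d x).continuousAt
  have hu000 : Tendsto u00 atTop (𝓝 0) := hE0.congr fun x => (key1 x).symm
  -- q1 properties
  have hq1fun : q1 = fun x => deriv q x + u00 x * q x := funext hq1
  have contq1 : Continuous q1 := by
    rw [hq1fun]; exact contq'.add (contu00.mul contq)
  have hq1O : q1 =O[atTop] fun x => Real.exp (-x) := by
    have hO : (fun x => deriv q x + u00 x * q x) =O[atTop] fun x => Real.exp (-x) := by
      refine hq'O.add ?_
      have := (hu000.isBigO_one ℝ).mul hqO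
      simpa using this
    rw [hq1fun]; exact hO
  have hq1sqint : ∀ s : ℝ, IntegrableOn (fun x => q1 x ^ 2) (Set.Ioi s) := by
    intro s
    refine integrable_of_isBigO_exp_neg (b := 2) two_pos (contq1.pow 2).continuousOn ?_
    exact (hq1O.pow 2).congr' EventuallyEq.rfl (Eventually.of_forall hexpsq)
  -- the RHS function and its derivative
  intro s
  have hF : ∀ x : ℝ, HasDerivAt
      (fun y => (1/3) * u00 y ^ 3 - (q y ^ 2 + y/3) * u00 y - (2/3) * q y * deriv q y)
      (-q1 x ^ 2) x := by
    intro x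
    have h1 : HasDerivAt (fun y => (1/3) * u00 y ^ 3)
        ((1/3) * (3 * u00 x ^ (3-1) * (-q x ^ 2))) x := ((hu00d x).pow 3).const_mul (1/3)
    have h2 : HasDerivAt (fun y => (q y ^ 2 + y/3) * u00 y)
        ((2 * q x ^ (2-1) * deriv q x + 1/3) * u00 x + (q x ^ 2 + x/3) * (-q x ^ 2)) x :=
      (((hq' x).pow 2).add ((hasDerivAt_id x).div_const 3)).mul (hu00d x)
    have h3 : HasDerivAt (fun y => (2/3) * q y * deriv q y)
        (((2/3) * deriv q x) * deriv q x + ((2/3) * q x) * (x * q x + 2 * q x ^ 3)) x :=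
      ((hq' x).const_mul (2/3)).mul (hq'' x)
    have h := (h1.sub h2).sub h3
    refine h.congr_deriv ?_
    rw [hq1 x]
    linear_combination (-(1:ℝ)/3) * key x
  -- the RHS tends to 0 at +∞
  have hF0 : Tendsto
      (fun y => (1/3) * u00 y ^ 3 - (q y ^ 2 + y/3) * u00 y - (2/3) * q y * deriv q y)
      atTop (𝓝 0) := by
    have t1 : Tendsto (fun y => (1/3) * u00 y ^ 3) atTop (𝓝 0) := by
      simpa using (hu000.pow 3).const_mul (1/3 : ℝ)
    have t2 : Tendsto (fun y => q y ^ 2 * u00 y) atTop (𝓝 0) := by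
      simpa using (hq0.pow 2).mul hu000
    have t3 : Tendsto (fun y => y/3 * u00 y) atTop (𝓝 0) := by
      apply squeeze_zero_norm'
        (a := fun x => (C^2 + C^4)/3 * (x ^ 1 * Real.exp (-x)) + C^2/3 * (x ^ 2 * Real.exp (-x)))
      · filter_upwards [eventually_ge_atTop (0 : ℝ)] with x hx
        have h : |u00 x| ≤ (C^2 + C^4) * Real.exp (-x) + C^2 * (x ^ 1 * Real.exp (-x)) := by
          rw [key1 x]; exact hEbound x hx
        rw [Real.norm_eq_abs, abs_mul, abs_div, abs_of_nonneg hx,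
          (by norm_num : |(3:ℝ)| = 3)]
        nlinarith [mul_le_mul_of_nonneg_left h (by linarith : (0:ℝ) ≤ x/3)]
      · have h1 := (tendsto_pow_mul_exp_neg_atTop_nhds_zero 1).const_mul ((C^2 + C^4)/3)
        have h2 := (tendsto_pow_mul_exp_neg_atTop_nhds_zero 2).const_mul (C^2/3)
        simpa using h1.add h2
    have t4 : Tendsto (fun y => (2/3) * q y * deriv q y) atTop (𝓝 0) := by
      simpa using (hq0.const_mul (2/3 : ℝ)).mul hq'0
    have t23 : Tendsto (fun y => (q y ^ 2 + y/3) * u00 y) atTop (𝓝 0) := by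
      have := t2.add t3
      simp only [add_zero] at this
      exact this.congr fun y => by ring
    have := (t1.sub t23).sub t4
    simpa using this
  -- conclude by FTC on (s, ∞)
  have h := integral_Ioi_of_hasDerivAt_of_tendsto' (a := s)
    (fun x _ => hF x) ((hq1sqint s).neg) hF0
  rw [integral_neg] at h
  have h' : (∫ x in Set.Ioi s, q1 x ^ 2)
      = (1/3) * u00 s ^ 3 - (q s ^ 2 + s/3) * u00 s - (2/3) * q s * deriv q s := by
    linarith
  linarith [h']
end

section
/- Let q : ℝ → ℝ be twice continuously differentiable, satisfy the Painlevé II equation q''(s) = s·q(s) + 2·q(s)³ for all s ∈ ℝ, and satisfy the decay bound: there is a constant C with |q(s)| ≤ C·e^{−s} and |q'(s)| ≤ C·e^{−s} for all s ≥ 0. Define F(s) := exp(−∫_s^∞ (x−s)·q(x)² dx), u₀₀(s) := ∫_s^∞ q(x)² dx, q₁ := q' + u₀₀·q, and u₁₁(s) := ∫_s^∞ q₁(x)² dx. Then for every s ∈ ℝ, F(s)·u₁₁(s) = −(s/3)·F'(s) + (1/3)·F'''(s). -/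
open MeasureTheory Set Filter Real

/-- Integrability on `Ioi s` of a continuous function with exponential decay. -/
lemma integrableOn_of_decay (g : ℝ → ℝ) (hg : Continuous g) (D a : ℝ) (ha : 0 < a)
    (hbd : ∀ x : ℝ, 0 ≤ x → |g x| ≤ D * Real.exp (-(a * x))) (s : ℝ) :
    IntegrableOn g (Set.Ioi s) := by
  set t := max s 0 with ht
  have hst : s ≤ t := le_max_left _ _
  have h1 : IntegrableOn g (Set.Ioc s t) := (hg.integrableOn_Ioc)
  have h2 : IntegrableOn g (Set.Ioi t) := by
    have hbase : IntegrableOn (fun x => D * Real.exp (-(a * x))) (Set.Ioi t) := by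
      have := (exp_neg_integrableOn_Ioi t ha).const_mul D
      simp only [neg_mul] at this; exact this
    refine Integrable.mono' hbase (hg.aestronglyMeasurable.restrict) ?_
    filter_upwards [ae_restrict_mem measurableSet_Ioi] with x hx
    have hx0 : (0:ℝ) ≤ x := le_trans (le_max_right s 0) (le_of_lt hx)
    simpa [Real.norm_eq_abs] using hbd x hx0
  have := h1.union h2
  rwa [Set.Ioc_union_Ioi_eq_Ioi hst] at this

/-- The formula `∫_{Ioi t} g = ∫_{Ioi 0} g - ∫_0^t g`. -/
lemma integral_Ioi_eq_sub (g : ℝ → ℝ) (hg : Continuous g)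
    (hint : ∀ s : ℝ, IntegrableOn g (Set.Ioi s)) (t : ℝ) :
    (∫ x in Set.Ioi t, g x) = (∫ x in Set.Ioi 0, g x) - ∫ x in (0:ℝ)..t, g x := by
  rcases le_total 0 t with h | h
  · have hsplit : (∫ x in Set.Ioi (0:ℝ), g x)
        = (∫ x in Set.Ioc 0 t, g x) + ∫ x in Set.Ioi t, g x := by
      rw [← MeasureTheory.setIntegral_union]
      · rw [Set.Ioc_union_Ioi_eq_Ioi h]
      · exact Set.Ioc_disjoint_Ioi le_rfl
      · exact measurableSet_Ioi
      · exact hg.integrableOn_Ioc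
      · exact hint t
    rw [intervalIntegral.integral_of_le h]
    linarith [hsplit]
  · have hsplit : (∫ x in Set.Ioi t, g x)
        = (∫ x in Set.Ioc t 0, g x) + ∫ x in Set.Ioi 0, g x := by
      rw [← MeasureTheory.setIntegral_union]
      · rw [Set.Ioc_union_Ioi_eq_Ioi h]
      · exact Set.Ioc_disjoint_Ioi le_rfl
      · exact measurableSet_Ioi
      · exact hg.integrableOn_Ioc
      · exact hint 0
    rw [intervalIntegral.integral_of_ge h]
    linarith [hsplit]

/-- Derivative of `s ↦ ∫_{Ioi s} g` is `-g s`. -/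
lemma hasDerivAt_integral_Ioi (g : ℝ → ℝ) (hg : Continuous g)
    (hint : ∀ s : ℝ, IntegrableOn g (Set.Ioi s)) (s : ℝ) :
    HasDerivAt (fun t => ∫ x in Set.Ioi t, g x) (-g s) s := by
  have heq : (fun t => ∫ x in Set.Ioi t, g x)
      = fun t => (∫ x in Set.Ioi (0:ℝ), g x) - ∫ x in (0:ℝ)..t, g x :=
    funext fun t => integral_Ioi_eq_sub g hg hint t
  rw [heq]
  have h1 : HasDerivAt (fun t => ∫ x in (0:ℝ)..t, g x) (g s) s :=
    (hg.integral_hasStrictDerivAt 0 s).hasDerivAt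
  have := (hasDerivAt_const s (∫ x in Set.Ioi (0:ℝ), g x)).sub h1
  simp only [zero_sub] at this; exact this

/-- Tail-integral bound from pointwise decay at rate `2`. -/
lemma abs_integral_Ioi_le (g : ℝ → ℝ) (hg : Continuous g) (D : ℝ) (hD : 0 ≤ D)
    (hbd : ∀ x : ℝ, 0 ≤ x → |g x| ≤ D * Real.exp (-(2 * x))) (s : ℝ) (hs : 0 ≤ s) :
    |∫ x in Set.Ioi s, g x| ≤ D * Real.exp (-s) := by
  have h0 : IntegrableOn (fun x : ℝ => Real.exp (-x)) (Set.Ioi s) := by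
    have := exp_neg_integrableOn_Ioi s one_pos
    simpa [neg_mul] using this
  have hint : IntegrableOn (fun x => D * Real.exp (-s) * Real.exp (-x)) (Set.Ioi s) :=
    h0.const_mul _
  have hle : |∫ x in Set.Ioi s, g x| ≤ ∫ x in Set.Ioi s, D * Real.exp (-s) * Real.exp (-x) := by
    rw [← Real.norm_eq_abs]
    refine MeasureTheory.norm_integral_le_of_norm_le hint ?_
    filter_upwards [ae_restrict_mem measurableSet_Ioi] with x hx
    have hx' : s < x := hx
    have hx0 : (0:ℝ) ≤ x := le_trans hs hx'.le
    have h1 : |g x| ≤ D * Real.exp (-(2 * x)) := hbd x hx0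
    have h2 : Real.exp (-(2 * x)) ≤ Real.exp (-s) * Real.exp (-x) := by
      rw [← Real.exp_add]
      exact Real.exp_le_exp.mpr (by linarith)
    calc ‖g x‖ = |g x| := rfl
      _ ≤ D * Real.exp (-(2 * x)) := h1
      _ ≤ D * (Real.exp (-s) * Real.exp (-x)) := by
          exact mul_le_mul_of_nonneg_left h2 hD
      _ = D * Real.exp (-s) * Real.exp (-x) := by ring
  have hval : (∫ x in Set.Ioi s, D * Real.exp (-s) * Real.exp (-x))
      = D * Real.exp (-s) * Real.exp (-s) := by
    rw [MeasureTheory.integral_const_mul, integral_exp_neg_Ioi]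
  have hexp1 : Real.exp (-s) ≤ 1 := Real.exp_le_one_iff.mpr (by linarith)
  have : D * Real.exp (-s) * Real.exp (-s) ≤ D * Real.exp (-s) * 1 := by
    have h0 : 0 ≤ D * Real.exp (-s) := mul_nonneg hD (Real.exp_pos _).le
    exact mul_le_mul_of_nonneg_left hexp1 h0
  calc |∫ x in Set.Ioi s, g x| ≤ _ := hle
    _ = D * Real.exp (-s) * Real.exp (-s) := hval
    _ ≤ D * Real.exp (-s) := by linarith

/-- Squared decay. -/
lemma sq_decay {f : ℝ → ℝ} {D : ℝ} (hD : 0 ≤ D)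
    (hb : ∀ x : ℝ, 0 ≤ x → |f x| ≤ D * Real.exp (-x)) :
    ∀ x : ℝ, 0 ≤ x → |f x ^ 2| ≤ D ^ 2 * Real.exp (-(2 * x)) := by
  intro x hx
  have h := hb x hx
  have hexp : Real.exp (-x) * Real.exp (-x) = Real.exp (-(2 * x)) := by
    rw [← Real.exp_add]; ring_nf
  calc |f x ^ 2| = |f x| ^ 2 := abs_pow _ _
    _ ≤ (D * Real.exp (-x)) ^ 2 := pow_le_pow_left₀ (abs_nonneg _) h 2
    _ = D ^ 2 * Real.exp (-(2 * x)) := by rw [mul_pow, ← hexp]; ring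

lemma tendsto_zero_of_expbound (f : ℝ → ℝ) (D : ℝ)
    (hb : ∀ x : ℝ, 0 ≤ x → |f x| ≤ D * Real.exp (-x)) :
    Filter.Tendsto f Filter.atTop (nhds 0) := by
  apply squeeze_zero_norm' (a := fun x => D * Real.exp (-x))
  · filter_upwards [Filter.eventually_ge_atTop (0:ℝ)] with x hx
    simpa [Real.norm_eq_abs] using hb x hx
  · simpa using tendsto_exp_neg_atTop_nhds_zero.const_mul D

lemma tendsto_zero_of_expbound' (f : ℝ → ℝ) (D : ℝ)
    (hb : ∀ x : ℝ, 0 ≤ x → |f x| ≤ D * (x * Real.exp (-x))) :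
    Filter.Tendsto f Filter.atTop (nhds 0) := by
  apply squeeze_zero_norm' (a := fun x => D * (x * Real.exp (-x)))
  · filter_upwards [Filter.eventually_ge_atTop (0:ℝ)] with x hx
    simpa [Real.norm_eq_abs] using hb x hx
  · have := (tendsto_pow_mul_exp_neg_atTop_nhds_zero 1).const_mul D
    simpa using this

/-- The table identity `u₁₁·F = -(s/3)·F' + (1/3)·F'''`, where
`F(s) = exp(-∫_s^∞ (x-s) q(x)² dx)`, `u₀₀(s) = ∫_s^∞ q(x)² dx`, `q₁ = q' + u₀₀·q`,
`u₁₁(s) = ∫_s^∞ q₁(x)² dx`, and `q` is a Painlevé II solution with exponential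
decay at `+∞`. -/
theorem F_u11_eq (q F u00 q1 u11 : ℝ → ℝ) (hq : ContDiff ℝ 2 q)
    (hP2 : ∀ s : ℝ, iteratedDeriv 2 q s = s * q s + 2 * q s ^ 3)
    (C : ℝ)
    (hdecay : ∀ s : ℝ, 0 ≤ s →
      |q s| ≤ C * Real.exp (-s) ∧ |deriv q s| ≤ C * Real.exp (-s))
    (hF : ∀ s : ℝ, F s = Real.exp (-(∫ x in Set.Ioi s, (x - s) * q x ^ 2)))
    (hu00 : ∀ s : ℝ, u00 s = ∫ x in Set.Ioi s, q x ^ 2)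
    (hq1 : ∀ s : ℝ, q1 s = deriv q s + u00 s * q s)
    (hu11 : ∀ s : ℝ, u11 s = ∫ x in Set.Ioi s, q1 x ^ 2) :
    ∀ s : ℝ, F s * u11 s = -(s / 3) * deriv F s + (1 / 3) * iteratedDeriv 3 F s := by
  -- regularity of q
  have hqc : Continuous q := hq.continuous
  have hqd : ∀ s : ℝ, HasDerivAt q (deriv q s) s :=
    fun s => ((hq.differentiable two_ne_zero) s).hasDerivAt
  have h2 : ContDiff ℝ (1+1) q := by norm_num; exact hq
  have hq1' : ContDiff ℝ 1 (deriv q) := (contDiff_succ_iff_deriv.mp h2).2.2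
  have hq'c : Continuous (deriv q) := hq1'.continuous
  have hq'' : ∀ s : ℝ, HasDerivAt (deriv q) (s * q s + 2 * q s ^ 3) s := by
    intro s
    have hd : deriv (deriv q) s = s * q s + 2 * q s ^ 3 := by
      rw [← hP2 s]; simp [iteratedDeriv_succ, iteratedDeriv_one]
    have := ((hq1'.differentiable one_ne_zero) s).hasDerivAt
    rwa [hd] at this
  have hC : 0 ≤ C := by
    have h := (hdecay 0 le_rfl).1
    simp at h
    exact le_trans (abs_nonneg _) h
  -- pointwise bounds
  have hqb : ∀ x : ℝ, 0 ≤ x → |q x| ≤ C * Real.exp (-x) := fun x hx => (hdecay x hx).1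
  have hq'b : ∀ x : ℝ, 0 ≤ x → |deriv q x| ≤ C * Real.exp (-x) := fun x hx => (hdecay x hx).2
  have hexp2 : ∀ x : ℝ, Real.exp (-x) * Real.exp (-x) = Real.exp (-(2*x)) := by
    intro x; rw [← Real.exp_add]; ring_nf
  have hq2b : ∀ x : ℝ, 0 ≤ x → |q x ^ 2| ≤ C^2 * Real.exp (-(2*x)) := sq_decay hC hqb
  have hxe : ∀ x : ℝ, 0 ≤ x → x * Real.exp (-x) ≤ 1 := by
    intro x hx
    have h1 : x ≤ Real.exp x := by linarith [Real.add_one_le_exp x]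
    have := mul_le_mul_of_nonneg_right h1 (Real.exp_pos (-x)).le
    rwa [← Real.exp_add, add_neg_cancel, Real.exp_zero] at this
  -- integrability
  have hint_q2 : ∀ s, IntegrableOn (fun x => q x ^ 2) (Set.Ioi s) :=
    integrableOn_of_decay _ (hqc.pow 2) (C^2) 2 two_pos hq2b
  have hxq2b : ∀ x : ℝ, 0 ≤ x → |x * q x ^ 2| ≤ C^2 * Real.exp (-x) := by
    intro x hx
    have h2b := hq2b x hx
    calc |x * q x ^ 2| = x * |q x ^ 2| := by rw [abs_mul, abs_of_nonneg hx]
      _ ≤ x * (C^2 * Real.exp (-(2*x))) :=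
          mul_le_mul_of_nonneg_left h2b hx
      _ = C^2 * ((x * Real.exp (-x)) * Real.exp (-x)) := by rw [← hexp2]; ring
      _ ≤ C^2 * (1 * Real.exp (-x)) := by
          have h3 := mul_le_mul_of_nonneg_right (hxe x hx) (Real.exp_pos (-x)).le
          exact mul_le_mul_of_nonneg_left h3 (by positivity)
      _ = C^2 * Real.exp (-x) := by ring
  have hint_xq2 : ∀ s, IntegrableOn (fun x => x * q x ^ 2) (Set.Ioi s) := by
    refine integrableOn_of_decay _ (continuous_id.mul (hqc.pow 2)) (C^2) 1 one_pos ?_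
    intro x hx; simpa using hxq2b x hx
  -- u00 facts
  have hu00d : ∀ s, HasDerivAt u00 (-(q s ^ 2)) s := by
    intro s
    have h := hasDerivAt_integral_Ioi _ (hqc.pow 2) hint_q2 s
    have he : u00 = fun t => ∫ x in Set.Ioi t, q x ^ 2 := funext hu00
    rw [he]; exact h
  have hu00c : Continuous u00 := by
    rw [continuous_iff_continuousAt]; exact fun s => (hu00d s).continuousAt
  have hu00b : ∀ s : ℝ, 0 ≤ s → |u00 s| ≤ C^2 * Real.exp (-s) := by
    intro s hs; rw [hu00 s]
    exact abs_integral_Ioi_le _ (hqc.pow 2) _ (by positivity) hq2b s hs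
  -- q1 facts
  have hq1c : Continuous q1 := by
    have he : q1 = fun s => deriv q s + u00 s * q s := funext hq1
    rw [he]; exact hq'c.add (hu00c.mul hqc)
  have hq1b : ∀ x : ℝ, 0 ≤ x → |q1 x| ≤ (C + C^3) * Real.exp (-x) := by
    intro x hx
    rw [hq1 x]
    have h1 := hq'b x hx; have hb2 := hu00b x hx; have h3 := hqb x hx
    have he1 : Real.exp (-x) ≤ 1 := Real.exp_le_one_iff.mpr (by linarith)
    have he0 : (0:ℝ) < Real.exp (-x) := Real.exp_pos _
    calc |deriv q x + u00 x * q x| ≤ |deriv q x| + |u00 x| * |q x| := by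
          rw [← abs_mul]; exact abs_add_le _ _
      _ ≤ C * Real.exp (-x) + (C^2 * Real.exp (-x)) * (C * Real.exp (-x)) := by
          refine add_le_add h1 (mul_le_mul hb2 h3 (abs_nonneg _) (by positivity))
      _ = C * Real.exp (-x) + (C^3 * Real.exp (-x)) * Real.exp (-x) := by ring
      _ ≤ C * Real.exp (-x) + (C^3 * Real.exp (-x)) * 1 := by
          have : (0:ℝ) ≤ C^3 * Real.exp (-x) := by positivity
          nlinarith
      _ = (C + C^3) * Real.exp (-x) := by ring
  have hCC : (0:ℝ) ≤ C + C^3 := by positivity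
  have hq12b : ∀ x : ℝ, 0 ≤ x → |q1 x ^ 2| ≤ (C + C^3)^2 * Real.exp (-(2*x)) :=
    sq_decay hCC hq1b
  have hint_q12 : ∀ s, IntegrableOn (fun x => q1 x ^ 2) (Set.Ioi s) :=
    integrableOn_of_decay _ (hq1c.pow 2) ((C+C^3)^2) 2 two_pos hq12b
  have hu11d : ∀ s, HasDerivAt u11 (-(q1 s ^ 2)) s := by
    intro s
    have h := hasDerivAt_integral_Ioi _ (hq1c.pow 2) hint_q12 s
    have he : u11 = fun t => ∫ x in Set.Ioi t, q1 x ^ 2 := funext hu11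
    rw [he]; exact h
  have hu11b : ∀ s : ℝ, 0 ≤ s → |u11 s| ≤ (C+C^3)^2 * Real.exp (-s) := by
    intro s hs; rw [hu11 s]
    exact abs_integral_Ioi_le _ (hq1c.pow 2) _ (by positivity) hq12b s hs
  -- tendsto facts
  have tq : Filter.Tendsto q Filter.atTop (nhds 0) := tendsto_zero_of_expbound q C hqb
  have tq' : Filter.Tendsto (deriv q) Filter.atTop (nhds 0) :=
    tendsto_zero_of_expbound _ C hq'b
  have tu00 : Filter.Tendsto u00 Filter.atTop (nhds 0) :=
    tendsto_zero_of_expbound _ (C^2) hu00b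
  have tu11 : Filter.Tendsto u11 Filter.atTop (nhds 0) :=
    tendsto_zero_of_expbound _ ((C+C^3)^2) hu11b
  have tsq2 : Filter.Tendsto (fun s => s * q s ^ 2) Filter.atTop (nhds 0) :=
    tendsto_zero_of_expbound _ (C^2) hxq2b
  have tsu00 : Filter.Tendsto (fun s => s * u00 s) Filter.atTop (nhds 0) := by
    refine tendsto_zero_of_expbound' _ (C^2) ?_
    intro x hx
    have hb2 := hu00b x hx
    calc |x * u00 x| = x * |u00 x| := by rw [abs_mul, abs_of_nonneg hx]
      _ ≤ x * (C^2 * Real.exp (-x)) := mul_le_mul_of_nonneg_left hb2 hx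
      _ = C^2 * (x * Real.exp (-x)) := by ring
  -- Identity 1 : u00 = q'^2 - s q^2 - q^4
  have hid1 : ∀ s : ℝ, u00 s = deriv q s ^ 2 - s * q s ^ 2 - q s ^ 4 := by
    set h : ℝ → ℝ := fun s => deriv q s ^ 2 - s * q s ^ 2 - q s ^ 4 - u00 s with hh
    have hder : ∀ s, HasDerivAt h 0 s := by
      intro s
      have d1 : HasDerivAt (fun t => deriv q t ^ 2)
          ((2:ℕ) * deriv q s ^ 1 * (s * q s + 2 * q s ^ 3)) s := (hq'' s).pow 2
      have d2 : HasDerivAt (fun t => t * q t ^ 2)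
          (1 * q s ^ 2 + s * ((2:ℕ) * q s ^ 1 * deriv q s)) s :=
        (hasDerivAt_id s).mul ((hqd s).pow 2)
      have d3 : HasDerivAt (fun t => q t ^ 4) ((4:ℕ) * q s ^ 3 * deriv q s) s := (hqd s).pow 4
      have hcomb := ((d1.sub d2).sub d3).sub (hu00d s)
      refine hcomb.congr_deriv ?_
      push_cast; ring
    have hdiff : Differentiable ℝ h := fun s => (hder s).differentiableAt
    have hconst : ∀ x y, h x = h y :=
      fun x y => is_const_of_deriv_eq_zero hdiff (fun t => (hder t).deriv) x y
    have hlim : Filter.Tendsto h Filter.atTop (nhds 0) := by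
      have l1 := (((tq'.pow 2).sub tsq2).sub (tq.pow 4)).sub tu00
      norm_num at l1
      exact l1
    intro s
    have h1 : Filter.Tendsto h Filter.atTop (nhds (h s)) := by
      have he : h = fun _ => h s := funext fun x => hconst x s
      rw [he]; exact tendsto_const_nhds
    have h0 : h s = 0 := tendsto_nhds_unique h1 hlim
    rw [hh] at h0; simp only at h0; linarith
  -- Identity 2 : u11 = -(1/3) s u00 + (1/3)(u00^3 - 3 u00 q^2 - 2 q q')
  have hid2 : ∀ s : ℝ, u11 s = -(1/3) * (s * u00 s)
      + (1/3) * (u00 s ^ 3 - 3 * (u00 s * q s ^ 2) - 2 * (q s * deriv q s)) := by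
    set g : ℝ → ℝ := fun s => u11 s + (1/3) * (s * u00 s)
      - (1/3) * (u00 s ^ 3 - 3 * (u00 s * q s ^ 2) - 2 * (q s * deriv q s)) with hg
    have hder : ∀ s, HasDerivAt g 0 s := by
      intro s
      have d1 : HasDerivAt (fun t => t * u00 t) (1 * u00 s + s * (-(q s ^ 2))) s :=
        (hasDerivAt_id s).mul (hu00d s)
      have d2 : HasDerivAt (fun t => u00 t ^ 3) ((3:ℕ) * u00 s ^ 2 * (-(q s ^ 2))) s :=
        (hu00d s).pow 3
      have d3 : HasDerivAt (fun t => u00 t * q t ^ 2)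
          (-(q s ^ 2) * q s ^ 2 + u00 s * ((2:ℕ) * q s ^ 1 * deriv q s)) s :=
        (hu00d s).mul ((hqd s).pow 2)
      have d4 : HasDerivAt (fun t => q t * deriv q t)
          (deriv q s * deriv q s + q s * (s * q s + 2 * q s ^ 3)) s :=
        (hqd s).mul (hq'' s)
      have hcomb := ((hu11d s).add (d1.const_mul (1/3))).sub
        (((d2.sub (d3.const_mul 3)).sub (d4.const_mul 2)).const_mul (1/3))
      refine hcomb.congr_deriv ?_
      rw [hq1 s]
      push_cast
      linear_combination ((1:ℝ)/3) * hid1 s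
    have hdiff : Differentiable ℝ g := fun s => (hder s).differentiableAt
    have hconst : ∀ x y, g x = g y :=
      fun x y => is_const_of_deriv_eq_zero hdiff (fun t => (hder t).deriv) x y
    have hlim : Filter.Tendsto g Filter.atTop (nhds 0) := by
      have l1 := (tu11.add (tsu00.const_mul (1/3))).sub
        ((((tu00.pow 3).sub ((tu00.mul (tq.pow 2)).const_mul 3)).sub
          ((tq.mul tq').const_mul 2)).const_mul (1/3))
      norm_num at l1
      exact l1
    intro s
    have h1 : Filter.Tendsto g Filter.atTop (nhds (g s)) := by
      have he : g = fun _ => g s := funext fun x => hconst x s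
      rw [he]; exact tendsto_const_nhds
    have h0 : g s = 0 := tendsto_nhds_unique h1 hlim
    rw [hg] at h0; simp only at h0; linarith
  -- derivatives of F
  have hA : ∀ s : ℝ, HasDerivAt (fun t => ∫ x in Set.Ioi t, x * q x ^ 2) (-(s * q s ^ 2)) s :=
    fun s => hasDerivAt_integral_Ioi _ (continuous_id.mul (hqc.pow 2)) hint_xq2 s
  have hv : ∀ s : ℝ, (∫ x in Set.Ioi s, (x - s) * q x ^ 2)
      = (∫ x in Set.Ioi s, x * q x ^ 2) - s * u00 s := by
    intro s
    rw [hu00 s]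
    simp only [sub_mul]
    rw [MeasureTheory.integral_sub (hint_xq2 s) ((hint_q2 s).const_mul s),
      MeasureTheory.integral_const_mul]
  have hFd : ∀ s : ℝ, HasDerivAt F (u00 s * F s) s := by
    intro s
    have hFe : F = fun t => Real.exp (-((∫ x in Set.Ioi t, x * q x ^ 2) - t * u00 t)) :=
      funext fun t => by rw [hF t, hv t]
    have hinner : HasDerivAt (fun t => -((∫ x in Set.Ioi t, x * q x ^ 2) - t * u00 t))
        (u00 s) s := by
      have := ((hA s).sub ((hasDerivAt_id s).mul (hu00d s))).neg
      refine this.congr_deriv ?_; simp only [id_eq]; ring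
    have hE := hinner.exp
    rw [hFe]
    convert hE using 1
    simp [mul_comm]
  have hF'pt : ∀ s, deriv F s = u00 s * F s := fun s => (hFd s).deriv
  have hF' : deriv F = fun s => u00 s * F s := funext hF'pt
  have hFd2 : ∀ s : ℝ, HasDerivAt (deriv F) ((u00 s ^ 2 - q s ^ 2) * F s) s := by
    intro s; rw [hF']
    have := (hu00d s).mul (hFd s)
    refine this.congr_deriv ?_; ring
  have hF'' : deriv (deriv F) = fun s => (u00 s ^ 2 - q s ^ 2) * F s :=
    funext fun s => (hFd2 s).deriv
  have hFd3 : ∀ s : ℝ, HasDerivAt (deriv (deriv F))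
      ((u00 s ^ 3 - 3 * u00 s * q s ^ 2 - 2 * q s * deriv q s) * F s) s := by
    intro s; rw [hF'']
    have h1 : HasDerivAt (fun t => u00 t ^ 2 - q t ^ 2)
        ((2:ℕ) * u00 s ^ 1 * (-(q s ^ 2)) - (2:ℕ) * q s ^ 1 * deriv q s) s :=
      ((hu00d s).pow 2).sub ((hqd s).pow 2)
    have := h1.mul (hFd s)
    refine this.congr_deriv ?_
    push_cast; ring
  intro s
  have h3 : iteratedDeriv 3 F s
      = (u00 s ^ 3 - 3 * u00 s * q s ^ 2 - 2 * q s * deriv q s) * F s := by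
    have he : iteratedDeriv 3 F = deriv (deriv (deriv F)) := by
      rw [show (3:ℕ) = 2+1 by norm_num, iteratedDeriv_succ,
        show (2:ℕ) = 1+1 by norm_num, iteratedDeriv_succ, iteratedDeriv_one]
    rw [he, (hFd3 s).deriv]
  rw [h3, hF'pt s]
  linear_combination F s * hid2 s
end

section
/- Let q : ℝ → ℝ be twice continuously differentiable, satisfy the Painlevé II equation q''(s) = s·q(s) + 2·q(s)³ for all s ∈ ℝ, and satisfy the decay bound: there is a constant C with |q(s)| ≤ C·e^{−s} and |q'(s)| ≤ C·e^{−s} for all s ≥ 0. Define F(s) := exp(−∫_s^∞ (x−s)·q(x)² dx), u₀₀(s) := ∫_s^∞ q(x)² dx, q₁ := q' + u₀₀·q, u₁₀(s) := ∫_s^∞ q₁(x)·q(x) dx, q₂(s) := s·q(s) − u₁₀(s)·q(s) + u₀₀(s)·q₁(s), and u₂₀(s) := ∫_s^∞ q₂(x)·q(x) dx. Then for every s ∈ ℝ, F(s)·u₂₀(s) = (s/3)·F'(s) + (1/6)·F'''(s). -/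
open MeasureTheory Set Filter Real Topology

/-- Splitting an integral over `Ioi t`. -/
lemma FU20.split (f : ℝ → ℝ) (hf : Continuous f)
    (hint : ∀ a : ℝ, IntegrableOn f (Set.Ioi a)) (t : ℝ) :
    (∫ x in Set.Ioi t, f x) = (∫ x in Set.Ioi (0:ℝ), f x) - ∫ x in (0:ℝ)..t, f x := by
  rcases le_or_gt 0 t with h | h
  · have hs : Set.Ioc (0:ℝ) t ∪ Set.Ioi t = Set.Ioi 0 := Set.Ioc_union_Ioi_eq_Ioi h
    have hu := setIntegral_union (μ := volume) (f := f) (Set.Ioc_disjoint_Ioi le_rfl)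
      measurableSet_Ioi ((hint 0).mono_set Set.Ioc_subset_Ioi_self) (hint t)
    rw [hs] at hu
    rw [intervalIntegral.integral_of_le h]
    linarith
  · have hs : Set.Ioc t (0:ℝ) ∪ Set.Ioi 0 = Set.Ioi t := Set.Ioc_union_Ioi_eq_Ioi h.le
    have hu := setIntegral_union (μ := volume) (f := f) (Set.Ioc_disjoint_Ioi le_rfl)
      measurableSet_Ioi ((hint t).mono_set Set.Ioc_subset_Ioi_self) (hint 0)
    rw [hs] at hu
    rw [intervalIntegral.integral_symm, intervalIntegral.integral_of_le h.le]
    linarith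

lemma FU20.hasDerivAt_int (f : ℝ → ℝ) (hf : Continuous f)
    (hint : ∀ a : ℝ, IntegrableOn f (Set.Ioi a)) (s : ℝ) :
    HasDerivAt (fun t => ∫ x in Set.Ioi t, f x) (-f s) s := by
  have h1 : HasDerivAt (fun t => ∫ x in (0:ℝ)..t, f x) (f s) s :=
    intervalIntegral.integral_hasDerivAt_right (hf.intervalIntegrable _ _)
      (hf.stronglyMeasurableAtFilter _ _) hf.continuousAt
  have h2 := (hasDerivAt_const s (∫ x in Set.Ioi (0:ℝ), f x)).sub h1
  rw [zero_sub] at h2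
  exact h2.congr_of_eventuallyEq (Filter.Eventually.of_forall fun t => FU20.split f hf hint t)

lemma FU20.tendsto_int (f : ℝ → ℝ) (hf : Continuous f)
    (hint : ∀ a : ℝ, IntegrableOn f (Set.Ioi a)) :
    Tendsto (fun t => ∫ x in Set.Ioi t, f x) atTop (𝓝 0) := by
  have h := intervalIntegral_tendsto_integral_Ioi 0 (hint 0) tendsto_id
  have h2 : Tendsto (fun t => (∫ x in Set.Ioi (0:ℝ), f x) - ∫ x in (0:ℝ)..t, f x) atTop
      (𝓝 ((∫ x in Set.Ioi (0:ℝ), f x) - ∫ x in Set.Ioi (0:ℝ), f x)) :=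
    tendsto_const_nhds.sub h
  rw [sub_self] at h2
  exact h2.congr fun t => (FU20.split f hf hint t).symm

lemma FU20.eq_of_deriv (f g φ : ℝ → ℝ)
    (hf : ∀ x, HasDerivAt f (φ x) x) (hg : ∀ x, HasDerivAt g (φ x) x)
    (h : Tendsto (fun x => f x - g x) atTop (𝓝 0)) (x : ℝ) : f x = g x := by
  have hd : ∀ y : ℝ, HasDerivAt (fun x => f x - g x) 0 y := fun y => by
    have h := (hf y).sub (hg y); rw [sub_self] at h; exact h
  have hc : ∀ y z : ℝ, f y - g y = f z - g z := fun y z =>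
    is_const_of_deriv_eq_zero (fun t => (hd t).differentiableAt)
      (fun t => (hd t).deriv) y z
  have h0 : Tendsto (fun _ : ℝ => f x - g x) atTop (𝓝 0) :=
    h.congr fun y => (hc y x)
  have := tendsto_nhds_unique h0 tendsto_const_nhds
  linarith

lemma FU20.integrableOn_of_bound (f : ℝ → ℝ) (hf : Continuous f) (D : ℝ)
    (h : ∀ x : ℝ, 0 ≤ x → |f x| ≤ D * Real.exp (-x)) (a : ℝ) :
    IntegrableOn f (Set.Ioi a) := by
  have h1 : IntegrableOn f (Set.Ioc a 0) := hf.integrableOn_Ioc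
  have h2 : IntegrableOn f (Set.Ioi 0) := by
    have hexp : IntegrableOn (fun x => D * Real.exp (-x)) (Set.Ioi (0:ℝ)) := by
      have := (exp_neg_integrableOn_Ioi (0:ℝ) (zero_lt_one)).const_mul D
      simp only [neg_mul, one_mul] at this; exact this
    refine hexp.mono' hf.aestronglyMeasurable.restrict ?_
    filter_upwards [ae_restrict_mem measurableSet_Ioi] with x hx
    simpa [Real.norm_eq_abs] using h x (le_of_lt hx)
  refine (h1.union h2).mono_set fun x hx => ?_
  rcases le_or_gt x 0 with h0 | h0
  · exact Or.inl ⟨hx, h0⟩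
  · exact Or.inr h0

/-- The table identity `u₂₀·F = (s/3)·F' + (1/6)·F'''`, where
`F(s) = exp(-∫_s^∞ (x-s) q(x)² dx)`, `u₀₀(s) = ∫_s^∞ q(x)² dx`, `q₁ = q' + u₀₀·q`,
`u₁₀(s) = ∫_s^∞ q₁(x) q(x) dx`, `q₂ = s·q - u₁₀·q + u₀₀·q₁`,
`u₂₀(s) = ∫_s^∞ q₂(x) q(x) dx`, and `q` is a Painlevé II solution with
exponential decay at `+∞`. -/
theorem F_u20_eq (q F u00 q1 u10 q2 u20 : ℝ → ℝ) (hq : ContDiff ℝ 2 q)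
    (hP2 : ∀ s : ℝ, iteratedDeriv 2 q s = s * q s + 2 * q s ^ 3)
    (C : ℝ)
    (hdecay : ∀ s : ℝ, 0 ≤ s →
      |q s| ≤ C * Real.exp (-s) ∧ |deriv q s| ≤ C * Real.exp (-s))
    (hF : ∀ s : ℝ, F s = Real.exp (-(∫ x in Set.Ioi s, (x - s) * q x ^ 2)))
    (hu00 : ∀ s : ℝ, u00 s = ∫ x in Set.Ioi s, q x ^ 2)
    (hq1 : ∀ s : ℝ, q1 s = deriv q s + u00 s * q s)
    (hu10 : ∀ s : ℝ, u10 s = ∫ x in Set.Ioi s, q1 x * q x)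
    (hq2 : ∀ s : ℝ, q2 s = s * q s - u10 s * q s + u00 s * q1 s)
    (hu20 : ∀ s : ℝ, u20 s = ∫ x in Set.Ioi s, q2 x * q x) :
    ∀ s : ℝ, F s * u20 s = (s / 3) * deriv F s + (1 / 6) * iteratedDeriv 3 F s := by
  -- basic regularity of q
  have hqc : Continuous q := hq.continuous
  have hqd : Differentiable ℝ q := hq.differentiable (by norm_num)
  have hqD : ∀ s : ℝ, HasDerivAt q (deriv q s) s := fun s => (hqd s).hasDerivAt
  have hdqc : Continuous (deriv q) := hq.continuous_deriv one_le_two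
  have hq11 : ContDiff ℝ (1 + 1) q := hq
  have hddq : Differentiable ℝ (deriv q) :=
    (contDiff_succ_iff_deriv.mp hq11).2.2.differentiable (by norm_num)
  have hqDD : ∀ s : ℝ, HasDerivAt (deriv q) (s * q s + 2 * q s ^ 3) s := fun s => by
    have h := (hddq s).hasDerivAt
    rwa [show deriv (deriv q) s = s * q s + 2 * q s ^ 3 from by
      rw [← hP2 s, iteratedDeriv_succ, iteratedDeriv_one]] at h
  -- positivity of C and exp facts
  have hC0 : 0 ≤ C := by
    have h := (hdecay 0 le_rfl).1
    have h2 := abs_nonneg (q 0)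
    simp only [neg_zero, Real.exp_zero, mul_one] at h
    linarith
  have hE0 : ∀ x : ℝ, (0:ℝ) < Real.exp (-x) := fun x => Real.exp_pos _
  have hE1 : ∀ x : ℝ, 0 ≤ x → Real.exp (-x) ≤ 1 := fun x hx =>
    Real.exp_le_one_iff.mpr (by linarith)
  have hxE : ∀ x : ℝ, 0 ≤ x → x * Real.exp (-x) ≤ 1 := fun x hx => by
    have h := Real.add_one_le_exp x
    have h2 : x * Real.exp (-x) ≤ Real.exp x * Real.exp (-x) :=
      mul_le_mul_of_nonneg_right (by linarith) (hE0 x).le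
    rwa [← Real.exp_add, add_neg_cancel, Real.exp_zero] at h2
  -- integrability of q^2
  have hbq2 : ∀ x : ℝ, 0 ≤ x → |q x ^ 2| ≤ C ^ 2 * Real.exp (-x) := by
    intro x hx
    have h := (hdecay x hx).1
    have h2 : |q x| ^ 2 ≤ (C * Real.exp (-x)) ^ 2 := pow_le_pow_left₀ (abs_nonneg _) h 2
    have h3 := hE1 x hx
    have h4 := (hE0 x).le
    rw [abs_pow]
    nlinarith [h2, mul_nonneg (mul_nonneg (sq_nonneg C) h4) (by linarith : (0:ℝ) ≤ 1 - Real.exp (-x))]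
  have hIq2 : ∀ a : ℝ, IntegrableOn (fun x => q x ^ 2) (Set.Ioi a) :=
    FU20.integrableOn_of_bound _ (hqc.pow 2) (C ^ 2) hbq2
  -- u00 facts
  have e00 : u00 = fun s => ∫ x in Set.Ioi s, q x ^ 2 := funext hu00
  have hu00D : ∀ s : ℝ, HasDerivAt u00 (-(q s ^ 2)) s := fun s => by
    rw [e00]; exact FU20.hasDerivAt_int _ (hqc.pow 2) hIq2 s
  have hu00c : Continuous u00 := by
    have : Differentiable ℝ u00 := fun s => (hu00D s).differentiableAt
    exact this.continuous
  have tendu00 : Filter.Tendsto u00 Filter.atTop (nhds 0) := by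
    rw [e00]; exact FU20.tendsto_int _ (hqc.pow 2) hIq2
  have hu00nn : ∀ x : ℝ, 0 ≤ u00 x := fun x => by
    rw [hu00 x]
    exact setIntegral_nonneg measurableSet_Ioi fun t _ => sq_nonneg (q t)
  have hIexp : ∀ a : ℝ, IntegrableOn (fun x => C ^ 2 * Real.exp (-x)) (Set.Ioi a) := by
    intro a
    have h := (exp_neg_integrableOn_Ioi a zero_lt_one).const_mul (C ^ 2)
    simp only [neg_mul, one_mul] at h; exact h
  have hu00b : ∀ x : ℝ, 0 ≤ x → u00 x ≤ C ^ 2 * Real.exp (-x) := by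
    intro x hx
    rw [hu00 x]
    have hmono : (∫ t in Set.Ioi x, q t ^ 2) ≤ ∫ t in Set.Ioi x, C ^ 2 * Real.exp (-t) := by
      refine setIntegral_mono_on (hIq2 x) (hIexp x) measurableSet_Ioi fun t ht => ?_
      have := hbq2 t (le_trans hx (le_of_lt ht))
      exact (le_abs_self _).trans this
    have hcalc : (∫ t in Set.Ioi x, C ^ 2 * Real.exp (-t)) = C ^ 2 * Real.exp (-x) := by
      rw [MeasureTheory.integral_const_mul, integral_exp_neg_Ioi]
    linarith
  have hu00C2 : ∀ x : ℝ, 0 ≤ x → u00 x ≤ C ^ 2 := fun x hx => by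
    have h1 := hu00b x hx
    have h2 := hE1 x hx
    nlinarith [sq_nonneg C]
  -- limits of q, deriv q
  have tendq : Filter.Tendsto q Filter.atTop (nhds 0) := by
    refine squeeze_zero_norm' ?_ (by simpa using tendsto_exp_neg_atTop_nhds_zero.const_mul C)
    filter_upwards [Filter.eventually_ge_atTop (0:ℝ)] with s hs
    simpa [Real.norm_eq_abs] using (hdecay s hs).1
  have tendq' : Filter.Tendsto (deriv q) Filter.atTop (nhds 0) := by
    refine squeeze_zero_norm' ?_ (by simpa using tendsto_exp_neg_atTop_nhds_zero.const_mul C)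
    filter_upwards [Filter.eventually_ge_atTop (0:ℝ)] with s hs
    simpa [Real.norm_eq_abs] using (hdecay s hs).2
  have tendmulexp : Filter.Tendsto (fun s : ℝ => C ^ 2 * (s * Real.exp (-s)))
      Filter.atTop (nhds 0) := by
    have := (tendsto_pow_mul_exp_neg_atTop_nhds_zero 1).const_mul (C ^ 2)
    simpa using this
  have tendsq2 : Filter.Tendsto (fun s : ℝ => s * q s ^ 2) Filter.atTop (nhds 0) := by
    refine squeeze_zero_norm' ?_ tendmulexp
    filter_upwards [Filter.eventually_ge_atTop (0:ℝ)] with s hs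
    have h := (hdecay s hs).1
    have h2 : |q s| ^ 2 ≤ (C * Real.exp (-s)) ^ 2 := pow_le_pow_left₀ (abs_nonneg _) h 2
    have h3 := hE1 s hs
    have h4 := (hE0 s).le
    rw [Real.norm_eq_abs, abs_mul, abs_of_nonneg hs, abs_pow]
    nlinarith [mul_nonneg (mul_nonneg (sq_nonneg C) hs) h4, sq_nonneg C,
      mul_nonneg hs (sq_nonneg (q s))]
  have tendsu : Filter.Tendsto (fun s : ℝ => s * u00 s) Filter.atTop (nhds 0) := by
    refine squeeze_zero_norm' ?_ tendmulexp
    filter_upwards [Filter.eventually_ge_atTop (0:ℝ)] with s hs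
    have h1 := hu00b s hs
    have h2 := hu00nn s
    rw [Real.norm_eq_abs, abs_mul, abs_of_nonneg hs, abs_of_nonneg h2]
    nlinarith
  -- first identity : u00 = (q')^2 - s q^2 - q^4
  have hfirst : ∀ s : ℝ, u00 s = (deriv q s) ^ 2 - s * q s ^ 2 - q s ^ 4 := by
    refine fun s => FU20.eq_of_deriv u00
      (fun s => (deriv q s) ^ 2 - s * q s ^ 2 - q s ^ 4)
      (fun s => -(q s ^ 2)) hu00D (fun x => ?_) ?_ s
    · have h1 := (hqDD x).pow 2
      have h2 := (hasDerivAt_id x).mul ((hqD x).pow 2)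
      have h3 := (hqD x).pow 4
      have h := (h1.sub h2).sub h3
      refine h.congr_deriv ?_
      simp only [id_eq, Pi.pow_apply]
      push_cast
      ring
    · have t1 : Filter.Tendsto (fun s : ℝ => (deriv q s) ^ 2) Filter.atTop (nhds 0) := by
        simpa using tendq'.pow 2
      have t3 : Filter.Tendsto (fun s : ℝ => q s ^ 4) Filter.atTop (nhds 0) := by
        simpa using tendq.pow 4
      have := tendu00.sub ((t1.sub tendsq2).sub t3)
      simpa using this
  -- q1 facts
  have eq1 : q1 = fun s => deriv q s + u00 s * q s := funext hq1
  have hq1c : Continuous q1 := by rw [eq1]; exact hdqc.add (hu00c.mul hqc)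
  have hq1b : ∀ x : ℝ, 0 ≤ x → |q1 x| ≤ (1 + C ^ 2) * (C * Real.exp (-x)) := by
    intro x hx
    have hqb := (hdecay x hx).1
    have hub := hu00C2 x hx
    have h1 : |u00 x * q x| ≤ C ^ 2 * (C * Real.exp (-x)) := by
      rw [abs_mul, abs_of_nonneg (hu00nn x)]
      exact mul_le_mul hub hqb (abs_nonneg _) (sq_nonneg C)
    calc |q1 x| = |deriv q x + u00 x * q x| := by rw [hq1 x]
      _ ≤ |deriv q x| + |u00 x * q x| := abs_add_le _ _
      _ ≤ C * Real.exp (-x) + C ^ 2 * (C * Real.exp (-x)) := add_le_add (hdecay x hx).2 h1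
      _ = (1 + C ^ 2) * (C * Real.exp (-x)) := by ring
  have hbq1q : ∀ x : ℝ, 0 ≤ x → |q1 x * q x| ≤ ((1 + C ^ 2) * C ^ 2) * Real.exp (-x) := by
    intro x hx
    have h1 := hq1b x hx
    have h2 := (hdecay x hx).1
    have h3 := hE1 x hx
    have h4 := (hE0 x).le
    rw [abs_mul]
    have h5 : |q1 x| * |q x| ≤ ((1 + C ^ 2) * (C * Real.exp (-x))) * (C * Real.exp (-x)) :=
      mul_le_mul h1 h2 (abs_nonneg _) (by positivity)
    nlinarith [h5, mul_nonneg (mul_nonneg (by positivity : (0:ℝ) ≤ (1 + C ^ 2) * C ^ 2) h4) (by linarith : (0:ℝ) ≤ 1 - Real.exp (-x))]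
  have hIq1q : ∀ a : ℝ, IntegrableOn (fun x => q1 x * q x) (Set.Ioi a) :=
    FU20.integrableOn_of_bound _ (hq1c.mul hqc) _ hbq1q
  -- u10 facts
  have e10 : u10 = fun s => ∫ x in Set.Ioi s, q1 x * q x := funext hu10
  have hu10D : ∀ s : ℝ, HasDerivAt u10 (-(q1 s * q s)) s := fun s => by
    rw [e10]; exact FU20.hasDerivAt_int _ (hq1c.mul hqc) hIq1q s
  have hu10c : Continuous u10 := by
    have : Differentiable ℝ u10 := fun s => (hu10D s).differentiableAt
    exact this.continuous
  have tendu10 : Filter.Tendsto u10 Filter.atTop (nhds 0) := by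
    rw [e10]; exact FU20.tendsto_int _ (hq1c.mul hqc) hIq1q
  -- second identity : u10 = u00^2/2 - q^2/2
  have hsec : ∀ s : ℝ, u10 s = u00 s ^ 2 / 2 - q s ^ 2 / 2 := by
    refine fun s => FU20.eq_of_deriv u10 (fun s => u00 s ^ 2 / 2 - q s ^ 2 / 2)
      (fun s => -(q1 s * q s)) hu10D (fun x => ?_) ?_ s
    · have h := (((hu00D x).pow 2).div_const 2).sub (((hqD x).pow 2).div_const 2)
      refine h.congr_deriv ?_
      simp only [hq1]
      push_cast
      ring
    · have t1 : Filter.Tendsto (fun s : ℝ => u00 s ^ 2 / 2 - q s ^ 2 / 2)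
          Filter.atTop (nhds 0) := by
        have := ((tendu00.pow 2).div_const 2).sub ((tendq.pow 2).div_const 2)
        simpa using this
      simpa using tendu10.sub t1
  have hu10b : ∀ x : ℝ, 0 ≤ x → |u10 x| ≤ (C ^ 4 + C ^ 2) / 2 := by
    intro x hx
    have h1 := hu00C2 x hx
    have h2 := (hdecay x hx).1
    have h3 := hE1 x hx
    have h4 := (hE0 x).le
    have h5 : |q x| ^ 2 ≤ (C * Real.exp (-x)) ^ 2 := pow_le_pow_left₀ (abs_nonneg _) h2 2
    have h6 : (C * Real.exp (-x)) ^ 2 ≤ C ^ 2 := by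
      nlinarith [mul_nonneg (mul_nonneg (sq_nonneg C) (by linarith : (0:ℝ) ≤ 1 - Real.exp (-x))) (by linarith : (0:ℝ) ≤ 1 + Real.exp (-x))]
    have hq2b : q x ^ 2 ≤ C ^ 2 := by
      have := sq_abs (q x)
      linarith
    have hu2b : u00 x ^ 2 ≤ C ^ 4 := by nlinarith [hu00nn x]
    rw [hsec x, abs_le]
    constructor
    · nlinarith [sq_nonneg (u00 x), sq_nonneg (q x)]
    · nlinarith [sq_nonneg (u00 x), sq_nonneg (q x)]
  -- q2, u20 facts
  have eq2 : q2 = fun s => s * q s - u10 s * q s + u00 s * q1 s := funext hq2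
  have hq2c : Continuous q2 := by
    rw [eq2]
    exact ((continuous_id.mul hqc).sub (hu10c.mul hqc)).add (hu00c.mul hq1c)
  have hbq2q : ∀ x : ℝ, 0 ≤ x →
      |q2 x * q x| ≤ ((1 + ((C ^ 4 + C ^ 2) / 2 + C ^ 2 * (1 + C ^ 2))) * C ^ 2) *
        Real.exp (-x) := by
    intro x hx
    set E := Real.exp (-x) with hE
    set A : ℝ := (C ^ 4 + C ^ 2) / 2 + C ^ 2 * (1 + C ^ 2) with hA
    have hA0 : 0 ≤ A := by positivity
    have hqb := (hdecay x hx).1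
    have hub := hu00C2 x hx
    have h10 := hu10b x hx
    have h1b := hq1b x hx
    have hE1' : E ≤ 1 := hE1 x hx
    have hE0' : (0:ℝ) ≤ E := (hE0 x).le
    have hxE' : x * E ≤ 1 := hxE x hx
    have t1 : |x * q x| ≤ x * (C * E) := by
      rw [abs_mul, abs_of_nonneg hx]
      exact mul_le_mul_of_nonneg_left hqb hx
    have t2 : |u10 x * q x| ≤ (C ^ 4 + C ^ 2) / 2 * (C * E) := by
      rw [abs_mul]
      exact mul_le_mul h10 hqb (abs_nonneg _) (by positivity)
    have t3 : |u00 x * q1 x| ≤ C ^ 2 * ((1 + C ^ 2) * (C * E)) := by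
      rw [abs_mul, abs_of_nonneg (hu00nn x)]
      exact mul_le_mul hub h1b (abs_nonneg _) (sq_nonneg C)
    have hq2b : |q2 x| ≤ (x + A) * (C * E) := by
      rw [hq2 x]
      calc |x * q x - u10 x * q x + u00 x * q1 x|
          ≤ |x * q x - u10 x * q x| + |u00 x * q1 x| := abs_add_le _ _
        _ ≤ |x * q x| + |u10 x * q x| + |u00 x * q1 x| := by
            have := abs_sub (x * q x) (u10 x * q x)
            linarith
        _ ≤ x * (C * E) + (C ^ 4 + C ^ 2) / 2 * (C * E) + C ^ 2 * ((1 + C ^ 2) * (C * E)) :=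
            by linarith
        _ = (x + A) * (C * E) := by rw [hA]; ring
    have hfin : |q2 x * q x| ≤ ((x + A) * (C * E)) * (C * E) := by
      rw [abs_mul]
      exact mul_le_mul hq2b hqb (abs_nonneg _)
        (mul_nonneg (by linarith) (mul_nonneg hC0 hE0'))
    have hlast : ((x + A) * (C * E)) * (C * E) ≤ ((1 + A) * C ^ 2) * E := by
      have h2a : A * E ≤ A := mul_le_of_le_one_right hA0 hE1'
      have h2 : x * E + A * E ≤ 1 + A := by linarith
      calc ((x + A) * (C * E)) * (C * E) = (C ^ 2 * E) * (x * E + A * E) := by ring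
        _ ≤ (C ^ 2 * E) * (1 + A) :=
            mul_le_mul_of_nonneg_left h2 (mul_nonneg (sq_nonneg C) hE0')
        _ = ((1 + A) * C ^ 2) * E := by ring
    calc |q2 x * q x| ≤ ((x + A) * (C * E)) * (C * E) := hfin
      _ ≤ ((1 + A) * C ^ 2) * E := hlast
  have hIq2q : ∀ a : ℝ, IntegrableOn (fun x => q2 x * q x) (Set.Ioi a) :=
    FU20.integrableOn_of_bound _ (hq2c.mul hqc) _ hbq2q
  have e20 : u20 = fun s => ∫ x in Set.Ioi s, q2 x * q x := funext hu20
  have hu20D : ∀ s : ℝ, HasDerivAt u20 (-(q2 s * q s)) s := fun s => by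
    rw [e20]; exact FU20.hasDerivAt_int _ (hq2c.mul hqc) hIq2q s
  have tendu20 : Filter.Tendsto u20 Filter.atTop (nhds 0) := by
    rw [e20]; exact FU20.tendsto_int _ (hq2c.mul hqc) hIq2q
  -- third identity
  have hthird : ∀ s : ℝ, u20 s =
      s / 3 * u00 s + 1 / 6 * u00 s ^ 3 - 1 / 2 * (q s ^ 2 * u00 s)
        - 1 / 3 * (q s * deriv q s) := by
    refine fun s => FU20.eq_of_deriv u20
      (fun s => s / 3 * u00 s + 1 / 6 * u00 s ^ 3 - 1 / 2 * (q s ^ 2 * u00 s)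
        - 1 / 3 * (q s * deriv q s))
      (fun s => -(q2 s * q s)) hu20D (fun x => ?_) ?_ s
    · have t1 := ((hasDerivAt_id x).div_const 3).mul (hu00D x)
      have t2 := ((hu00D x).pow 3).const_mul (1 / 6 : ℝ)
      have t3 := (((hqD x).pow 2).mul (hu00D x)).const_mul (1 / 2 : ℝ)
      have t4 := ((hqD x).mul (hqDD x)).const_mul (1 / 3 : ℝ)
      have h := ((t1.add t2).sub t3).sub t4
      refine h.congr_deriv ?_
      simp only [hq2, hq1, hsec, hfirst, id_eq, Pi.pow_apply]
      push_cast
      ring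
    · have t1 : Filter.Tendsto (fun s : ℝ => s / 3 * u00 s) Filter.atTop (nhds 0) := by
        have h := tendsu.div_const 3
        rw [zero_div] at h
        exact h.congr fun s => by ring
      have t2 : Filter.Tendsto (fun s : ℝ => 1 / 6 * u00 s ^ 3) Filter.atTop (nhds 0) := by
        have := (tendu00.pow 3).const_mul (1 / 6 : ℝ)
        simpa using this
      have t3 : Filter.Tendsto (fun s : ℝ => 1 / 2 * (q s ^ 2 * u00 s))
          Filter.atTop (nhds 0) := by
        have := ((tendq.pow 2).mul tendu00).const_mul (1 / 2 : ℝ)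
        simp only [mul_zero, zero_mul] at this ⊢
        exact this.congr fun s => by ring
      have t4 : Filter.Tendsto (fun s : ℝ => 1 / 3 * (q s * deriv q s))
          Filter.atTop (nhds 0) := by
        have := (tendq.mul tendq').const_mul (1 / 3 : ℝ)
        simpa using this
      have := tendu20.sub (((t1.add t2).sub t3).sub t4)
      simpa using this
  -- integrability of x * q^2 and the F derivatives
  have hbxq2 : ∀ x : ℝ, 0 ≤ x → |x * q x ^ 2| ≤ C ^ 2 * Real.exp (-x) := by
    intro x hx
    have h := hbq2 x hx
    have h2 := hxE x hx
    have h3 := (hE0 x).le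
    rw [abs_mul, abs_of_nonneg hx]
    have h6 : |q x ^ 2| ≤ (C * Real.exp (-x)) ^ 2 := by
      rw [abs_pow]
      exact pow_le_pow_left₀ (abs_nonneg _) (hdecay x hx).1 2
    calc x * |q x ^ 2| ≤ x * (C * Real.exp (-x)) ^ 2 :=
          mul_le_mul_of_nonneg_left h6 hx
      _ = C ^ 2 * ((x * Real.exp (-x)) * Real.exp (-x)) := by ring
      _ ≤ C ^ 2 * (1 * Real.exp (-x)) := by
          refine mul_le_mul_of_nonneg_left ?_ (sq_nonneg C)
          exact mul_le_mul_of_nonneg_right h2 h3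
      _ = C ^ 2 * Real.exp (-x) := by ring
  have hIxq2 : ∀ a : ℝ, IntegrableOn (fun x => x * q x ^ 2) (Set.Ioi a) :=
    FU20.integrableOn_of_bound _ (continuous_id.mul (hqc.pow 2)) _ hbxq2
  have hIsplit : ∀ t : ℝ, (∫ x in Set.Ioi t, (x - t) * q x ^ 2)
      = (∫ x in Set.Ioi t, x * q x ^ 2) - t * u00 t := by
    intro t
    rw [hu00 t, ← MeasureTheory.integral_const_mul,
      ← MeasureTheory.integral_sub (hIxq2 t) ((hIq2 t).const_mul t)]
    congr 1
    ext x
    ring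
  have hFD : ∀ s : ℝ, HasDerivAt F (u00 s * F s) s := by
    intro s
    have hA : HasDerivAt (fun t => ∫ x in Set.Ioi t, x * q x ^ 2) (-(s * q s ^ 2)) s := by
      have := FU20.hasDerivAt_int _ (continuous_id.mul (hqc.pow 2)) hIxq2 s
      simpa using this
    have hB : HasDerivAt (fun t : ℝ => t * u00 t) (1 * u00 s + s * -(q s ^ 2)) s :=
      (hasDerivAt_id s).mul (hu00D s)
    have hC' : HasDerivAt (fun t : ℝ => (∫ x in Set.Ioi t, x * q x ^ 2) - t * u00 t)
        (-(u00 s)) s := by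
      have := hA.sub hB
      refine this.congr_deriv ?_
      ring
    have hI : HasDerivAt (fun t : ℝ => ∫ x in Set.Ioi t, (x - t) * q x ^ 2)
        (-(u00 s)) s :=
      hC'.congr_of_eventuallyEq (Filter.Eventually.of_forall fun t => hIsplit t)
    have hexp := hI.neg.exp
    have : HasDerivAt F (Real.exp (-(∫ x in Set.Ioi s, (x - s) * q x ^ 2)) * u00 s) s := by
      rw [funext hF]
      simpa using hexp
    rw [← hF s] at this
    simpa [mul_comm] using this
  have hF' : deriv F = fun s => u00 s * F s := funext fun s => (hFD s).deriv
  have hFD2 : ∀ s : ℝ, HasDerivAt (deriv F) ((u00 s ^ 2 - q s ^ 2) * F s) s := by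
    intro s
    rw [hF']
    have := (hu00D s).mul (hFD s)
    refine this.congr_deriv ?_
    ring
  have hF2 : deriv (deriv F) = fun s => (u00 s ^ 2 - q s ^ 2) * F s :=
    funext fun s => (hFD2 s).deriv
  have hFD3 : ∀ s : ℝ, HasDerivAt (deriv (deriv F))
      ((u00 s ^ 3 - 3 * u00 s * q s ^ 2 - 2 * q s * deriv q s) * F s) s := by
    intro s
    rw [hF2]
    have h1 := ((hu00D s).pow 2).sub ((hqD s).pow 2)
    have := h1.mul (hFD s)
    refine this.congr_deriv ?_
    simp only [Pi.sub_apply, Pi.pow_apply]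
    push_cast
    ring
  -- conclusion
  intro s
  have hder : deriv F s = u00 s * F s := (hFD s).deriv
  have hit3 : iteratedDeriv 3 F s
      = (u00 s ^ 3 - 3 * u00 s * q s ^ 2 - 2 * q s * deriv q s) * F s := by
    rw [show (3:ℕ) = 2 + 1 from rfl, iteratedDeriv_succ,
      iteratedDeriv_succ, iteratedDeriv_one]
    exact (hFD3 s).deriv
  rw [hder, hit3, hthird s]
  ring
end

section
/- Let q : ℝ → ℝ be twice continuously differentiable, satisfy the Painlevé II equation q''(s) = s·q(s) + 2·q(s)³ for all s ∈ ℝ, and satisfy the decay bound: there is a constant C with |q(s)| ≤ C·e^{−s} and |q'(s)| ≤ C·e^{−s} for all s ≥ 0. Define F(s) := exp(−∫_s^∞ (x−s)·q(x)² dx), u₀₀(s) := ∫_s^∞ q(x)² dx, q₁ := q' + u₀₀·q, u₁₀(s) := ∫_s^∞ q₁(x)·q(x) dx, q₂(s) := s·q(s) − u₁₀(s)·q(s) + u₀₀(s)·q₁(s), and u₂₁(s) := ∫_s^∞ q₂(x)·q₁(x) dx. Then for every s ∈ ℝ, F(s)·u₂₁(s) = −(1/4)·F'(s) + (1/8)·F''''(s).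 -/
open MeasureTheory Set Filter Topology

/-- Integrability on `Ioi s` of a continuous function with exponential decay on `[0,∞)`. -/
lemma tail_integrableOn {f : ℝ → ℝ} (hf : Continuous f) {K : ℝ}
    (hbd : ∀ x : ℝ, 0 ≤ x → |f x| ≤ K * Real.exp (-x)) (s : ℝ) :
    IntegrableOn f (Set.Ioi s) := by
  have h0 : IntegrableOn f (Set.Ioi (0:ℝ)) := by
    have hexp : IntegrableOn (fun x => K * Real.exp (-x)) (Set.Ioi (0:ℝ)) := by
      have h := exp_neg_integrableOn_Ioi (0:ℝ) (one_pos)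
      simpa [IntegrableOn] using h.const_mul K
    refine Integrable.mono' hexp (hf.aestronglyMeasurable.restrict) ?_
    refine (ae_restrict_iff' measurableSet_Ioi).2 (ae_of_all _ fun x hx => ?_)
    simpa [Real.norm_eq_abs] using hbd x hx.le
  rcases le_or_gt 0 s with h | h
  · exact h0.mono_set (Set.Ioi_subset_Ioi h)
  · rw [← Set.Ioc_union_Ioi_eq_Ioi h.le]
    exact (hf.integrableOn_Ioc).union h0

/-- Pointwise bound for the tail integral. -/
lemma tail_bound {f : ℝ → ℝ} (hf : Continuous f) {K : ℝ}
    (hbd : ∀ x : ℝ, 0 ≤ x → |f x| ≤ K * Real.exp (-x)) {s : ℝ} (hs : 0 ≤ s) :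
    |∫ x in Set.Ioi s, f x| ≤ K * Real.exp (-s) := by
  have hexp : IntegrableOn (fun x => K * Real.exp (-x)) (Set.Ioi s) := by
    have h := exp_neg_integrableOn_Ioi s (one_pos)
    simpa [IntegrableOn] using h.const_mul K
  have h1 : ‖∫ x in Set.Ioi s, f x‖ ≤ ∫ x in Set.Ioi s, K * Real.exp (-x) := by
    refine norm_integral_le_of_norm_le hexp ?_
    refine (ae_restrict_iff' measurableSet_Ioi).2 (ae_of_all _ fun x hx => ?_)
    simpa [Real.norm_eq_abs] using hbd x (le_trans hs hx.le)
  have h2 : ∫ x in Set.Ioi s, K * Real.exp (-x) = K * Real.exp (-s) := by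
    rw [MeasureTheory.integral_const_mul, integral_exp_neg_Ioi]
  rw [← Real.norm_eq_abs]
  rw [h2] at h1
  exact h1

/-- Tail integrals tend to zero at `+∞`. -/
lemma tail_tendsto {f : ℝ → ℝ} (hf : Continuous f) {K : ℝ}
    (hbd : ∀ x : ℝ, 0 ≤ x → |f x| ≤ K * Real.exp (-x)) :
    Tendsto (fun s => ∫ x in Set.Ioi s, f x) atTop (𝓝 0) := by
  have hK : Tendsto (fun s : ℝ => K * Real.exp (-s)) atTop (𝓝 0) := by
    have := Real.tendsto_exp_neg_atTop_nhds_zero.const_mul K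
    simpa using this
  refine squeeze_zero_norm' ?_ hK
  filter_upwards [eventually_ge_atTop (0:ℝ)] with s hs
  simpa [Real.norm_eq_abs] using tail_bound hf hbd hs

/-- Derivative of the tail integral. -/
lemma tail_hasDerivAt {f : ℝ → ℝ} (hf : Continuous f) {K : ℝ}
    (hbd : ∀ x : ℝ, 0 ≤ x → |f x| ≤ K * Real.exp (-x)) (s : ℝ) :
    HasDerivAt (fun t => ∫ x in Set.Ioi t, f x) (-f s) s := by
  have key : ∀ t : ℝ, ∫ x in Set.Ioi t, f x
      = (∫ x in Set.Ioi (0:ℝ), f x) - ∫ x in (0:ℝ)..t, f x := by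
    intro t
    rcases le_or_gt 0 t with h | h
    · rw [intervalIntegral.integral_of_le h]
      have hsplit : ∫ x in Set.Ioi (0:ℝ), f x
          = (∫ x in Set.Ioc (0:ℝ) t, f x) + ∫ x in Set.Ioi t, f x := by
        rw [← MeasureTheory.setIntegral_union (Set.Ioc_disjoint_Ioi le_rfl)
          measurableSet_Ioi (hf.integrableOn_Ioc) (tail_integrableOn hf hbd t),
          Set.Ioc_union_Ioi_eq_Ioi h]
      linarith
    · rw [intervalIntegral.integral_of_ge h.le]
      have hsplit : ∫ x in Set.Ioi t, f x
          = (∫ x in Set.Ioc t (0:ℝ), f x) + ∫ x in Set.Ioi (0:ℝ), f x := by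
        rw [← MeasureTheory.setIntegral_union (Set.Ioc_disjoint_Ioi le_rfl)
          measurableSet_Ioi (hf.integrableOn_Ioc) (tail_integrableOn hf hbd 0),
          Set.Ioc_union_Ioi_eq_Ioi h.le]
      linarith
    
  have h1 : HasDerivAt (fun t => ∫ x in (0:ℝ)..t, f x) (f s) s :=
    intervalIntegral.integral_hasDerivAt_right (hf.intervalIntegrable _ _)
      (hf.stronglyMeasurableAtFilter _ _) hf.continuousAt
  have h2 := (hasDerivAt_const s (∫ x in Set.Ioi (0:ℝ), f x)).sub h1
  rw [funext key]
  simpa [Pi.sub_def] using h2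

/-- A function with zero derivative everywhere tending to `0` at `+∞` is zero. -/
lemma eq_zero_of_deriv_zero_tendsto {D : ℝ → ℝ} (hD : ∀ x, HasDerivAt D 0 x)
    (hlim : Tendsto D atTop (𝓝 0)) (s : ℝ) : D s = 0 := by
  have hconst : ∀ x : ℝ, D x = D s := fun x =>
    is_const_of_deriv_eq_zero (fun y => (hD y).differentiableAt) (fun y => (hD y).deriv) x s
  have h2 : Tendsto (fun _ : ℝ => D s) atTop (𝓝 0) :=
    hlim.congr fun x => hconst x
  exact (tendsto_const_nhds_iff.mp h2)

lemma bnd_mul {a b A B e : ℝ} (he : 0 < e) (he1 : e ≤ 1) (ha : |a| ≤ A * e) (hb : |b| ≤ B * e) :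
    |a * b| ≤ A * B * e := by
  have hA : 0 ≤ A * e := le_trans (abs_nonneg a) ha
  have hB : 0 ≤ B * e := le_trans (abs_nonneg b) hb
  have h1 : |a| * |b| ≤ (A * e) * (B * e) :=
    mul_le_mul ha hb (abs_nonneg b) hA
  have hA' : 0 ≤ A := by nlinarith
  have hB' : 0 ≤ B := by nlinarith
  rw [abs_mul]
  nlinarith [mul_nonneg (mul_nonneg (mul_nonneg hA' hB') he.le) (sub_nonneg.mpr he1)]

/-- The table identity `u₂₁·F = -(1/4)·F' + (1/8)·F⁽⁴⁾`, where
`F(s) = exp(-∫_s^∞ (x-s) q(x)² dx)`, `u₀₀(s) = ∫_s^∞ q(x)² dx`, `q₁ = q' + u₀₀·q`,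
`u₁₀(s) = ∫_s^∞ q₁(x) q(x) dx`, `q₂ = s·q - u₁₀·q + u₀₀·q₁`,
`u₂₁(s) = ∫_s^∞ q₂(x) q₁(x) dx`, and `q` is a Painlevé II solution with
exponential decay at `+∞`. -/
theorem F_u21_eq (q F u00 q1 u10 q2 u21 : ℝ → ℝ) (hq : ContDiff ℝ 2 q)
    (hP2 : ∀ s : ℝ, iteratedDeriv 2 q s = s * q s + 2 * q s ^ 3)
    (C : ℝ)
    (hdecay : ∀ s : ℝ, 0 ≤ s →
      |q s| ≤ C * Real.exp (-s) ∧ |deriv q s| ≤ C * Real.exp (-s))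
    (hF : ∀ s : ℝ, F s = Real.exp (-(∫ x in Set.Ioi s, (x - s) * q x ^ 2)))
    (hu00 : ∀ s : ℝ, u00 s = ∫ x in Set.Ioi s, q x ^ 2)
    (hq1 : ∀ s : ℝ, q1 s = deriv q s + u00 s * q s)
    (hu10 : ∀ s : ℝ, u10 s = ∫ x in Set.Ioi s, q1 x * q x)
    (hq2 : ∀ s : ℝ, q2 s = s * q s - u10 s * q s + u00 s * q1 s)
    (hu21 : ∀ s : ℝ, u21 s = ∫ x in Set.Ioi s, q2 x * q1 x) :
    ∀ s : ℝ, F s * u21 s = -(1 / 4) * deriv F s + (1 / 8) * iteratedDeriv 4 F s := by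
  -- smoothness of q
  have hdq : Differentiable ℝ q := hq.differentiable (by norm_num)
  have hdq' : Differentiable ℝ (deriv q) := by
    have h2 : ContDiff ℝ (1+1) q := by norm_num; exact hq
    have h3 := (contDiff_succ_iff_deriv.mp h2).2.2
    exact (contDiff_one_iff_deriv.mp h3).1
  have hcq : Continuous q := hq.continuous
  have hcq' : Continuous (deriv q) := hdq'.continuous
  have hqd : ∀ s : ℝ, HasDerivAt q (deriv q s) s := fun s => (hdq s).hasDerivAt
  have hq''d : ∀ s : ℝ, HasDerivAt (deriv q) (s * q s + 2 * q s ^ 3) s := by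
    intro s
    have h := (hdq' s).hasDerivAt
    have h2 : deriv (deriv q) s = s * q s + 2 * q s ^ 3 := by
      rw [← hP2 s, show (2:ℕ) = 1+1 from rfl, iteratedDeriv_succ, iteratedDeriv_one]
    rwa [h2] at h
  -- constants and elementary bounds
  have bq : ∀ x : ℝ, 0 ≤ x → |q x| ≤ C * Real.exp (-x) := fun x hx => (hdecay x hx).1
  have bq' : ∀ x : ℝ, 0 ≤ x → |deriv q x| ≤ C * Real.exp (-x) := fun x hx => (hdecay x hx).2
  have hC0 : 0 ≤ C := by
    have h := bq 0 le_rfl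
    simp at h
    exact le_trans (abs_nonneg _) h
  have hE : ∀ x : ℝ, 0 ≤ x → Real.exp (-x) ≤ 1 := by
    intro x hx
    simpa using Real.exp_le_exp.mpr (neg_nonpos.mpr hx)
  have hxE : ∀ x : ℝ, 0 ≤ x → x * Real.exp (-x) ≤ 1 := by
    intro x hx
    have h1 : x ≤ Real.exp x := le_trans (by linarith) (Real.add_one_le_exp x)
    have h2 : x * Real.exp (-x) ≤ Real.exp x * Real.exp (-x) :=
      mul_le_mul_of_nonneg_right h1 (Real.exp_pos _).le
    rwa [← Real.exp_add, add_neg_cancel, Real.exp_zero] at h2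
  have bq2 : ∀ x : ℝ, 0 ≤ x → |q x ^ 2| ≤ C * C * Real.exp (-x) := by
    intro x hx
    have h := bnd_mul (Real.exp_pos (-x)) (hE x hx) (bq x hx) (bq x hx)
    simpa [pow_two] using h
  -- u00
  have hu00f : u00 = fun s => ∫ x in Set.Ioi s, q x ^ 2 := funext hu00
  have hu00d : ∀ s : ℝ, HasDerivAt u00 (-(q s ^ 2)) s := by
    intro s; rw [hu00f]; exact tail_hasDerivAt (hcq.pow 2) bq2 s
  have hu00c : Continuous u00 := by
    have hd : Differentiable ℝ u00 := fun s => (hu00d s).differentiableAt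
    exact hd.continuous
  have hu00b : ∀ x : ℝ, 0 ≤ x → |u00 x| ≤ C * C * Real.exp (-x) := by
    intro x hx; rw [hu00]; exact tail_bound (hcq.pow 2) bq2 hx
  have hu00t : Tendsto u00 atTop (𝓝 0) := by rw [hu00f]; exact tail_tendsto (hcq.pow 2) bq2
  -- q1
  have hq1f : q1 = fun s => deriv q s + u00 s * q s := funext hq1
  have hq1c : Continuous q1 := by rw [hq1f]; exact hcq'.add (hu00c.mul hcq)
  have bq1 : ∀ x : ℝ, 0 ≤ x → |q1 x| ≤ (C + C * C * C) * Real.exp (-x) := by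
    intro x hx
    rw [hq1]
    have h1 := bnd_mul (Real.exp_pos (-x)) (hE x hx) (hu00b x hx) (bq x hx)
    calc |deriv q x + u00 x * q x| ≤ |deriv q x| + |u00 x * q x| := abs_add_le _ _
      _ ≤ C * Real.exp (-x) + C * C * C * Real.exp (-x) := by linarith [bq' x hx]
      _ = (C + C * C * C) * Real.exp (-x) := by ring
  -- u10
  have bq1q : ∀ x : ℝ, 0 ≤ x → |q1 x * q x| ≤ (C + C * C * C) * C * Real.exp (-x) :=
    fun x hx => bnd_mul (Real.exp_pos (-x)) (hE x hx) (bq1 x hx) (bq x hx)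
  have hq1qc : Continuous fun x => q1 x * q x := hq1c.mul hcq
  have hu10f : u10 = fun s => ∫ x in Set.Ioi s, q1 x * q x := funext hu10
  have hu10d : ∀ s : ℝ, HasDerivAt u10 (-(q1 s * q s)) s := by
    intro s; rw [hu10f]; exact tail_hasDerivAt hq1qc bq1q s
  have hu10c : Continuous u10 := by
    have hd : Differentiable ℝ u10 := fun s => (hu10d s).differentiableAt
    exact hd.continuous
  have hu10t : Tendsto u10 atTop (𝓝 0) := by rw [hu10f]; exact tail_tendsto hq1qc bq1q
  -- tendsto of q, q' and s*q^2
  have hCet : Tendsto (fun s : ℝ => C * Real.exp (-s)) atTop (𝓝 0) := by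
    simpa using Real.tendsto_exp_neg_atTop_nhds_zero.const_mul C
  have htq : Tendsto q atTop (𝓝 0) := by
    refine squeeze_zero_norm' ?_ hCet
    filter_upwards [eventually_ge_atTop (0:ℝ)] with s hs
    simpa [Real.norm_eq_abs] using bq s hs
  have htq' : Tendsto (fun s => deriv q s) atTop (𝓝 0) := by
    refine squeeze_zero_norm' ?_ hCet
    filter_upwards [eventually_ge_atTop (0:ℝ)] with s hs
    simpa [Real.norm_eq_abs] using bq' s hs
  -- closed form for u10
  have hu10eq : ∀ s : ℝ, u10 s = u00 s ^ 2 / 2 - q s ^ 2 / 2 := by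
    have hD : ∀ x : ℝ, HasDerivAt (fun t => u10 t - (u00 t ^ 2 / 2 - q t ^ 2 / 2)) 0 x := by
      intro x
      have h1 := (hu10d x).sub ((((hu00d x).pow 2).div_const 2).sub (((hqd x).pow 2).div_const 2))
      refine h1.congr_deriv ?_
      rw [hq1]
      ring
    have hlim : Tendsto (fun t => u10 t - (u00 t ^ 2 / 2 - q t ^ 2 / 2)) atTop (𝓝 0) := by
      have h := hu10t.sub (((hu00t.pow 2).div_const 2).sub ((htq.pow 2).div_const 2))
      simpa using h
    intro s
    have h := eq_zero_of_deriv_zero_tendsto hD hlim s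
    linarith
  have bu10 : ∀ x : ℝ, 0 ≤ x → |u10 x| ≤ (C*C*(C*C) + C*C)/2 * Real.exp (-x) := by
    intro x hx
    rw [hu10eq x]
    have h1 := bnd_mul (Real.exp_pos (-x)) (hE x hx) (hu00b x hx) (hu00b x hx)
    have h2 := bnd_mul (Real.exp_pos (-x)) (hE x hx) (bq x hx) (bq x hx)
    have e1 : u00 x ^ 2 ≤ C*C*(C*C) * Real.exp (-x) := by
      calc u00 x ^ 2 = |u00 x * u00 x| := by rw [abs_mul_self, pow_two]
        _ ≤ C*C*(C*C) * Real.exp (-x) := h1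
    have e2 : q x ^ 2 ≤ C*C * Real.exp (-x) := by
      calc q x ^ 2 = |q x * q x| := by rw [abs_mul_self, pow_two]
        _ ≤ C*C * Real.exp (-x) := h2
    rw [abs_le]
    constructor <;> nlinarith [sq_nonneg (u00 x), sq_nonneg (q x), Real.exp_pos (-x)]
  -- q2 and u21
  have hq2f : q2 = fun s => s * q s - u10 s * q s + u00 s * q1 s := funext hq2
  have hq2c : Continuous q2 := by
    rw [hq2f]; exact ((continuous_id.mul hcq).sub (hu10c.mul hcq)).add (hu00c.mul hq1c)
  have hq2q1c : Continuous fun x => q2 x * q1 x := hq2c.mul hq1c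
  have bq2q1 : ∀ x : ℝ, 0 ≤ x →
      |q2 x * q1 x| ≤ (C*(C + C*C*C) + ((C*C*(C*C) + C*C)/2*C)*(C + C*C*C)
        + C*C*(C + C*C*C)*(C + C*C*C)) * Real.exp (-x) := by
    intro x hx
    have hdecomp : q2 x * q1 x
        = x*(q x*q1 x) - u10 x*q x*q1 x + u00 x*q1 x*q1 x := by
      rw [hq2]; ring
    rw [hdecomp]
    have hqq1 : |q x * q1 x| ≤ (C * Real.exp (-x)) * ((C + C*C*C) * Real.exp (-x)) := by
      rw [abs_mul]
      exact mul_le_mul (bq x hx) (bq1 x hx) (abs_nonneg _) (le_trans (abs_nonneg _) (bq x hx))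
    have t1 : |x * (q x * q1 x)| ≤ C*(C + C*C*C) * Real.exp (-x) := by
      rw [abs_mul, abs_of_nonneg hx]
      have h5 : x * |q x * q1 x| ≤ x * ((C*Real.exp (-x)) * ((C + C*C*C)*Real.exp (-x))) :=
        mul_le_mul_of_nonneg_left hqq1 hx
      have h6 : x * ((C*Real.exp (-x)) * ((C + C*C*C)*Real.exp (-x)))
          = (C*(C + C*C*C)*Real.exp (-x)) * (x * Real.exp (-x)) := by ring
      have h70 : (0:ℝ) ≤ C*(C + C*C*C)*Real.exp (-x) := by
        have hc : (0:ℝ) ≤ C*(C + C*C*C) := by nlinarith [sq_nonneg C, sq_nonneg (C*C)]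
        exact mul_nonneg hc (Real.exp_pos _).le
      have h7 : (C*(C + C*C*C)*Real.exp (-x)) * (x * Real.exp (-x))
          ≤ (C*(C + C*C*C)*Real.exp (-x)) * 1 :=
        mul_le_mul_of_nonneg_left (hxE x hx) h70
      linarith
    have t2 : |u10 x * q x * q1 x| ≤ ((C*C*(C*C) + C*C)/2*C)*(C + C*C*C) * Real.exp (-x) := by
      have h1 := bnd_mul (Real.exp_pos (-x)) (hE x hx) (bu10 x hx) (bq x hx)
      exact bnd_mul (Real.exp_pos (-x)) (hE x hx) h1 (bq1 x hx)
    have t3 : |u00 x * q1 x * q1 x| ≤ C*C*(C + C*C*C)*(C + C*C*C) * Real.exp (-x) := by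
      have h1 := bnd_mul (Real.exp_pos (-x)) (hE x hx) (hu00b x hx) (bq1 x hx)
      exact bnd_mul (Real.exp_pos (-x)) (hE x hx) h1 (bq1 x hx)
    have habs : |x*(q x*q1 x) - u10 x*q x*q1 x + u00 x*q1 x*q1 x|
        ≤ |x*(q x*q1 x)| + |u10 x*q x*q1 x| + |u00 x*q1 x*q1 x| := by
      have h1 := abs_add_le (x*(q x*q1 x) - u10 x*q x*q1 x) (u00 x*q1 x*q1 x)
      have h2 : |x*(q x*q1 x) - u10 x*q x*q1 x| ≤ |x*(q x*q1 x)| + |u10 x*q x*q1 x| := by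
        rw [sub_eq_add_neg]
        simpa [abs_neg] using abs_add_le (x*(q x*q1 x)) (-(u10 x*q x*q1 x))
      linarith
    calc |x*(q x*q1 x) - u10 x*q x*q1 x + u00 x*q1 x*q1 x|
        ≤ |x*(q x*q1 x)| + |u10 x*q x*q1 x| + |u00 x*q1 x*q1 x| := habs
      _ ≤ (C*(C + C*C*C) + ((C*C*(C*C) + C*C)/2*C)*(C + C*C*C)
            + C*C*(C + C*C*C)*(C + C*C*C)) * Real.exp (-x) := by
          rw [add_mul, add_mul]; linarith
  have hu21f : u21 = fun s => ∫ x in Set.Ioi s, q2 x * q1 x := funext hu21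
  have hu21d : ∀ s : ℝ, HasDerivAt u21 (-(q2 s * q1 s)) s := by
    intro s; rw [hu21f]; exact tail_hasDerivAt hq2q1c bq2q1 s
  have hu21t : Tendsto u21 atTop (𝓝 0) := by rw [hu21f]; exact tail_tendsto hq2q1c bq2q1
  -- the explicit antiderivative G
  set G : ℝ → ℝ := fun s => -(1/4) * u00 s + (1/8) * (u00 s^4 - 6*(u00 s^2*q s^2)
    - 8*(u00 s*q s*deriv q s) - q s^4 - 2*(deriv q s)^2 - 2*(s*q s^2)) with hG
  have hGd : ∀ s : ℝ, HasDerivAt G (-(q2 s * q1 s)) s := by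
    intro s
    have hb1 := ((hu00d s).pow 4).sub ((((hu00d s).pow 2).mul ((hqd s).pow 2)).const_mul 6)
    have hb2 := hb1.sub ((((hu00d s).mul (hqd s)).mul (hq''d s)).const_mul 8)
    have hb3 := hb2.sub ((hqd s).pow 4)
    have hb4 := hb3.sub (((hq''d s).pow 2).const_mul 2)
    have hb5 := hb4.sub (((hasDerivAt_id s).mul ((hqd s).pow 2)).const_mul 2)
    have hbig := ((hu00d s).const_mul (-(1/4):ℝ)).add (hb5.const_mul (1/8:ℝ))
    refine hbig.congr_deriv ?_
    rw [hq2 s, hq1 s, hu10eq s]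
    simp only [id_eq, Pi.pow_apply, Pi.mul_apply]
    ring
  have bxq2 : ∀ x : ℝ, 0 ≤ x → |x * q x ^ 2| ≤ C * C * Real.exp (-x) := by
    intro x hx
    rw [abs_mul, abs_of_nonneg hx]
    have h1 : |q x ^ 2| ≤ (C*Real.exp (-x)) * (C*Real.exp (-x)) := by
      rw [pow_two, abs_mul]
      exact mul_le_mul (bq x hx) (bq x hx) (abs_nonneg _) (le_trans (abs_nonneg _) (bq x hx))
    have h2 : x * |q x ^ 2| ≤ x * ((C*Real.exp (-x)) * (C*Real.exp (-x))) :=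
      mul_le_mul_of_nonneg_left h1 hx
    have h3 : x * ((C*Real.exp (-x)) * (C*Real.exp (-x)))
        = (C*C*Real.exp (-x)) * (x * Real.exp (-x)) := by ring
    have h40 : (0:ℝ) ≤ C*C*Real.exp (-x) :=
      mul_nonneg (mul_nonneg hC0 hC0) (Real.exp_pos _).le
    have h4 : (C*C*Real.exp (-x)) * (x*Real.exp (-x)) ≤ (C*C*Real.exp (-x)) * 1 :=
      mul_le_mul_of_nonneg_left (hxE x hx) h40
    linarith
  have hCCet : Tendsto (fun s : ℝ => C * C * Real.exp (-s)) atTop (𝓝 0) := by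
    simpa using Real.tendsto_exp_neg_atTop_nhds_zero.const_mul (C*C)
  have htsq2 : Tendsto (fun s : ℝ => s * q s ^ 2) atTop (𝓝 0) := by
    refine squeeze_zero_norm' ?_ hCCet
    filter_upwards [eventually_ge_atTop (0:ℝ)] with s hs
    have h := bxq2 s hs
    calc ‖s * q s ^ 2‖ = |s * q s ^ 2| := rfl
      _ ≤ C * C * Real.exp (-s) := h
  have hGt : Tendsto G atTop (𝓝 0) := by
    rw [hG]
    have hb1 := (hu00t.pow 4).sub (((hu00t.pow 2).mul (htq.pow 2)).const_mul 6)
    have hb2 := hb1.sub (((hu00t.mul htq).mul htq').const_mul 8)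
    have hb3 := hb2.sub (htq.pow 4)
    have hb4 := hb3.sub ((htq'.pow 2).const_mul 2)
    have hb5 := hb4.sub (htsq2.const_mul 2)
    have hb := (hu00t.const_mul (-(1/4):ℝ)).add (hb5.const_mul (1/8:ℝ))
    simpa using hb
  have hu21G : ∀ s : ℝ, u21 s = G s := by
    intro s
    have hD : ∀ x : ℝ, HasDerivAt (fun t => u21 t - G t) 0 x := by
      intro x
      have h := (hu21d x).sub (hGd x)
      simpa [Pi.sub_def] using h
    have hlim : Tendsto (fun t => u21 t - G t) atTop (𝓝 0) := by
      simpa using hu21t.sub hGt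
    have h := eq_zero_of_deriv_zero_tendsto hD hlim s
    linarith
  -- derivatives of F
  have hwd : ∀ s : ℝ, HasDerivAt (fun t => ∫ x in Set.Ioi t, x * q x ^ 2) (-(s * q s ^ 2)) s :=
    tail_hasDerivAt (continuous_id.mul (hcq.pow 2)) bxq2
  have hvsplit : ∀ s : ℝ, (∫ x in Set.Ioi s, (x - s) * q x ^ 2)
      = (∫ x in Set.Ioi s, x * q x ^ 2) - s * u00 s := by
    intro s
    have hint1 : IntegrableOn (fun x => x * q x ^ 2) (Set.Ioi s) :=
      tail_integrableOn (continuous_id.mul (hcq.pow 2)) bxq2 s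
    have hint2 : IntegrableOn (fun x => s * q x ^ 2) (Set.Ioi s) :=
      (tail_integrableOn (hcq.pow 2) bq2 s).const_mul s
    simp_rw [sub_mul]
    rw [MeasureTheory.integral_sub hint1 hint2, MeasureTheory.integral_const_mul, hu00]
  have hvd : ∀ s : ℝ, HasDerivAt (fun t => ∫ x in Set.Ioi t, (x - t) * q x ^ 2) (-u00 s) s := by
    intro s
    have h1 := (hwd s).sub ((hasDerivAt_id s).mul (hu00d s))
    have h2 : (fun t => ∫ x in Set.Ioi t, (x - t) * q x ^ 2)
        = fun t => (∫ x in Set.Ioi t, x * q x ^ 2) - t * u00 t := funext hvsplit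
    rw [h2]
    refine h1.congr_deriv ?_
    simp only [id_eq]
    ring
  have hFf : F = fun s => Real.exp (-(∫ x in Set.Ioi s, (x - s) * q x ^ 2)) := funext hF
  have hF1 : ∀ s : ℝ, HasDerivAt F (u00 s * F s) s := by
    intro s
    rw [hF s, hFf]
    have h := ((hvd s).neg).exp
    refine h.congr_deriv ?_
    simp only [Pi.neg_apply]
    ring
  have hderivF : deriv F = fun s => u00 s * F s := funext fun s => (hF1 s).deriv
  have hF2 : ∀ s : ℝ, HasDerivAt (deriv F) ((u00 s^2 - q s^2) * F s) s := by
    intro s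
    rw [hderivF]
    have h := (hu00d s).mul (hF1 s)
    refine h.congr_deriv ?_
    ring
  have hd2 : deriv (deriv F) = fun s => (u00 s^2 - q s^2) * F s :=
    funext fun s => (hF2 s).deriv
  have hF3 : ∀ s : ℝ, HasDerivAt (deriv (deriv F))
      ((u00 s^3 - 3*(u00 s*q s^2) - 2*(q s*deriv q s)) * F s) s := by
    intro s
    rw [hd2]
    have h := (((hu00d s).pow 2).sub ((hqd s).pow 2)).mul (hF1 s)
    refine h.congr_deriv ?_
    norm_num
    ring
  have hd3 : deriv (deriv (deriv F))
      = fun s => (u00 s^3 - 3*(u00 s*q s^2) - 2*(q s*deriv q s)) * F s :=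
    funext fun s => (hF3 s).deriv
  have hF4 : ∀ s : ℝ, HasDerivAt (deriv (deriv (deriv F)))
      ((u00 s^4 - 6*(u00 s^2*q s^2) - 8*(u00 s*q s*deriv q s) - q s^4
        - 2*(deriv q s)^2 - 2*(s*q s^2)) * F s) s := by
    intro s
    rw [hd3]
    have h := ((((hu00d s).pow 3).sub (((hu00d s).mul ((hqd s).pow 2)).const_mul 3)).sub
      (((hqd s).mul (hq''d s)).const_mul 2)).mul (hF1 s)
    refine h.congr_deriv ?_
    norm_num
    ring
  have hiter : iteratedDeriv 4 F = deriv (deriv (deriv (deriv F))) := by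
    rw [show (4:ℕ) = 3+1 from rfl, iteratedDeriv_succ, show (3:ℕ) = 2+1 from rfl,
      iteratedDeriv_succ, show (2:ℕ) = 1+1 from rfl, iteratedDeriv_succ, iteratedDeriv_one]
  -- conclusion
  intro s
  have e1 : deriv F s = u00 s * F s := (hF1 s).deriv
  have e4 : iteratedDeriv 4 F s = (u00 s^4 - 6*(u00 s^2*q s^2) - 8*(u00 s*q s*deriv q s)
      - q s^4 - 2*(deriv q s)^2 - 2*(s*q s^2)) * F s := by
    rw [hiter]; exact (hF4 s).deriv
  rw [hu21G s, e1, e4]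
  simp only [hG]
  ring
end

section
/- Let q : ℝ → ℝ be twice continuously differentiable, satisfy the Painlevé II equation q''(s) = s·q(s) + 2·q(s)³ for all s ∈ ℝ, and satisfy the decay bound: there is a constant C with |q(s)| ≤ C·e^{−s} and |q'(s)| ≤ C·e^{−s} for all s ≥ 0. Define F(s) := exp(−∫_s^∞ (x−s)·q(x)² dx), u₀₀(s) := ∫_s^∞ q(x)² dx, q₁ := q' + u₀₀·q, u₁₀(s) := ∫_s^∞ q₁(x)·q(x) dx, and u₁₁(s) := ∫_s^∞ q₁(x)² dx. Then for every s ∈ ℝ, F(s)·(u₁₀(s)² − u₀₀(s)·u₁₁(s)) = −(1/6)·F'(s) + (s/3)·F''(s) − (1/12)·F''''(s). -/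
open MeasureTheory Set Filter Real

/-- Integrability on a tail from an exponential bound past `a`. -/
lemma FAeq_integrable {g : ℝ → ℝ} (hg : Continuous g) {D a : ℝ}
    (hb : ∀ x, a ≤ x → |g x| ≤ D * Real.exp (-x)) (s : ℝ) :
    IntegrableOn g (Set.Ioi s) := by
  have hsub : Set.Ioi s ⊆ Set.Ioc s (max s a) ∪ Set.Ioi (max s a) := by
    rw [Set.Ioc_union_Ioi_eq_Ioi (le_max_left s a)]
  refine (IntegrableOn.union ?_ ?_).mono_set hsub
  · exact hg.integrableOn_Ioc
  · have hexp : IntegrableOn (fun x => D * Real.exp (-x)) (Set.Ioi (max s a)) := by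
      exact (by simpa [neg_mul, one_mul] using (exp_neg_integrableOn_Ioi (max s a) one_pos).const_mul D :
        Integrable (fun x => D * Real.exp (-x)) (volume.restrict (Set.Ioi (max s a))))
    refine Integrable.mono hexp hg.aestronglyMeasurable.restrict ?_
    refine (MeasureTheory.ae_restrict_iff' measurableSet_Ioi).2 (.of_forall fun x hx => ?_)
    have h1 := hb x (le_of_lt (lt_of_le_of_lt (le_max_right s a) hx))
    have : (0:ℝ) ≤ D * Real.exp (-x) := le_trans (abs_nonneg _) h1
    have h2 : D * Real.exp (-x) ≤ |D * Real.exp (-x)| := le_abs_self _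
    have h3 : |g x| ≤ |D * Real.exp (-x)| := le_trans h1 h2
    rw [abs_mul, abs_of_pos (Real.exp_pos _)] at h3
    simpa [Real.norm_eq_abs] using h3

/-- FTC for tail integrals: derivative of `s ↦ ∫_{Ioi s} g` is `-g s`. -/
lemma FAeq_hasDerivAt_tail {g : ℝ → ℝ} (hg : Continuous g)
    (hint : ∀ a : ℝ, IntegrableOn g (Set.Ioi a)) (s : ℝ) :
    HasDerivAt (fun t => ∫ x in Set.Ioi t, g x) (-(g s)) s := by
  set a := s - 1 with ha
  have key : ∀ t, a < t →
      (∫ x in Set.Ioi t, g x) = (∫ x in Set.Ioi a, g x) - ∫ x in a..t, g x := by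
    intro t ht
    rw [intervalIntegral.integral_of_le (le_of_lt ht)]
    have hsplit : (∫ x in Set.Ioi a, g x)
        = (∫ x in Set.Ioc a t, g x) + ∫ x in Set.Ioi t, g x := by
      rw [← MeasureTheory.setIntegral_union]
      · rw [Set.Ioc_union_Ioi_eq_Ioi (le_of_lt ht)]
      · exact Set.Ioc_disjoint_Ioi le_rfl
      · exact measurableSet_Ioi
      · exact (hint a).mono_set Set.Ioc_subset_Ioi_self
      · exact hint t
    rw [hsplit]; ring
  have hd : HasDerivAt (fun t => (∫ x in Set.Ioi a, g x) - ∫ x in a..t, g x) (-(g s)) s := by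
    have hD : HasDerivAt (fun t => ∫ x in a..t, g x) (g s) s := by
      refine intervalIntegral.integral_hasDerivAt_right ?_ ?_ hg.continuousAt
      · rw [intervalIntegrable_iff_integrableOn_Ioc_of_le (by simp [ha] : a ≤ s)]
        exact (hint a).mono_set Set.Ioc_subset_Ioi_self
      · exact hg.stronglyMeasurableAtFilter _ _
    exact ((hasDerivAt_const s (∫ x in Set.Ioi a, g x)).sub hD).congr_deriv (by simp)
  refine hd.congr_of_eventuallyEq ?_
  filter_upwards [Ioi_mem_nhds (show a < s by simp [ha])] with t ht
  exact key t ht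

/-- Bound on a tail integral from an exponential pointwise bound. -/
lemma FAeq_tail_bound {g : ℝ → ℝ} {D s : ℝ} (hint : IntegrableOn g (Set.Ioi s))
    (hb : ∀ x ∈ Set.Ioi s, |g x| ≤ D * Real.exp (-x)) :
    |∫ x in Set.Ioi s, g x| ≤ D * Real.exp (-s) := by
  have h1 : |∫ x in Set.Ioi s, g x| ≤ ∫ x in Set.Ioi s, |g x| := by
    simpa [Real.norm_eq_abs] using
      MeasureTheory.norm_integral_le_integral_norm (μ := volume.restrict (Set.Ioi s)) g
  have h2 : (∫ x in Set.Ioi s, |g x|) ≤ ∫ x in Set.Ioi s, D * Real.exp (-x) := by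
    refine MeasureTheory.setIntegral_mono_on hint.abs ?_ measurableSet_Ioi hb
    exact (by simpa [neg_mul, one_mul] using (exp_neg_integrableOn_Ioi s one_pos).const_mul D :
      Integrable (fun x => D * Real.exp (-x)) (volume.restrict (Set.Ioi s)))
  have h3 : (∫ x in Set.Ioi s, D * Real.exp (-x)) = D * Real.exp (-s) := by
    rw [MeasureTheory.integral_const_mul, integral_exp_neg_Ioi]
  exact h1.trans (h2.trans h3.le)

/-- Squeeze to zero at `+∞` from an exponential bound. -/
lemma FAeq_tendsto_zero {f : ℝ → ℝ} {D : ℝ}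
    (hb : ∀ s, 0 ≤ s → |f s| ≤ D * Real.exp (-s)) :
    Filter.Tendsto f Filter.atTop (nhds 0) := by
  refine squeeze_zero_norm' (a := fun s => D * Real.exp (-s)) ?_ ?_
  · filter_upwards [Filter.eventually_ge_atTop (0:ℝ)] with s hs
    simpa [Real.norm_eq_abs] using hb s hs
  · simpa using Real.tendsto_exp_neg_atTop_nhds_zero.const_mul D

/-- Two functions with the same derivative and both tending to `0` at `+∞` are equal. -/
lemma FAeq_eq_of_deriv {f g d : ℝ → ℝ}
    (hf : ∀ s, HasDerivAt f (d s) s) (hg : ∀ s, HasDerivAt g (d s) s)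
    (h0f : Filter.Tendsto f Filter.atTop (nhds 0))
    (h0g : Filter.Tendsto g Filter.atTop (nhds 0)) : f = g := by
  have hdiff : ∀ x y : ℝ, f x - g x = f y - g y := by
    intro x y
    have hconst : ∀ z : ℝ, f z - g z = f 0 - g 0 := by
      have hD : Differentiable ℝ (fun z => f z - g z) :=
        fun z => ((hf z).sub (hg z)).differentiableAt
      have hd0 : ∀ z, deriv (fun z => f z - g z) z = 0 := fun z => by
        exact ((hf z).sub (hg z)).deriv.trans (sub_self _)
      intro z; exact is_const_of_deriv_eq_zero hD hd0 z 0
    rw [hconst x, hconst y]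
  have hlim : Filter.Tendsto (fun z => f z - g z) Filter.atTop (nhds (f 0 - g 0)) := by
    have : (fun z => f z - g z) = fun _ => f 0 - g 0 := funext fun z => hdiff z 0
    rw [this]; exact tendsto_const_nhds
  have : f 0 - g 0 = 0 := tendsto_nhds_unique hlim (by simpa using h0f.sub h0g)
  funext z
  have hz := hdiff z 0
  rw [this] at hz
  linarith

lemma FAeq_mul_bound {a b A B e : ℝ} (ha : |a| ≤ A * e) (hb : |b| ≤ B * e) :
    |a * b| ≤ A * B * e * e := by
  rw [abs_mul]
  calc |a| * |b| ≤ (A * e) * (B * e) :=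
        mul_le_mul ha hb (abs_nonneg _) (le_trans (abs_nonneg _) ha)
    _ = A * B * e * e := by ring

lemma FAeq_weaken {a A e : ℝ} (h : |a| ≤ A * e * e) (he0 : 0 < e) (he1 : e ≤ 1) :
    |a| ≤ A * e := by
  have h0 : 0 ≤ A * e * e := le_trans (abs_nonneg _) h
  have h1 : 0 ≤ A * e := nonneg_of_mul_nonneg_right (by linarith [h0] : 0 ≤ e * (A * e)) he0
  nlinarith

lemma FAeq_sexp {s : ℝ} (hs : 0 ≤ s) : s * Real.exp (-s) ≤ 1 := by
  have h1 : s + 1 ≤ Real.exp s := Real.add_one_le_exp s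
  have h2 : Real.exp s * Real.exp (-s) = 1 := by rw [← Real.exp_add]; simp
  have h3 : 0 < Real.exp (-s) := Real.exp_pos _
  nlinarith


/-- The identity `[u₁₀² - u₀₀·u₁₁]·F = -(1/6)·F' + (s/3)·F'' - (1/12)·F⁽⁴⁾`, where
`F(s) = exp(-∫_s^∞ (x-s) q(x)² dx)`, `u₀₀(s) = ∫_s^∞ q(x)² dx`, `q₁ = q' + u₀₀·q`,
`u₁₀(s) = ∫_s^∞ q₁(x) q(x) dx`, `u₁₁(s) = ∫_s^∞ q₁(x)² dx`, and `q` is a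
Painlevé II solution with exponential decay at `+∞`. -/
theorem F_A_eq (q F u00 q1 u10 u11 : ℝ → ℝ) (hq : ContDiff ℝ 2 q)
    (hP2 : ∀ s : ℝ, iteratedDeriv 2 q s = s * q s + 2 * q s ^ 3)
    (C : ℝ)
    (hdecay : ∀ s : ℝ, 0 ≤ s →
      |q s| ≤ C * Real.exp (-s) ∧ |deriv q s| ≤ C * Real.exp (-s))
    (hF : ∀ s : ℝ, F s = Real.exp (-(∫ x in Set.Ioi s, (x - s) * q x ^ 2)))
    (hu00 : ∀ s : ℝ, u00 s = ∫ x in Set.Ioi s, q x ^ 2)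
    (hq1 : ∀ s : ℝ, q1 s = deriv q s + u00 s * q s)
    (hu10 : ∀ s : ℝ, u10 s = ∫ x in Set.Ioi s, q1 x * q x)
    (hu11 : ∀ s : ℝ, u11 s = ∫ x in Set.Ioi s, q1 x ^ 2) :
    ∀ s : ℝ, F s * (u10 s ^ 2 - u00 s * u11 s) =
      -(1 / 6) * deriv F s + (s / 3) * iteratedDeriv 2 F s
        - (1 / 12) * iteratedDeriv 4 F s := by
  -- continuity and differentiability of q
  have hqc : Continuous q := hq.continuous
  have hqdc : Continuous (deriv q) := hq.continuous_deriv one_le_two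
  have hqdiff : Differentiable ℝ q := hq.differentiable two_ne_zero
  have hqd : ∀ s, HasDerivAt q (deriv q s) s := fun s => (hqdiff s).hasDerivAt
  have hq'cd : ContDiff ℝ 1 (deriv q) := by
    have h2 : ContDiff ℝ ((1 + 1 : ℕ) : WithTop ℕ∞) q := by exact_mod_cast hq
    simpa using (ContDiff.iterate_deriv' 1 1 h2)
  have hq'diff : Differentiable ℝ (deriv q) := hq'cd.differentiable one_ne_zero
  have hq'd : ∀ s, HasDerivAt (deriv q) (s * q s + 2 * q s ^ 3) s := by
    intro s
    have h := (hq'diff s).hasDerivAt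
    have he : deriv (deriv q) s = s * q s + 2 * q s ^ 3 := by
      rw [← hP2 s, iteratedDeriv_succ, iteratedDeriv_one]
    rwa [he] at h
  -- basic exponential facts
  have hexp1 : ∀ x : ℝ, 0 ≤ x → Real.exp (-x) ≤ 1 := fun x hx =>
    Real.exp_le_one_iff.mpr (by linarith)
  -- decay bounds
  have hbq : ∀ x, 0 ≤ x → |q x| ≤ C * Real.exp (-x) := fun x hx => (hdecay x hx).1
  have hbq' : ∀ x, 0 ≤ x → |deriv q x| ≤ C * Real.exp (-x) := fun x hx => (hdecay x hx).2
  have hbq2 : ∀ x, 0 ≤ x → |q x ^ 2| ≤ C * C * Real.exp (-x) * Real.exp (-x) := by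
    intro x hx
    have := FAeq_mul_bound (hbq x hx) (hbq x hx)
    simpa [pow_two] using this
  have hbq2w : ∀ x, 0 ≤ x → |q x ^ 2| ≤ C * C * Real.exp (-x) := fun x hx =>
    FAeq_weaken (hbq2 x hx) (Real.exp_pos _) (hexp1 x hx)
  -- integrability of q^2 on tails
  have intq2 : ∀ a : ℝ, IntegrableOn (fun x => q x ^ 2) (Set.Ioi a) :=
    FAeq_integrable (hqc.pow 2) hbq2w
  -- u00 : derivative, continuity, bounds
  have hu00fun : u00 = fun s => ∫ x in Set.Ioi s, q x ^ 2 := funext hu00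
  have hu00d : ∀ s, HasDerivAt u00 (-(q s ^ 2)) s := by
    rw [hu00fun]; exact FAeq_hasDerivAt_tail (hqc.pow 2) intq2
  have hu00b : ∀ s, 0 ≤ s → |u00 s| ≤ C * C * Real.exp (-s) * Real.exp (-s) := by
    intro s hs
    rw [hu00 s]
    have hb : ∀ x ∈ Set.Ioi s, |q x ^ 2| ≤ (C * C * Real.exp (-s)) * Real.exp (-x) := by
      intro x hx
      have hx0 : (0:ℝ) ≤ x := le_trans hs (le_of_lt hx)
      have h1 := hbq2 x hx0
      have h2 : Real.exp (-x) ≤ Real.exp (-s) := Real.exp_le_exp.mpr (by linarith [le_of_lt (Set.mem_Ioi.mp hx)])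
      have hCC : (0:ℝ) ≤ C * C := mul_self_nonneg C
      have h3 : C * C * Real.exp (-x) ≤ C * C * Real.exp (-s) :=
        mul_le_mul_of_nonneg_left h2 hCC
      nlinarith [Real.exp_pos (-x)]
    have := FAeq_tail_bound (intq2 s) hb
    linarith [this]
  have hu00bw : ∀ s, 0 ≤ s → |u00 s| ≤ C * C * Real.exp (-s) := fun s hs =>
    FAeq_weaken (hu00b s hs) (Real.exp_pos _) (hexp1 s hs)
  have hu00t0 : Tendsto u00 atTop (nhds 0) := FAeq_tendsto_zero hu00bw
  have hu00c : Continuous u00 :=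
    continuous_iff_continuousAt.mpr fun s => (hu00d s).continuousAt
  -- q1 : bound, continuity
  have hu00const : ∀ x, 0 ≤ x → |u00 x| ≤ C * C := by
    intro x hx
    have h := hu00bw x hx
    have h2 := hexp1 x hx
    have hCC : (0:ℝ) ≤ C * C := mul_self_nonneg C
    nlinarith [Real.exp_pos (-x)]
  have hbq1 : ∀ x, 0 ≤ x → |q1 x| ≤ (C + C * C * C) * Real.exp (-x) := by
    intro x hx
    rw [hq1 x]
    have h1 := hbq' x hx
    have h2 : |u00 x * q x| ≤ (C * C) * (C * Real.exp (-x)) := by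
      rw [abs_mul]
      exact mul_le_mul (hu00const x hx) (hbq x hx) (abs_nonneg _)
        (mul_self_nonneg C)
    calc |deriv q x + u00 x * q x| ≤ |deriv q x| + |u00 x * q x| := abs_add_le _ _
      _ ≤ C * Real.exp (-x) + (C * C) * (C * Real.exp (-x)) := add_le_add h1 h2
      _ = (C + C * C * C) * Real.exp (-x) := by ring
  have hq1c : Continuous q1 := by
    have : q1 = fun s => deriv q s + u00 s * q s := funext hq1
    rw [this]; exact hqdc.add (hu00c.mul hqc)
  -- bounds and integrability for q1*q and q1^2
  have hbq1q : ∀ x, 0 ≤ x →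
      |q1 x * q x| ≤ (C + C * C * C) * C * Real.exp (-x) * Real.exp (-x) :=
    fun x hx => FAeq_mul_bound (hbq1 x hx) (hbq x hx)
  have hbq1qw : ∀ x, 0 ≤ x → |q1 x * q x| ≤ (C + C * C * C) * C * Real.exp (-x) :=
    fun x hx => FAeq_weaken (hbq1q x hx) (Real.exp_pos _) (hexp1 x hx)
  have hbq11 : ∀ x, 0 ≤ x →
      |q1 x ^ 2| ≤ (C + C * C * C) * (C + C * C * C) * Real.exp (-x) * Real.exp (-x) := by
    intro x hx
    have := FAeq_mul_bound (hbq1 x hx) (hbq1 x hx)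
    simpa [pow_two] using this
  have hbq11w : ∀ x, 0 ≤ x →
      |q1 x ^ 2| ≤ (C + C * C * C) * (C + C * C * C) * Real.exp (-x) :=
    fun x hx => FAeq_weaken (hbq11 x hx) (Real.exp_pos _) (hexp1 x hx)
  have intq1q : ∀ a : ℝ, IntegrableOn (fun x => q1 x * q x) (Set.Ioi a) :=
    FAeq_integrable (hq1c.mul hqc) hbq1qw
  have intq11 : ∀ a : ℝ, IntegrableOn (fun x => q1 x ^ 2) (Set.Ioi a) :=
    FAeq_integrable (hq1c.pow 2) hbq11w
  -- u10, u11 : derivatives and limits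
  have hu10fun : u10 = fun s => ∫ x in Set.Ioi s, q1 x * q x := funext hu10
  have hu11fun : u11 = fun s => ∫ x in Set.Ioi s, q1 x ^ 2 := funext hu11
  have hu10d : ∀ s, HasDerivAt u10 (-(q1 s * q s)) s := by
    rw [hu10fun]; exact FAeq_hasDerivAt_tail (hq1c.mul hqc) intq1q
  have hu11d : ∀ s, HasDerivAt u11 (-(q1 s ^ 2)) s := by
    rw [hu11fun]; exact FAeq_hasDerivAt_tail (hq1c.pow 2) intq11
  have hu10t0 : Tendsto u10 atTop (nhds 0) := by
    refine FAeq_tendsto_zero (D := (C + C * C * C) * C) ?_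
    intro s hs
    rw [hu10 s]
    refine FAeq_tail_bound (intq1q s) fun x hx => ?_
    exact hbq1qw x (le_trans hs (le_of_lt hx))
  have hu11t0 : Tendsto u11 atTop (nhds 0) := by
    refine FAeq_tendsto_zero (D := (C + C * C * C) * (C + C * C * C)) ?_
    intro s hs
    rw [hu11 s]
    refine FAeq_tail_bound (intq11 s) fun x hx => ?_
    exact hbq11w x (le_trans hs (le_of_lt hx))
  have hqt0 : Tendsto q atTop (nhds 0) := FAeq_tendsto_zero hbq
  have hq't0 : Tendsto (deriv q) atTop (nhds 0) := FAeq_tendsto_zero hbq'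
  -- the function A(s) = ∫_{Ioi s} x q(x)^2
  have hbxq2 : ∀ x, 0 ≤ x → |x * q x ^ 2| ≤ C * C * Real.exp (-x) := by
    intro x hx
    rw [abs_mul, abs_of_nonneg hx]
    have h1 := hbq2 x hx
    have h2 := FAeq_sexp hx
    have hCC : (0:ℝ) ≤ C * C := mul_self_nonneg C
    have h4 : (C * C * Real.exp (-x)) * (x * Real.exp (-x)) ≤ (C * C * Real.exp (-x)) * 1 :=
      mul_le_mul_of_nonneg_left h2 (mul_nonneg hCC (Real.exp_pos _).le)
    nlinarith [mul_le_mul_of_nonneg_left h1 hx]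
  have intxq2 : ∀ a : ℝ, IntegrableOn (fun x => x * q x ^ 2) (Set.Ioi a) :=
    FAeq_integrable (continuous_id.mul (hqc.pow 2)) hbxq2
  have hAd : ∀ s, HasDerivAt (fun t => ∫ x in Set.Ioi t, x * q x ^ 2) (-(s * q s ^ 2)) s :=
    FAeq_hasDerivAt_tail (continuous_id.mul (hqc.pow 2)) intxq2
  -- rewrite the F-integral
  have hvA : ∀ s : ℝ, (∫ x in Set.Ioi s, (x - s) * q x ^ 2)
      = (∫ x in Set.Ioi s, x * q x ^ 2) - s * u00 s := by
    intro s
    rw [hu00 s, ← MeasureTheory.integral_const_mul,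
      ← MeasureTheory.integral_sub (intxq2 s) ((intq2 s).const_mul s)]
    congr 1
    funext x
    ring
  -- F and its first derivative
  have hFfun : F = fun s => Real.exp (-((∫ x in Set.Ioi s, x * q x ^ 2) - s * u00 s)) :=
    funext fun s => by rw [hF s, hvA s]
  have hFd : ∀ s, HasDerivAt F (u00 s * F s) s := by
    intro s
    have hin : HasDerivAt (fun t => -((∫ x in Set.Ioi t, x * q x ^ 2) - t * u00 t))
        (u00 s) s := by
      have h1 := ((hAd s).sub ((hasDerivAt_id' (x := s)).mul (hu00d s))).neg
      refine h1.congr_deriv ?_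
      push_cast [Pi.add_apply, Pi.sub_apply, Pi.mul_apply, Pi.pow_apply, Pi.neg_apply, Pi.div_apply]
      ring
    rw [hFfun]
    simpa [mul_comm] using hin.exp
  have i1 : deriv F = fun s => u00 s * F s := funext fun s => (hFd s).deriv
  have i2 : iteratedDeriv 2 F = fun s => (u00 s ^ 2 - q s ^ 2) * F s := by
    funext s
    rw [show iteratedDeriv 2 F = deriv (iteratedDeriv 1 F) from iteratedDeriv_succ,
      iteratedDeriv_one, i1]
    refine ((hu00d s).mul (hFd s)).deriv.trans ?_
    push_cast [Pi.add_apply, Pi.sub_apply, Pi.mul_apply, Pi.pow_apply, Pi.neg_apply, Pi.div_apply]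
    ring
  have i3 : iteratedDeriv 3 F
      = fun s => (u00 s ^ 3 - 3 * u00 s * q s ^ 2 - 2 * q s * deriv q s) * F s := by
    funext s
    rw [show iteratedDeriv 3 F = deriv (iteratedDeriv 2 F) from iteratedDeriv_succ, i2]
    refine ((((hu00d s).pow 2).sub ((hqd s).pow 2)).mul (hFd s)).deriv.trans ?_
    push_cast [Pi.add_apply, Pi.sub_apply, Pi.mul_apply, Pi.pow_apply, Pi.neg_apply, Pi.div_apply]
    ring
  have i4 : iteratedDeriv 4 F
      = fun s => (u00 s ^ 4 - 6 * u00 s ^ 2 * q s ^ 2 - 8 * u00 s * q s * deriv q s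
          - q s ^ 4 - 2 * deriv q s ^ 2 - 2 * s * q s ^ 2) * F s := by
    funext s
    rw [show iteratedDeriv 4 F = deriv (iteratedDeriv 3 F) from iteratedDeriv_succ, i3]
    have hinner := (((hu00d s).pow 3).sub
        (((hu00d s).const_mul (3:ℝ)).mul ((hqd s).pow 2))).sub
        (((hqd s).const_mul (2:ℝ)).mul (hq'd s))
    refine (hinner.mul (hFd s)).deriv.trans ?_
    push_cast [Pi.add_apply, Pi.sub_apply, Pi.mul_apply, Pi.pow_apply, Pi.neg_apply, Pi.div_apply]
    ring
  -- closed form for u00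
  have hPd : ∀ s, HasDerivAt (fun t => deriv q t ^ 2 - t * q t ^ 2 - q t ^ 4)
      (-(q s ^ 2)) s := by
    intro s
    have h := (((hq'd s).pow 2).sub
      ((hasDerivAt_id' (x := s)).mul ((hqd s).pow 2))).sub ((hqd s).pow 4)
    refine h.congr_deriv ?_
    push_cast [Pi.add_apply, Pi.sub_apply, Pi.mul_apply, Pi.pow_apply, Pi.neg_apply, Pi.div_apply]
    ring
  have hPt0 : Tendsto (fun t => deriv q t ^ 2 - t * q t ^ 2 - q t ^ 4) atTop (nhds 0) := by
    have t2 : Tendsto (fun t : ℝ => t * q t ^ 2) atTop (nhds 0) :=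
      FAeq_tendsto_zero hbxq2
    have := ((hq't0.pow 2).sub t2).sub (hqt0.pow 4)
    simpa using this
  have c1 : u00 = fun t => deriv q t ^ 2 - t * q t ^ 2 - q t ^ 4 :=
    FAeq_eq_of_deriv hu00d hPd hu00t0 hPt0
  have hc1s : ∀ t, u00 t = deriv q t ^ 2 - t * q t ^ 2 - q t ^ 4 := fun t => by rw [c1]
  -- closed form for u10
  have hR2d : ∀ s, HasDerivAt (fun t => (u00 t ^ 2 - q t ^ 2) / 2) (-(q1 s * q s)) s := by
    intro s
    have h := (((hu00d s).pow 2).sub ((hqd s).pow 2)).div_const 2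
    refine h.congr_deriv ?_
    rw [hq1 s]
    push_cast [Pi.add_apply, Pi.sub_apply, Pi.mul_apply, Pi.pow_apply, Pi.neg_apply, Pi.div_apply]
    ring
  have hR2t0 : Tendsto (fun t => (u00 t ^ 2 - q t ^ 2) / 2) atTop (nhds 0) := by
    have := ((hu00t0.pow 2).sub (hqt0.pow 2)).div_const (2:ℝ)
    simpa using this
  have c2 : u10 = fun t => (u00 t ^ 2 - q t ^ 2) / 2 :=
    FAeq_eq_of_deriv hu10d hR2d hu10t0 hR2t0
  -- closed form for u11
  have hsu00b : ∀ x, 0 ≤ x → |x * u00 x| ≤ C * C * Real.exp (-x) := by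
    intro x hx
    rw [abs_mul, abs_of_nonneg hx]
    have h1 := hu00b x hx
    have h2 := FAeq_sexp hx
    have hCC : (0:ℝ) ≤ C * C := mul_self_nonneg C
    have h4 : (C * C * Real.exp (-x)) * (x * Real.exp (-x)) ≤ (C * C * Real.exp (-x)) * 1 :=
      mul_le_mul_of_nonneg_left h2 (mul_nonneg hCC (Real.exp_pos _).le)
    nlinarith [mul_le_mul_of_nonneg_left h1 hx]
  have hsu00t0 : Tendsto (fun t : ℝ => t * u00 t) atTop (nhds 0) :=
    FAeq_tendsto_zero hsu00b
  have hR3d : ∀ s, HasDerivAt (fun t => u00 t ^ 3 / 3 - u00 t * q t ^ 2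
      - 2 / 3 * (q t * deriv q t) - 1 / 3 * (t * u00 t)) (-(q1 s ^ 2)) s := by
    intro s
    have h := ((((hu00d s).pow 3).div_const 3).sub ((hu00d s).mul ((hqd s).pow 2))).sub
        (((hqd s).mul (hq'd s)).const_mul (2/3 : ℝ)) |>.sub
        (((hasDerivAt_id' (x := s)).mul (hu00d s)).const_mul (1/3 : ℝ))
    refine h.congr_deriv ?_
    rw [hq1 s, hc1s s]
    push_cast [Pi.add_apply, Pi.sub_apply, Pi.mul_apply, Pi.pow_apply, Pi.neg_apply, Pi.div_apply]
    ring
  have hR3t0 : Tendsto (fun t => u00 t ^ 3 / 3 - u00 t * q t ^ 2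
      - 2 / 3 * (q t * deriv q t) - 1 / 3 * (t * u00 t)) atTop (nhds 0) := by
    have := ((((hu00t0.pow 3).div_const (3:ℝ)).sub (hu00t0.mul (hqt0.pow 2))).sub
        ((hqt0.mul hq't0).const_mul (2/3 : ℝ))).sub (hsu00t0.const_mul (1/3 : ℝ))
    simpa using this
  have c3 : u11 = fun t => u00 t ^ 3 / 3 - u00 t * q t ^ 2
      - 2 / 3 * (q t * deriv q t) - 1 / 3 * (t * u00 t) :=
    FAeq_eq_of_deriv hu11d hR3d hu11t0 hR3t0
  -- conclusion
  intro s
  simp only [i1, i2, i4, c2, c3]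
  rw [hc1s s]
  ring
end
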